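/- arXiv:1402.1208 — 6 statements merged into one kernel-verified Lean document; each statement's English description precedes it below -/
import Mathlib

section
/- For every integer n ≥ 2 there exists a constant C > 0, depending only on n, such that for every vector a = (a_1, …, a_n) ∈ ℤ^n there exists a vector h = (h_1, …, h_n) ∈ ℤ^n with 𝔥(h) ≤ C·(1 + (log 𝔥(a))²) (interpreting the bound as C when 𝔥(a) ≤ 1) and gcd(a_i + h_i, a_j + h_j) = 1 for all 1 ≤ i < j ≤ n. Equivalently, L(a) ≪ log² 𝔥(a). -/
set_option maxHeartbeats 1000000

open Finset


lemma count_dvd_le (T p : ℕ) (hp : p.Prime) (m c : ℤ) (hpm : ¬ (p:ℤ) ∣ m) :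
    ((Finset.range T).filter (fun t : ℕ => (p:ℤ) ∣ c + m * t)).card ≤ T / p + 1 := by
  classical
  have hinj : Set.InjOn (fun t : ℕ => t / p)
      ((Finset.range T).filter (fun t : ℕ => (p:ℤ) ∣ c + m * t)) := by
    intro t₁ h₁ t₂ h₂ hdiv
    simp only [coe_filter, Set.mem_setOf_eq, Finset.mem_range] at h₁ h₂
    have hd : (p:ℤ) ∣ m * ((t₁:ℤ) - t₂) := by
      have := dvd_sub h₁.2 h₂.2
      have e : (c + m * t₁) - (c + m * t₂) = m * ((t₁:ℤ) - t₂) := by ring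
      rwa [e] at this
    have hpz : Prime (p:ℤ) := Nat.prime_iff_prime_int.mp hp
    have hdt : (p:ℤ) ∣ (t₁:ℤ) - t₂ := (hpz.dvd_mul.mp hd).resolve_left hpm
    have hmod : t₁ % p = t₂ % p := by
      have h2 : (t₂:ℤ) % p = (t₁:ℤ) % p := Int.modEq_iff_dvd.mpr hdt
      have h3 : ((t₁ % p : ℕ) : ℤ) = ((t₂ % p : ℕ) : ℤ) := by push_cast; omega
      exact_mod_cast h3
    have hdiv' : t₁ / p = t₂ / p := by simpa using hdiv
    calc t₁ = p * (t₁ / p) + t₁ % p := (Nat.div_add_mod t₁ p).symm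
      _ = p * (t₂ / p) + t₂ % p := by rw [hdiv', hmod]
      _ = t₂ := Nat.div_add_mod t₂ p
  have hsub : ∀ t ∈ (Finset.range T).filter (fun t : ℕ => (p:ℤ) ∣ c + m * t),
      t / p ∈ Finset.range (T / p + 1) := by
    intro t ht
    simp only [Finset.mem_filter, Finset.mem_range] at ht
    exact Finset.mem_range.mpr (Nat.lt_succ_of_le (Nat.div_le_div_right ht.1.le))
  calc _ ≤ (Finset.range (T / p + 1)).card := Finset.card_le_card_of_injOn _ hsub hinj
    _ = T / p + 1 := Finset.card_range _


lemma sum_inv_sq_tail' (y : ℕ) (hy : 1 ≤ y) (B : ℕ) :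
    ∑ k ∈ Finset.Icc (y+1) B, (1:ℝ)/(k:ℝ)^2 ≤ 1/y - 1/(max y B) := by
  induction B with
  | zero => simp [Finset.Icc_eq_empty (by omega : ¬ y + 1 ≤ 0), Nat.max_eq_left (Nat.zero_le y)]
  | succ B ih =>
    by_cases hB : y + 1 ≤ B + 1
    · have hyB : y ≤ B := by omega
      rw [Finset.sum_Icc_succ_top hB, Nat.max_eq_right (by omega : y ≤ B + 1)]
      have hmax : max y B = B := Nat.max_eq_right hyB
      rw [hmax] at ih
      have hBpos : (1:ℝ) ≤ (B:ℝ) := by exact_mod_cast le_trans hy hyB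
      have key : (1:ℝ)/((B:ℝ)+1)^2 ≤ 1/B - 1/(B+1) := by
        rw [div_sub_div _ _ (by positivity) (by positivity)]
        rw [div_le_div_iff₀ (by positivity) (by positivity)]
        ring_nf
        nlinarith
      push_cast
      linarith
    · rw [Finset.Icc_eq_empty (by omega), Nat.max_eq_left (by omega : B + 1 ≤ y)]
      simp

lemma sum_inv_sq_tail (y : ℕ) (hy : 1 ≤ y) (B : ℕ) :
    ∑ k ∈ Finset.Icc (y+1) B, (1:ℝ)/(k:ℝ)^2 ≤ 1/y := by
  refine (sum_inv_sq_tail' y hy B).trans ?_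
  have : (0:ℝ) < max y B := by
    have : 1 ≤ max y B := le_trans hy (le_max_left _ _)
    exact_mod_cast Nat.lt_of_lt_of_le Nat.zero_lt_one this
  have h1 : (0:ℝ) ≤ 1/(max y B : ℕ) := by positivity
  linarith

lemma card_primeFactors_le_log (b : ℕ) (hb : b ≠ 0) : 2 ^ b.primeFactors.card ≤ b := by
  calc 2 ^ b.primeFactors.card ≤ ∏ p ∈ b.primeFactors, p :=
        Finset.pow_card_le_prod _ _ _ (fun p hp => (Nat.prime_of_mem_primeFactors hp).two_le)
    _ ≤ b := Nat.le_of_dvd (Nat.pos_of_ne_zero hb) (Nat.prod_primeFactors_dvd b)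

lemma card_primeFactors_real (b B : ℕ) (hb : b ≠ 0) (hbB : b ≤ B) :
    (b.primeFactors.card : ℝ) ≤ 2 * Real.log B := by
  have h1 : (2:ℝ) ^ b.primeFactors.card ≤ (B:ℝ) := by
    exact_mod_cast le_trans (card_primeFactors_le_log b hb) hbB
  have hB0 : (0:ℝ) < B := by
    have : 1 ≤ B := le_trans (Nat.pos_of_ne_zero hb) hbB
    exact_mod_cast Nat.lt_of_lt_of_le Nat.zero_lt_one this
  have h2 : (b.primeFactors.card : ℝ) * Real.log 2 ≤ Real.log B := by
    rw [← Real.log_pow]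
    exact Real.log_le_log (by positivity) h1
  nlinarith [Real.log_two_gt_d9, Real.log_nonneg (by norm_num : (1:ℝ) ≤ 2)]


noncomputable def Sw (y : ℕ) (b : ℤ) : ℝ :=
  ∑ p ∈ b.natAbs.primeFactors.filter (fun p => y < p), (1:ℝ)/p

lemma Sw_nonneg (y : ℕ) (b : ℤ) : 0 ≤ Sw y b :=
  Finset.sum_nonneg (fun p _ => by positivity)

lemma Sw_eq_sum (y B : ℕ) (b : ℤ) (hb : b ≠ 0) (hbB : b.natAbs ≤ B) :
    Sw y b = ∑ p ∈ (Finset.Icc (y+1) B).filter Nat.Prime,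
      (if (p:ℤ) ∣ b then (1:ℝ)/p else 0) := by
  rw [← Finset.sum_filter]
  apply Finset.sum_congr _ (fun _ _ => rfl)
  ext p
  simp only [Finset.mem_filter, Nat.mem_primeFactors, Finset.mem_Icc, Int.natAbs_ne_zero]
  constructor
  · rintro ⟨⟨hp, hpd, _⟩, hyp⟩
    have hple : p ≤ B :=
      le_trans (Nat.le_of_dvd (Nat.pos_of_ne_zero (Int.natAbs_ne_zero.mpr hb)) hpd) hbB
    exact ⟨⟨⟨by omega, hple⟩, hp⟩, Int.natCast_dvd.mpr hpd⟩
  · rintro ⟨⟨⟨h1, _⟩, hp⟩, hpd⟩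
    exact ⟨⟨hp, Int.natCast_dvd.mp hpd, hb⟩, by omega⟩

lemma prime_sum_le (y B : ℕ) (hy : 1 ≤ y) :
    ∑ p ∈ (Finset.Icc (y+1) B).filter Nat.Prime, (1:ℝ)/p ≤ 1 + Real.log B := by
  have h1 : ∑ p ∈ (Finset.Icc (y+1) B).filter Nat.Prime, (1:ℝ)/p
      ≤ ∑ k ∈ Finset.Icc 1 B, (1:ℝ)/k := by
    apply Finset.sum_le_sum_of_subset_of_nonneg
    · intro p hp
      simp only [Finset.mem_filter, Finset.mem_Icc] at hp ⊢
      omega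
    · intro p _ _; positivity
  refine h1.trans ?_
  have h2 : ∑ k ∈ Finset.Icc 1 B, (1:ℝ)/k = ((harmonic B : ℚ) : ℝ) := by
    rw [harmonic_eq_sum_Icc]
    push_cast
    simp [one_div]
  rw [h2]
  exact harmonic_le_one_add_log B


lemma sum_Sw_le (y T B : ℕ) (m c : ℤ) (hy : 1 ≤ y)
    (hmB : ∀ s : ℕ, s < T → (c + m*s).natAbs ≤ B)
    (h0 : ∀ s : ℕ, s < T → c + m*s ≠ 0)
    (hnd : ∀ p : ℕ, p.Prime → y < p → ¬ (p:ℤ) ∣ m) :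
    ∑ s ∈ Finset.range T, Sw y (c + m*s) ≤ (T:ℝ)/y + (1 + Real.log B) := by
  set U := (Finset.Icc (y+1) B).filter Nat.Prime with hU
  have step1 : ∑ s ∈ Finset.range T, Sw y (c + m*s)
      = ∑ p ∈ U, (((Finset.range T).filter (fun s : ℕ => (p:ℤ) ∣ c + m*s)).card : ℝ) * (1/p) := by
    have : ∀ s ∈ Finset.range T, Sw y (c + m*s)
        = ∑ p ∈ U, (if (p:ℤ) ∣ c + m*s then (1:ℝ)/p else 0) := by
      intro s hs
      rw [Finset.mem_range] at hs
      exact Sw_eq_sum y B _ (h0 s hs) (hmB s hs)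
    rw [Finset.sum_congr rfl this, Finset.sum_comm]
    apply Finset.sum_congr rfl
    intro p _
    rw [← Finset.sum_filter, Finset.sum_const, nsmul_eq_mul]
  rw [step1]
  have step2 : ∀ p ∈ U,
      (((Finset.range T).filter (fun s : ℕ => (p:ℤ) ∣ c + m*s)).card : ℝ) * (1/p)
      ≤ (T:ℝ) * (1/(p:ℝ)^2) + 1/p := by
    intro p hp
    simp only [hU, Finset.mem_filter, Finset.mem_Icc] at hp
    obtain ⟨⟨hp1, hp2⟩, hprime⟩ := hp
    have hcard := count_dvd_le T p hprime m c (hnd p hprime (by omega))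
    have hp0 : (0:ℝ) < p := by exact_mod_cast hprime.pos
    have h1 : (((Finset.range T).filter (fun s : ℕ => (p:ℤ) ∣ c + m*s)).card : ℝ)
        ≤ (T:ℝ)/p + 1 := by
      calc (((Finset.range T).filter (fun s : ℕ => (p:ℤ) ∣ c + m*s)).card : ℝ)
          ≤ ((T/p + 1 : ℕ) : ℝ) := by exact_mod_cast hcard
        _ ≤ (T:ℝ)/p + 1 := by
            push_cast
            have := Nat.cast_div_le (α := ℝ) (m := T) (n := p)
            linarith
    calc _ ≤ ((T:ℝ)/p + 1) * (1/p) := by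
          apply mul_le_mul_of_nonneg_right h1 (by positivity)
      _ = (T:ℝ) * (1/(p:ℝ)^2) + 1/p := by field_simp
  calc ∑ p ∈ U, (((Finset.range T).filter (fun s : ℕ => (p:ℤ) ∣ c + m*s)).card : ℝ) * (1/p)
      ≤ ∑ p ∈ U, ((T:ℝ) * (1/(p:ℝ)^2) + 1/p) := Finset.sum_le_sum step2
    _ = (T:ℝ) * ∑ p ∈ U, 1/(p:ℝ)^2 + ∑ p ∈ U, (1:ℝ)/p := by
        rw [Finset.sum_add_distrib, Finset.mul_sum]
    _ ≤ (T:ℝ) * (1/(y:ℝ)) + (1 + Real.log B) := by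
        have hsq : ∑ p ∈ U, 1/(p:ℝ)^2 ≤ 1/(y:ℝ) := by
          refine le_trans ?_ (sum_inv_sq_tail y hy B)
          apply Finset.sum_le_sum_of_subset_of_nonneg (Finset.filter_subset _ _)
          intro p _ _; positivity
        have h2 := prime_sum_le y B hy
        have hT0 : (0:ℝ) ≤ T := Nat.cast_nonneg T
        have h3 := mul_le_mul_of_nonneg_left hsq hT0
        rw [hU]
        linarith
    _ = (T:ℝ)/y + (1 + Real.log B) := by ring



open scoped Classical in
lemma greedy (n T B : ℕ) (m : ℤ) (c : Fin n → ℤ) (hn : 2 ≤ n)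
    (hm2 : 2 ≤ m)
    (hmsmall : ∀ p : ℕ, p.Prime → p ≤ 32*n → (p:ℤ) ∣ m)
    (hmbig : ∀ p : ℕ, p.Prime → 32*n < p → ¬ (p:ℤ) ∣ m)
    (hc : ∀ i, (m:ℤ) ∣ (c i - 1))
    (hB : ∀ (i : Fin n) (s : ℕ), s < T → (c i + m*s).natAbs ≤ B)
    (hT : 10*(n:ℝ)*(1 + Real.log B) ≤ T) (hT0 : 0 < T) :
    ∃ t : Fin n → ℕ, (∀ i, t i < T) ∧
      ∀ i j : Fin n, i < j → Int.gcd (c i + m * t i) (c j + m * t j) = 1 := by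
  set y := 32*n with hy
  have hy1 : 1 ≤ y := by omega
  -- basic facts
  have hne : ∀ (i : Fin n) (s : ℕ), c i + m * s ≠ 0 := by
    intro i s hzero
    have h1 : m ∣ (c i + m * s) - 1 := by
      have := hc i
      have : m ∣ (c i - 1) + m * s := Dvd.dvd.add this ⟨s, rfl⟩
      convert this using 1; ring
    rw [hzero] at h1
    have h2 : m ∣ (-1:ℤ) := by simpa using h1
    have h3 : m ∣ (1:ℤ) := (dvd_neg (α := ℤ)).mp h2
    have := Int.le_of_dvd one_pos h3
    omega
  have hB1 : 1 ≤ B := by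
    have h := hB ⟨0, by omega⟩ 0 hT0
    have h2 := hne ⟨0, by omega⟩ 0
    have : (c ⟨0, by omega⟩ + m * (0:ℕ)).natAbs ≠ 0 := Int.natAbs_ne_zero.mpr h2
    omega
  have hlogB : 0 ≤ Real.log B := Real.log_nonneg (by exact_mod_cast hB1)
  have hn0 : (0:ℝ) < n := by positivity
  have hnR : (2:ℝ) ≤ n := by exact_mod_cast hn
  -- no small prime divides any shifted value
  have hsmall : ∀ (i : Fin n) (s : ℕ) (p : ℕ), p.Prime → (p:ℤ) ∣ (c i + m * s) → y < p := by
    intro i s p hp hpd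
    by_contra hle
    push_neg at hle
    have hpm : (p:ℤ) ∣ m := hmsmall p hp (by omega)
    have h1 : m ∣ (c i + m * s) - 1 := by
      have := hc i
      have h2 : m ∣ (c i - 1) + m * s := Dvd.dvd.add this ⟨s, rfl⟩
      convert h2 using 1; ring
    have : (p:ℤ) ∣ 1 := by
      have := dvd_sub hpd (hpm.trans h1)
      simpa using this
    have := Int.le_of_dvd one_pos this
    have := hp.two_le
    omega
  -- main induction
  have main : ∀ k : ℕ, k ≤ n → ∃ t : Fin n → ℕ, (∀ i, t i < T) ∧
      (∀ i : Fin n, (i:ℕ) < k → Sw y (c i + m * t i) ≤ 1/(2*n)) ∧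
      (∀ i j : Fin n, (i:ℕ) < (j:ℕ) → (j:ℕ) < k →
        Int.gcd (c i + m * t i) (c j + m * t j) = 1) := by
    intro k
    induction k with
    | zero => exact fun _ => ⟨fun _ => 0, fun _ => hT0, fun i hi => absurd hi (by omega),
        fun i j _ hj => absurd hj (by omega)⟩
    | succ k ih =>
      intro hk1
      obtain ⟨t, htT, htS, htG⟩ := ih (by omega)
      have hkn : k < n := hk1
      set i₀ : Fin n := ⟨k, hkn⟩ with hi₀
      set J : Finset (Fin n) := Finset.univ.filter (fun j : Fin n => (j:ℕ) < k) with hJ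
      -- bad sets
      set Bad2 : Finset ℕ :=
        (Finset.range T).filter (fun s => ¬ (Sw y (c i₀ + m*s) ≤ 1/(2*n))) with hBad2
      set Bad3 : Fin n → Finset ℕ := fun j =>
        (Finset.range T).filter (fun s => Int.gcd (c i₀ + m*s) (c j + m * t j) ≠ 1) with hBad3
      -- bound on Bad2
      have hM : ∑ s ∈ Finset.range T, Sw y (c i₀ + m*s) ≤ (T:ℝ)/y + (1 + Real.log B) :=
        sum_Sw_le y T B m (c i₀) hy1 (fun s hs => hB i₀ s hs) (fun s _ => hne i₀ s) hmbig
      have hcard2 : (Bad2.card : ℝ) ≤ 2*(n:ℝ) * ((T:ℝ)/y + (1 + Real.log B)) := by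
        have h1 : (Bad2.card : ℝ) * (1/(2*(n:ℝ))) ≤ ∑ s ∈ Bad2, Sw y (c i₀ + m*s) := by
          rw [← nsmul_eq_mul]
          apply Finset.card_nsmul_le_sum
          intro s hs
          rw [hBad2, Finset.mem_filter] at hs
          exact le_of_lt (not_le.mp hs.2)
        have h2 : ∑ s ∈ Bad2, Sw y (c i₀ + m*s) ≤ ∑ s ∈ Finset.range T, Sw y (c i₀ + m*s) := by
          apply Finset.sum_le_sum_of_subset_of_nonneg (Finset.filter_subset _ _)
          intro s _ _; exact Sw_nonneg y _
        have h3 := (h1.trans h2).trans hM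
        have h4 : (0:ℝ) < 1/(2*(n:ℝ)) := by positivity
        calc (Bad2.card : ℝ) = (Bad2.card : ℝ) * (1/(2*(n:ℝ))) * (2*(n:ℝ)) := by
              field_simp
          _ ≤ ((T:ℝ)/y + (1 + Real.log B)) * (2*(n:ℝ)) := by
              apply mul_le_mul_of_nonneg_right h3 (by positivity)
          _ = 2*(n:ℝ) * ((T:ℝ)/y + (1 + Real.log B)) := by ring
      -- bound on each Bad3 j
      have hcard3 : ∀ j ∈ J, ((Bad3 j).card : ℝ) ≤ (T:ℝ)/(2*(n:ℝ)) + 2 * Real.log B := by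
        intro j hj
        rw [hJ, Finset.mem_filter] at hj
        have hjk : (j:ℕ) < k := hj.2
        set b := c j + m * t j with hb
        have hbne : b ≠ 0 := hne j (t j)
        have hbB : b.natAbs ≤ B := hB j (t j) (htT j)
        set PF := b.natAbs.primeFactors.filter (fun p => y < p) with hPF
        -- Bad3 j is covered by divisibility sets
        have hsub : Bad3 j ⊆ PF.biUnion (fun q => (Finset.range T).filter
            (fun s : ℕ => (q:ℤ) ∣ c i₀ + m*s)) := by
          intro s hs
          rw [hBad3, Finset.mem_filter] at hs
          obtain ⟨hsT, hgcd⟩ := hs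
          have hgcd0 : Int.gcd (c i₀ + m*s) b ≠ 0 :=
            fun hgz => hbne (Int.gcd_eq_zero_iff.mp hgz).2
          obtain ⟨q, hq, hqd⟩ := Nat.exists_prime_and_dvd hgcd
          have hq1 : (q:ℤ) ∣ c i₀ + m*s :=
            dvd_trans (Int.natCast_dvd_natCast.mpr hqd) (Int.gcd_dvd_left _ _)
          have hq2 : (q:ℤ) ∣ b :=
            dvd_trans (Int.natCast_dvd_natCast.mpr hqd) (Int.gcd_dvd_right _ _)
          have hqy : y < q := hsmall i₀ s q hq hq1
          rw [Finset.mem_biUnion]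
          refine ⟨q, ?_, ?_⟩
          · rw [hPF, Finset.mem_filter, Nat.mem_primeFactors]
            exact ⟨⟨hq, Int.natCast_dvd.mp hq2, Int.natAbs_ne_zero.mpr hbne⟩, hqy⟩
          · rw [Finset.mem_filter]; exact ⟨hsT, hq1⟩
        have hcount : ((Bad3 j).card : ℝ) ≤ ∑ q ∈ PF, ((T:ℝ)/q + 1) := by
          calc ((Bad3 j).card : ℝ)
              ≤ ((PF.biUnion (fun q => (Finset.range T).filter
                  (fun s : ℕ => (q:ℤ) ∣ c i₀ + m*s))).card : ℝ) := by
                exact_mod_cast Finset.card_le_card hsub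
            _ ≤ ((∑ q ∈ PF, ((Finset.range T).filter
                  (fun s : ℕ => (q:ℤ) ∣ c i₀ + m*s)).card : ℕ) : ℝ) := by
                exact_mod_cast Finset.card_biUnion_le
            _ ≤ ∑ q ∈ PF, ((T:ℝ)/q + 1) := by
                push_cast
                apply Finset.sum_le_sum
                intro q hq
                rw [hPF, Finset.mem_filter, Nat.mem_primeFactors] at hq
                obtain ⟨⟨hqp, -, -⟩, hqy⟩ := hq
                have h1 := count_dvd_le T q hqp m (c i₀) (hmbig q hqp hqy)
                calc (((Finset.range T).filter (fun s : ℕ => (q:ℤ) ∣ c i₀ + m*s)).card : ℝ)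
                    ≤ ((T/q + 1 : ℕ) : ℝ) := by exact_mod_cast h1
                  _ ≤ (T:ℝ)/q + 1 := by
                      push_cast
                      have := Nat.cast_div_le (α := ℝ) (m := T) (n := q)
                      linarith
        have heq : ∑ q ∈ PF, ((T:ℝ)/q + 1) = (T:ℝ) * Sw y b + PF.card := by
          rw [Finset.sum_add_distrib, Finset.sum_const, nsmul_eq_mul, mul_one]
          congr 1
          rw [Sw, ← hPF, Finset.mul_sum]
          apply Finset.sum_congr rfl
          intro q _; field_simp
        have hSb : Sw y b ≤ 1/(2*(n:ℝ)) := htS j hjk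
        have hPFcard : (PF.card : ℝ) ≤ 2 * Real.log B := by
          refine le_trans ?_ (card_primeFactors_real b.natAbs B (Int.natAbs_ne_zero.mpr hbne) hbB)
          exact_mod_cast Finset.card_le_card (Finset.filter_subset _ _)
        calc ((Bad3 j).card : ℝ) ≤ (T:ℝ) * Sw y b + PF.card := by rw [← heq]; exact hcount
          _ ≤ (T:ℝ) * (1/(2*(n:ℝ))) + 2 * Real.log B := by
              have hT0' : (0:ℝ) ≤ T := Nat.cast_nonneg T
              have := mul_le_mul_of_nonneg_left hSb hT0'
              linarith
          _ = (T:ℝ)/(2*(n:ℝ)) + 2 * Real.log B := by ring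
      -- total bad count
      set Bad : Finset ℕ := Bad2 ∪ J.biUnion Bad3 with hBad
      have hJcard : (J.card : ℝ) ≤ (n:ℝ) - 1 := by
        have h1 : J ⊆ Finset.univ.erase i₀ := by
          intro j hj
          rw [hJ, Finset.mem_filter] at hj
          refine Finset.mem_erase.mpr ⟨?_, Finset.mem_univ j⟩
          intro hji
          rw [hji] at hj
          simp [hi₀] at hj
        have h2 := Finset.card_le_card h1
        rw [Finset.card_erase_of_mem (Finset.mem_univ i₀), Finset.card_univ, Fintype.card_fin] at h2
        have : J.card ≤ n - 1 := h2
        have hcast : ((n - 1 : ℕ) : ℝ) = (n:ℝ) - 1 := by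
          have : 1 ≤ n := by omega
          push_cast [this]; ring
        calc (J.card : ℝ) ≤ ((n-1:ℕ):ℝ) := by exact_mod_cast this
          _ = (n:ℝ) - 1 := hcast
      have hBadcard : (Bad.card : ℝ) < T := by
        have h1 : (Bad.card : ℝ) ≤ (Bad2.card : ℝ) + ∑ j ∈ J, ((Bad3 j).card : ℝ) := by
          calc (Bad.card : ℝ) ≤ ((Bad2.card + (J.biUnion Bad3).card : ℕ) : ℝ) := by
                exact_mod_cast Finset.card_union_le _ _
            _ ≤ (Bad2.card : ℝ) + ∑ j ∈ J, ((Bad3 j).card : ℝ) := by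
                push_cast
                have := Finset.card_biUnion_le (s := J) (t := Bad3)
                have h2 : ((J.biUnion Bad3).card : ℝ) ≤ ((∑ j ∈ J, (Bad3 j).card : ℕ) : ℝ) := by
                  exact_mod_cast this
                push_cast at h2
                linarith
        have h2 : ∑ j ∈ J, ((Bad3 j).card : ℝ) ≤ ((n:ℝ) - 1) * ((T:ℝ)/(2*(n:ℝ)) + 2 * Real.log B) := by
          calc ∑ j ∈ J, ((Bad3 j).card : ℝ) ≤ ∑ _j ∈ J, ((T:ℝ)/(2*(n:ℝ)) + 2 * Real.log B) :=
                Finset.sum_le_sum hcard3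
            _ = (J.card : ℝ) * ((T:ℝ)/(2*(n:ℝ)) + 2 * Real.log B) := by
                rw [Finset.sum_const, nsmul_eq_mul]
            _ ≤ ((n:ℝ) - 1) * ((T:ℝ)/(2*(n:ℝ)) + 2 * Real.log B) := by
                apply mul_le_mul_of_nonneg_right hJcard
                positivity
        -- arithmetic
        have hTpos : (0:ℝ) < T := by exact_mod_cast hT0
        have hnne0 : (n:ℝ) ≠ 0 := ne_of_gt hn0
        have hyT : 2*(n:ℝ) * ((T:ℝ)/y + (1 + Real.log B)) = (T:ℝ)/16 + 2*(n:ℝ)*(1 + Real.log B) := by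
          rw [hy]
          push_cast
          field_simp
          ring
        have hnne : (n:ℝ) ≠ 0 := ne_of_gt hn0
        have hhalf : ((n:ℝ) - 1) * ((T:ℝ)/(2*(n:ℝ))) ≤ (T:ℝ)/2 := by
          have e1 : ((n:ℝ)-1) * ((T:ℝ)/(2*(n:ℝ))) = (T:ℝ)/2 - (T:ℝ)/(2*(n:ℝ)) := by
            field_simp
          have e2 : 0 ≤ (T:ℝ)/(2*(n:ℝ)) := by positivity
          linarith
        have hstep : ((n:ℝ) - 1) * ((T:ℝ)/(2*(n:ℝ)) + 2 * Real.log B)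
            ≤ (T:ℝ)/2 + 2*(n:ℝ)* Real.log B := by
          have : ((n:ℝ) - 1) * (2 * Real.log B) ≤ (n:ℝ) * (2 * Real.log B) := by nlinarith
          nlinarith
        have hbudget : 4*(n:ℝ)*(1 + Real.log B) ≤ (2/5) * T := by nlinarith
        calc (Bad.card : ℝ) ≤ (Bad2.card : ℝ) + ∑ j ∈ J, ((Bad3 j).card : ℝ) := h1
          _ ≤ (T:ℝ)/16 + 2*(n:ℝ)*(1 + Real.log B) + ((T:ℝ)/2 + 2*(n:ℝ)* Real.log B) := by
              rw [hyT] at hcard2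
              linarith
          _ ≤ (T:ℝ)/16 + (T:ℝ)/2 + 4*(n:ℝ)*(1 + Real.log B) := by nlinarith
          _ ≤ (T:ℝ)/16 + (T:ℝ)/2 + (2/5)*T := by linarith
          _ < T := by linarith
      -- choose a good s
      have hexists : ∃ s ∈ Finset.range T, s ∉ Bad := by
        by_contra hcon
        push_neg at hcon
        have : Finset.range T ⊆ Bad := fun s hs => hcon s hs
        have := Finset.card_le_card this
        rw [Finset.card_range] at this
        have : (T:ℝ) ≤ (Bad.card : ℝ) := by exact_mod_cast this
        linarith
      obtain ⟨s, hsT, hsBad⟩ := hexists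
      rw [Finset.mem_range] at hsT
      have hs2 : s ∉ Bad2 := fun h => hsBad (Finset.mem_union_left _ h)
      have hs3 : ∀ j ∈ J, s ∉ Bad3 j := by
        intro j hj h
        exact hsBad (Finset.mem_union_right _ (Finset.mem_biUnion.mpr ⟨j, hj, h⟩))
      -- properties of the chosen s
      have hsS : Sw y (c i₀ + m*s) ≤ 1/(2*(n:ℝ)) := by
        by_contra h
        exact hs2 (Finset.mem_filter.mpr ⟨Finset.mem_range.mpr hsT, h⟩)
      have hsG : ∀ j : Fin n, (j:ℕ) < k → Int.gcd (c i₀ + m*s) (c j + m * t j) = 1 := by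
        intro j hj
        by_contra h
        exact hs3 j (Finset.mem_filter.mpr ⟨Finset.mem_univ j, hj⟩)
          (Finset.mem_filter.mpr ⟨Finset.mem_range.mpr hsT, h⟩)
      -- build the new function
      refine ⟨Function.update t i₀ s, ?_, ?_, ?_⟩
      · intro i
        by_cases hi : i = i₀
        · rw [hi, Function.update_self]; exact hsT
        · rw [Function.update_of_ne hi]; exact htT i
      · intro i hi
        by_cases hieq : i = i₀
        · rw [hieq, Function.update_self]; exact hsS
        · have hik : (i:ℕ) < k := by
            have : (i:ℕ) ≠ k := fun h => hieq (Fin.ext h)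
            omega
          rw [Function.update_of_ne hieq]
          exact htS i hik
      · intro i j hij hjk1
        have hine : i ≠ i₀ ∨ (j:ℕ) < k ∨ True := by tauto
        by_cases hjeq : j = i₀
        · have hik : (i:ℕ) < k := by rw [hjeq] at hij; exact hij
          have hine' : i ≠ i₀ := by
            intro h; rw [h, hjeq] at hij; exact lt_irrefl _ hij
          rw [Function.update_of_ne hine', hjeq, Function.update_self, Int.gcd_comm]
          exact hsG i hik
        · have hjk : (j:ℕ) < k := by
            have : (j:ℕ) ≠ k := fun h => hjeq (Fin.ext h)
            omega
          have hine' : i ≠ i₀ := by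
            intro h
            have : (i:ℕ) = k := by rw [h]
            omega
          rw [Function.update_of_ne hine', Function.update_of_ne hjeq]
          exact htG i j hij hjk
  obtain ⟨t, h1, _, h3⟩ := main n le_rfl
  exact ⟨t, h1, fun i j hij => h3 i j hij j.isLt⟩



/-- The height of an integer vector: `𝔥(x) = max |x_i|`. -/
def vecHeight {n : ℕ} (x : Fin n → ℤ) : ℕ :=
  Finset.univ.sup fun i => (x i).natAbs



lemma arith_final (N Mr E L2 : ℝ) (hN : 2 ≤ N) (hMr : 2 ≤ Mr) (hE1 : 1 ≤ E)
    (hL : L2 ≤ 2*E) (hL0 : 0 ≤ L2) :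
    Mr * ((900*N^2*Mr) + (60*N*L2 + 1)) ≤ 10000*N^2*Mr^2*E := by
  have hN0 : (0:ℝ) < N := by linarith
  have hM0 : (0:ℝ) < Mr := by linarith
  have hE0 : (0:ℝ) ≤ E := by linarith
  have s1 : 60*N*Mr*L2 ≤ 120*N*Mr*E := by
    have h60 : (0:ℝ) ≤ 60*N*Mr := by positivity
    have := mul_le_mul_of_nonneg_left hL h60
    nlinarith
  have s2 : 900*N^2*Mr^2 ≤ 900*N^2*Mr^2*E := le_mul_of_one_le_right (by positivity) hE1
  have s3 : Mr ≤ Mr*E := le_mul_of_one_le_right (by positivity) hE1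
  have p1 : (4:ℝ) ≤ N*Mr := by nlinarith
  have p2 : 120*N*Mr ≤ 30*(N*Mr)^2 := by
    nlinarith [mul_nonneg (by linarith : (0:ℝ) ≤ N*Mr) (by linarith : (0:ℝ) ≤ N*Mr - 4)]
  have p3 : Mr ≤ (N*Mr)^2 := by
    nlinarith [mul_nonneg (by linarith : (0:ℝ) ≤ N*Mr) (by linarith : (0:ℝ) ≤ N*Mr - 4),
      mul_nonneg hM0.le (by linarith : (0:ℝ) ≤ N - 1)]
  have scoef : 900*N^2*Mr^2 + 120*N*Mr + Mr ≤ 10000*N^2*Mr^2 := by nlinarith [p2, p3]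
  have sc : (900*N^2*Mr^2 + 120*N*Mr + Mr)*E ≤ (10000*N^2*Mr^2)*E :=
    mul_le_mul_of_nonneg_right scoef hE0
  calc Mr * ((900*N^2*Mr) + (60*N*L2 + 1))
      = 900*N^2*Mr^2 + 60*N*Mr*L2 + Mr := by ring
    _ ≤ 900*N^2*Mr^2*E + 120*N*Mr*E + Mr*E := by linarith
    _ = (900*N^2*Mr^2 + 120*N*Mr + Mr)*E := by ring
    _ ≤ (10000*N^2*Mr^2)*E := sc
    _ = 10000*N^2*Mr^2*E := by ring

/-- Theorem 2 of the paper: for every `n ≥ 2` there is `C > 0` depending only on `n`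
such that every `a ∈ ℤⁿ` admits a shift `h ∈ ℤⁿ` with
`𝔥(h) ≤ C·(1 + (log 𝔥(a))²)` making the shifted entries pairwise coprime;
i.e. `L(a) ≪ log² 𝔥(a)`. -/
theorem pairwise_coprime_shift (n : ℕ) (hn : 2 ≤ n) :
    ∃ C : ℝ, 0 < C ∧
      ∀ a : Fin n → ℤ, ∃ h : Fin n → ℤ,
        (vecHeight h : ℝ) ≤ C * (1 + (Real.log (vecHeight a)) ^ 2) ∧
        ∀ i j : Fin n, i < j → Int.gcd (a i + h i) (a j + h j) = 1 := by

  -- the primorial modulus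
  set M : ℕ := ∏ p ∈ Nat.primesBelow (32*n+1), p with hM
  have hM0 : 0 < M := Finset.prod_pos (fun p hp => (Nat.prime_of_mem_primesBelow hp).pos)
  have h2mem : 2 ∈ Nat.primesBelow (32*n+1) :=
    Nat.mem_primesBelow.mpr ⟨by omega, Nat.prime_two⟩
  have hM2 : 2 ≤ M := Nat.le_of_dvd hM0 (Finset.dvd_prod_of_mem _ h2mem)
  have hmsmall : ∀ p : ℕ, p.Prime → p ≤ 32*n → (p:ℤ) ∣ (M:ℤ) := by
    intro p hp hple
    have : p ∣ M := Finset.dvd_prod_of_mem _ (Nat.mem_primesBelow.mpr ⟨by omega, hp⟩)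
    exact_mod_cast Int.natCast_dvd_natCast.mpr this
  have hmbig : ∀ p : ℕ, p.Prime → 32*n < p → ¬ (p:ℤ) ∣ (M:ℤ) := by
    intro p hp hgt hd
    have hd' : p ∣ M := Int.natCast_dvd_natCast.mp hd
    rw [hM, Prime.dvd_finset_prod_iff hp.prime] at hd'
    obtain ⟨q, hq, hpq⟩ := hd'
    have hqlt := Nat.lt_of_mem_primesBelow hq
    have hqp := Nat.prime_of_mem_primesBelow hq
    have : p = q := (Nat.prime_dvd_prime_iff_eq hp hqp).mp hpq
    omega
  -- the constant
  refine ⟨10000 * (n:ℝ)^2 * (M:ℝ)^2, by positivity, ?_⟩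
  intro a
  set H : ℕ := vecHeight a with hH
  -- parameters
  set T : ℕ := 900*n^2*M + ⌈(60*(n:ℝ)*Real.log ((H:ℝ)+2))⌉₊ with hT
  have hT1 : 900*n^2*M ≤ T := Nat.le_add_right _ _
  have hT0 : 0 < T := by
    have : 0 < 900*n^2*M := by positivity
    omega
  set B : ℕ := H + 2*M*T with hB
  have hB1 : 1 ≤ B := by
    have h := Nat.mul_pos (Nat.mul_pos (by omega : 0 < 2) hM0) hT0
    omega
  -- residues and shifted centers
  set r : Fin n → ℤ := fun i => (1 - a i) % (M:ℤ) with hr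
  have hr0 : ∀ i, 0 ≤ r i := fun i => Int.emod_nonneg _ (by exact_mod_cast hM0.ne')
  have hrM : ∀ i, r i < M := fun i => Int.emod_lt_of_pos _ (by exact_mod_cast hM0)
  set c : Fin n → ℤ := fun i => a i + r i with hc
  have hcdvd : ∀ i, (M:ℤ) ∣ (c i - 1) := by
    intro i
    refine ⟨-((1 - a i) / M), ?_⟩
    have e := Int.emod_def (1 - a i) (M:ℤ)
    simp only [hc, hr]
    rw [e]; ring
  have haH : ∀ i, (a i).natAbs ≤ H := fun i => Finset.le_sup (f := fun i => (a i).natAbs) (Finset.mem_univ i)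
  have hBbound : ∀ (i : Fin n) (s : ℕ), s < T → (c i + (M:ℤ)*s).natAbs ≤ B := by
    intro i s hs
    have ha : ((a i).natAbs : ℤ) ≤ (H:ℤ) := by exact_mod_cast haH i
    have hMnn : (0:ℤ) ≤ (M:ℤ) := by positivity
    have h1 : (0:ℤ) ≤ (M:ℤ)*s := by positivity
    have hs' : (s:ℤ) + 1 ≤ (T:ℤ) := by exact_mod_cast hs
    have h2 : (M:ℤ)*s + (M:ℤ) ≤ (M:ℤ)*(T:ℤ) := by nlinarith
    have hB' : ((B:ℕ):ℤ) = (H:ℤ) + 2*((M:ℤ)*(T:ℤ)) := by rw [hB]; push_cast; ring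
    have hri0 := hr0 i
    have hriM := hrM i
    have hgoal : (a i + r i + (M:ℤ)*s).natAbs ≤ B := by
      have hMT0 : (0:ℤ) ≤ (M:ℤ)*(T:ℤ) := by positivity
      omega
    simpa [hc, add_assoc] using hgoal
  -- the analytic inequality 10n(1+log B) ≤ T
  have hnR : (2:ℝ) ≤ n := by exact_mod_cast hn
  have hn0 : (0:ℝ) < n := by linarith
  have hMR : (2:ℝ) ≤ M := by exact_mod_cast hM2
  have hTR1 : (900*(n:ℝ)^2*(M:ℝ)) ≤ T := by exact_mod_cast hT1
  have hlogH2 : 0 ≤ Real.log ((H:ℝ)+2) := Real.log_nonneg (by { have : (0:ℝ) ≤ (H:ℝ) := Nat.cast_nonneg H; linarith })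
  have hTR2 : 60*(n:ℝ)*Real.log ((H:ℝ)+2) ≤ T := by
    have := Nat.le_ceil (60*(n:ℝ)*Real.log ((H:ℝ)+2))
    have h2 : (⌈(60*(n:ℝ)*Real.log ((H:ℝ)+2))⌉₊ : ℝ) ≤ T := by
      have : (⌈(60*(n:ℝ)*Real.log ((H:ℝ)+2))⌉₊ : ℕ) ≤ T := by rw [hT]; omega
      exact_mod_cast this
    linarith
  have hTpos : (0:ℝ) < T := by exact_mod_cast hT0
  have hlogB : Real.log B ≤ Real.log ((H:ℝ)+2) + Real.log 2 + Real.log M + Real.log T := by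
    have hBle : (B:ℝ) ≤ ((H:ℝ)+2) * (2 * M * T) := by
      have : (B:ℕ) ≤ (H+2) * (2*M*T) := by
        have h1 : 1 ≤ 2*M*T := by
          have := Nat.mul_pos (Nat.mul_pos (by omega : 0 < 2) hM0) hT0
          omega
        calc B = H + 2*M*T := hB
          _ ≤ (H+2) * (2*M*T) := by nlinarith
      calc (B:ℝ) ≤ (((H+2) * (2*M*T) : ℕ) : ℝ) := by exact_mod_cast this
        _ = ((H:ℝ)+2) * (2 * M * T) := by push_cast; ring
    calc Real.log B ≤ Real.log (((H:ℝ)+2) * (2 * M * T)) := by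
          have hBpos : (0:ℝ) < (B:ℝ) := by exact_mod_cast Nat.lt_of_lt_of_le Nat.zero_lt_one hB1
          exact Real.log_le_log hBpos hBle
      _ = Real.log ((H:ℝ)+2) + (Real.log 2 + Real.log M + Real.log T) := by
          rw [Real.log_mul (by positivity) (by positivity),
              Real.log_mul (by positivity) (by positivity),
              Real.log_mul (by norm_num) (by positivity)]
          try ring
      _ = _ := by ring
  have hlog2 : Real.log 2 ≤ 1 := by
    have := Real.log_le_sub_one_of_pos (by norm_num : (0:ℝ) < 2)
    linarith
  have hlogM : Real.log M ≤ M := by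
    have := Real.log_le_sub_one_of_pos (by positivity : (0:ℝ) < (M:ℝ))
    linarith
  have hlogT : Real.log T ≤ 2 * Real.sqrt T := by
    have hsq : Real.sqrt T ^ 2 = (T:ℝ) := Real.sq_sqrt (le_of_lt hTpos)
    have hs0 : 0 < Real.sqrt T := Real.sqrt_pos.mpr hTpos
    have h1 : Real.log (Real.sqrt T) = Real.log T / 2 :=
      Real.log_sqrt (le_of_lt hTpos)
    have h2 : Real.log (Real.sqrt T) ≤ Real.sqrt T - 1 := Real.log_le_sub_one_of_pos hs0
    linarith
  have hsqrtT : 30*(n:ℝ) ≤ Real.sqrt T := by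
    apply Real.le_sqrt_of_sq_le
    calc (30*(n:ℝ))^2 = 900 * (n:ℝ)^2 := by ring
      _ ≤ 900*(n:ℝ)^2*(M:ℝ) := by nlinarith
      _ ≤ T := hTR1
  have hsqrt_term : 20*(n:ℝ)*Real.sqrt T ≤ (2/3) * T := by
    have hsq : Real.sqrt T ^ 2 = (T:ℝ) := Real.sq_sqrt (le_of_lt hTpos)
    nlinarith [Real.sqrt_nonneg (T:ℝ)]
  have hTsplit : (T:ℝ) = ((900*n^2*M : ℕ) : ℝ) + ((⌈(60*(n:ℝ)*Real.log ((H:ℝ)+2))⌉₊ : ℕ) : ℝ) := by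
    rw [hT]; push_cast; ring
  have hceilR : 60*(n:ℝ)*Real.log ((H:ℝ)+2) ≤ ((⌈(60*(n:ℝ)*Real.log ((H:ℝ)+2))⌉₊ : ℕ) : ℝ) :=
    Nat.le_ceil _
  have hT1R : ((900*n^2*M : ℕ) : ℝ) = 900*(n:ℝ)^2*(M:ℝ) := by push_cast; ring
  have hTineq : 10*(n:ℝ)*(1 + Real.log B) ≤ T := by
    have h1 : 10*(n:ℝ)*(1 + Real.log B)
        ≤ 10*(n:ℝ) + 10*(n:ℝ)*Real.log ((H:ℝ)+2) + 10*(n:ℝ)*1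
          + 10*(n:ℝ)*(M:ℝ) + 10*(n:ℝ)*(2*Real.sqrt T) := by
      nlinarith [hlog2, hlogM, hlogB, hlogT]
    have h2 : 10*(n:ℝ) + 10*(n:ℝ)*1 + 10*(n:ℝ)*(M:ℝ) ≤ 300*(n:ℝ)^2*(M:ℝ) := by
      nlinarith [mul_le_mul hnR hMR (by norm_num : (0:ℝ) ≤ 2) (by linarith : (0:ℝ) ≤ (n:ℝ))]
    have h3 : 10*(n:ℝ)*Real.log ((H:ℝ)+2)
        ≤ ((⌈(60*(n:ℝ)*Real.log ((H:ℝ)+2))⌉₊ : ℕ) : ℝ)/6 := by linarith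
    have h4 : 10*(n:ℝ)*(2*Real.sqrt T) ≤ (2/3)*T := by linarith
    rw [hTsplit] at h4 ⊢
    rw [hT1R] at h4 ⊢
    linarith
  -- apply the greedy lemma
  obtain ⟨t, htT, htG⟩ := greedy n T B (M:ℤ) c hn (by exact_mod_cast hM2)
    hmsmall hmbig hcdvd hBbound hTineq hT0
  refine ⟨fun i => r i + (M:ℤ) * t i, ?_, ?_⟩
  · -- height bound
    have hh : ∀ i : Fin n, ((r i + (M:ℤ) * t i).natAbs) ≤ M*T := by
      intro i
      have h1 : (0:ℤ) ≤ r i + (M:ℤ) * t i := by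
        have := hr0 i
        positivity
      have h2 : r i + (M:ℤ) * t i ≤ (M:ℤ)*T := by
        have h3 : (M:ℤ) * t i ≤ (M:ℤ)*(T-1:ℕ) := by
          apply mul_le_mul_of_nonneg_left _ (by positivity)
          exact_mod_cast Nat.le_sub_one_of_lt (htT i)
        have h4 : ((T-1:ℕ):ℤ) ≤ (T:ℤ) - 1 := by
          have : 1 ≤ T := hT0
          push_cast [this]
          omega
        have h5 : (M:ℤ)*(T-1:ℕ) ≤ (M:ℤ)*((T:ℤ)-1) :=
          mul_le_mul_of_nonneg_left h4 (by positivity)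
        have := hrM i
        nlinarith
      omega
    have hsup : vecHeight (fun i => r i + (M:ℤ) * t i) ≤ M*T := by
      apply Finset.sup_le
      intro i _
      exact hh i
    have hMT : ((M*T : ℕ) : ℝ) ≤ 10000 * (n:ℝ)^2 * (M:ℝ)^2 * (1 + (Real.log H) ^ 2) := by
      -- M*T = M*(900 n² M + T₂) ≤ 900 n² M² + M(60 n log(H+2) + 1)
      have hceil : (⌈(60*(n:ℝ)*Real.log ((H:ℝ)+2))⌉₊ : ℝ) ≤ 60*(n:ℝ)*Real.log ((H:ℝ)+2) + 1 :=
        le_of_lt (Nat.ceil_lt_add_one (by positivity))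
      have hMTexp : ((M*T : ℕ) : ℝ) = (M:ℝ) * ((900*n^2*M : ℕ) + (⌈(60*(n:ℝ)*Real.log ((H:ℝ)+2))⌉₊ : ℕ)) := by
        rw [hT]; push_cast; ring
      have hlogstep : Real.log ((H:ℝ)+2) ≤ 2*(1 + (Real.log H)^2) := by
        by_cases hH2 : H ≤ 1
        · have : ((H:ℝ)+2) ≤ 3 := by
            have : (H:ℝ) ≤ 1 := by exact_mod_cast hH2
            linarith
          have h1 : Real.log ((H:ℝ)+2) ≤ Real.log 3 := Real.log_le_log (by positivity) this
          have h2 : Real.log 3 ≤ 2 := by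
            have := Real.log_le_sub_one_of_pos (by norm_num : (0:ℝ) < 3)
            linarith
          nlinarith [sq_nonneg (Real.log H)]
        · push_neg at hH2
          have hHR : (2:ℝ) ≤ H := by exact_mod_cast hH2
          have h1 : (H:ℝ)+2 ≤ (H:ℝ)^2 := by nlinarith
          have h2 : Real.log ((H:ℝ)+2) ≤ Real.log ((H:ℝ)^2) :=
            Real.log_le_log (by positivity) h1
          have h3 : Real.log ((H:ℝ)^2) = 2 * Real.log H := by
            have h0 := Real.log_pow ((H:ℝ)) 2
            push_cast at h0
            linarith
          have h4 : 2 * Real.log H ≤ 1 + (Real.log H)^2 := by nlinarith [sq_nonneg (Real.log H - 1)]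
          nlinarith [sq_nonneg (Real.log H)]
      have hfinal : (M:ℝ) * ((900*(n:ℝ)^2*(M:ℝ)) + (60*(n:ℝ)*Real.log ((H:ℝ)+2) + 1))
          ≤ 10000 * (n:ℝ)^2 * (M:ℝ)^2 * (1 + (Real.log H) ^ 2) := by
        have := arith_final (n:ℝ) (M:ℝ) (1 + (Real.log H)^2) (Real.log ((H:ℝ)+2))
          hnR hMR (by nlinarith [sq_nonneg (Real.log H)]) hlogstep hlogH2
        linarith
      calc ((M*T : ℕ) : ℝ)
          = (M:ℝ) * (((900*n^2*M : ℕ) : ℝ) + (⌈(60*(n:ℝ)*Real.log ((H:ℝ)+2))⌉₊ : ℕ)) := hMTexp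
        _ ≤ (M:ℝ) * ((900*(n:ℝ)^2*(M:ℝ)) + (60*(n:ℝ)*Real.log ((H:ℝ)+2) + 1)) := by
            apply mul_le_mul_of_nonneg_left _ (by positivity)
            have : ((900*n^2*M : ℕ) : ℝ) = 900*(n:ℝ)^2*(M:ℝ) := by push_cast; ring
            rw [this]
            linarith [hceil]
        _ ≤ _ := hfinal
    calc (vecHeight (fun i => r i + (M:ℤ) * t i) : ℝ) ≤ ((M*T : ℕ) : ℝ) := by exact_mod_cast hsup
      _ ≤ _ := hMT
  · intro i j hij
    have e1 : a i + (r i + (M:ℤ) * t i) = c i + (M:ℤ) * t i := by simp only [hc]; ring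
    have e2 : a j + (r j + (M:ℤ) * t j) = c j + (M:ℤ) * t j := by simp only [hc]; ring
    show Int.gcd (a i + (r i + (M:ℤ) * t i)) (a j + (r j + (M:ℤ) * t j)) = 1
    rw [e1, e2]
    exact htG i j hij
end

section
/- For every integer n ≥ 2 there exists a constant C > 0, depending only on n, such that for every vector a = (a_1, …, a_n) ∈ ℤ^n there exists a vector h = (h_1, …, h_n) ∈ ℤ^n with 𝔥(h) ≤ C·(1 + (log 𝔥*(a))²) (interpreting the bound as C when 𝔥*(a) ≤ 1) and gcd(a_i + h_i, a_j + h_j) = 1 for all 1 ≤ i < j ≤ n, where 𝔥*(a) = min_{1 ≤ i ≤ n} max_{1 ≤ j ≤ n, j ≠ i} |a_j|. -/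
set_option maxHeartbeats 1000000

namespace PCS

attribute [local instance] Classical.propDecidable


def z (n : ℕ) : ℕ := 32 * n^2
def Pz (n : ℕ) : ℕ := ∏ p ∈ (Finset.range (z n + 1)).filter Nat.Prime, p
def L (H : ℕ) : ℕ := Nat.log 2 (H + 2)
def D (n H : ℕ) : ℕ := 2^20 * n^6 * Pz n * (L H + 1)
def M (n H : ℕ) : ℕ := Nat.log 2 (H + Pz n * D n H + 2)
def Y (n H : ℕ) : ℕ := 8 * n * (M n H + 1) + z n + 2

def Good (n H : ℕ) (b : ℤ) : Prop :=
  (∑ p ∈ b.natAbs.primeFactors.filter (fun p => z n < p ∧ p ≤ Y n H), (1 / p : ℚ))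
    ≤ 1 / (4 * n)

-- from w1
lemma Pz_pos (n : ℕ) : 0 < Pz n := by
  apply Finset.prod_pos; intro p hp; exact (Finset.mem_filter.1 hp).2.pos

lemma dvd_Pz {n p : ℕ} (hp : p.Prime) (hle : p ≤ z n) : p ∣ Pz n :=
  Finset.dvd_prod_of_mem _ (Finset.mem_filter.2 ⟨Finset.mem_range.2 (by omega), hp⟩)

lemma le_z_of_dvd_Pz {n p : ℕ} (hp : p.Prime) (hdvd : p ∣ Pz n) : p ≤ z n := by
  rcases (Nat.Prime.prime hp).dvd_finset_prod_iff _ |>.1 hdvd with ⟨q, hq, hpq⟩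
  rcases Finset.mem_filter.1 hq with ⟨hq1, hq2⟩
  have := (Nat.prime_dvd_prime_iff_eq hp hq2).1 hpq
  subst this
  exact Nat.lt_succ_iff.1 (Finset.mem_range.1 hq1)

lemma coprime_Pz {n p : ℕ} (hp : p.Prime) (hzp : z n < p) : Nat.Coprime p (Pz n) :=
  (Nat.Prime.coprime_iff_not_dvd hp).2 fun hd => absurd (le_z_of_dvd_Pz hp hd) (by omega)


lemma two_le_Pz {n : ℕ} (hn : 2 ≤ n) : 2 ≤ Pz n := by
  have h2 : (2:ℕ) ∣ Pz n := dvd_Pz Nat.prime_two (by simp [z]; nlinarith)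
  exact Nat.le_of_dvd (Pz_pos n) h2

lemma n_le_Pz {n : ℕ} (hn : 2 ≤ n) : n ≤ Pz n := by
  obtain ⟨p, hp, hnp, hp2n⟩ := Nat.exists_prime_lt_and_le_two_mul n (by omega)
  have hpz : p ≤ z n := by simp only [z]; nlinarith
  exact le_trans (le_of_lt hnp) (Nat.le_of_dvd (Pz_pos n) (dvd_Pz hp hpz))

lemma prime_gt_z (n : ℕ) {v : ℤ} (hv1 : (Pz n : ℤ) ∣ v - 1) {p : ℕ} (hp : p.Prime)
    (hpv : (p:ℤ) ∣ v) : z n < p := by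
  by_contra h
  have h1 : (p:ℕ) ∣ Pz n := dvd_Pz hp (by omega)
  have h2 : (p:ℤ) ∣ v - 1 := dvd_trans (Int.natCast_dvd_natCast.2 h1) hv1
  have h3 : (p:ℤ) ∣ 1 := by
    have := dvd_sub hpv h2
    simpa using this
  have := Int.le_of_dvd one_pos h3
  have := hp.two_le
  omega


lemma card_dvd_filter_le (Dv q : ℕ) (A : ℤ) (Pv : ℕ) (hq : 0 < q)
    (hco : Nat.Coprime q Pv) :
    ((Finset.range Dv).filter fun k : ℕ => (q:ℤ) ∣ A + (Pv:ℤ) * (k:ℤ)).card ≤ Dv / q + 1 := by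
  classical
  set S := (Finset.range Dv).filter (fun k : ℕ => (q:ℤ) ∣ A + (Pv:ℤ) * (k:ℤ)) with hS
  have key : ∀ k₁ ∈ S, ∀ k₂ ∈ S, k₁ ≤ k₂ → q ∣ k₂ - k₁ := by
    intro k₁ h1 k₂ h2 hle
    have d1 := (Finset.mem_filter.1 h1).2
    have d2 := (Finset.mem_filter.1 h2).2
    have hz : (q:ℤ) ∣ (Pv : ℤ) * (((k₂ - k₁ : ℕ)) : ℤ) := by
      have he : (A + (Pv:ℤ) * k₂) - (A + (Pv:ℤ) * k₁) = (Pv:ℤ) * (((k₂ - k₁ : ℕ)):ℤ) := by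
        push_cast [Nat.cast_sub hle]; ring
      rw [← he]; exact dvd_sub d2 d1
    have hn : (q:ℕ) ∣ Pv * (k₂ - k₁) := by exact_mod_cast hz
    exact (Nat.Coprime.dvd_of_dvd_mul_left hco hn)
  have hinj : Set.InjOn (· / q) (S : Set ℕ) := by
    intro k₁ h1 k₂ h2 heq
    rcases le_total k₁ k₂ with h | h
    · obtain ⟨t, ht⟩ := key k₁ (by simpa [hS, Finset.mem_filter] using h1) k₂
        (by simpa [hS, Finset.mem_filter] using h2) h
      have heq' : k₁ / q = k₂ / q := by simpa using heq
      have hk2 : k₂ = k₁ + q * t := by omega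
      have h3 : k₂ / q = k₁ / q + t := by rw [hk2]; exact Nat.add_mul_div_left _ _ hq
      have ht0 : t = 0 := by omega
      rw [ht0, Nat.mul_zero] at ht
      omega
    · obtain ⟨t, ht⟩ := key k₂ (by simpa [hS, Finset.mem_filter] using h2) k₁
        (by simpa [hS, Finset.mem_filter] using h1) h
      have heq' : k₁ / q = k₂ / q := by simpa using heq
      have hk1 : k₁ = k₂ + q * t := by omega
      have h3 : k₁ / q = k₂ / q + t := by rw [hk1]; exact Nat.add_mul_div_left _ _ hq
      have ht0 : t = 0 := by omega
      rw [ht0, Nat.mul_zero] at ht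
      omega
  have himg : ∀ k ∈ S, k / q ∈ Finset.range (Dv / q + 1) := by
    intro k hk
    have hkD : k < Dv := Finset.mem_range.1 (Finset.mem_filter.1 hk).1
    have : k / q ≤ Dv / q := Nat.div_le_div_right (le_of_lt hkD)
    exact Finset.mem_range.2 (by omega)
  calc S.card ≤ (Finset.range (Dv / q + 1)).card :=
        Finset.card_le_card_of_injOn _ himg hinj
    _ = Dv / q + 1 := Finset.card_range _

lemma card_dvd_filter_le_one (Dv : ℕ) (A : ℤ) (Pv q : ℕ) (hPv : 0 < Pv)
    (hbig : Pv * Dv < q) :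
    ((Finset.range Dv).filter fun k : ℕ => (q:ℤ) ∣ A + (Pv:ℤ) * (k:ℤ)).card ≤ 1 := by
  rw [Finset.card_le_one]
  intro k₁ h1 k₂ h2
  have d1 := (Finset.mem_filter.1 h1).2
  have d2 := (Finset.mem_filter.1 h2).2
  have r1 := Finset.mem_range.1 (Finset.mem_filter.1 h1).1
  have r2 := Finset.mem_range.1 (Finset.mem_filter.1 h2).1
  have hd : (q:ℤ) ∣ (Pv:ℤ) * ((k₁:ℤ) - k₂) := by
    have he : (Pv:ℤ) * ((k₁:ℤ) - k₂) = (A + (Pv:ℤ) * k₁) - (A + (Pv:ℤ) * k₂) := by ring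
    rw [he]; exact dvd_sub d1 d2
  by_contra hne
  have habs : 0 < |(Pv:ℤ) * ((k₁:ℤ) - k₂)| := by
    have hne' : ((k₁:ℤ) - k₂) ≠ 0 := by
      intro h; exact hne (by exact_mod_cast sub_eq_zero.1 h)
    have hP' : (Pv:ℤ) ≠ 0 := by exact_mod_cast hPv.ne'
    positivity
  have hlt : |(Pv:ℤ) * ((k₁:ℤ) - k₂)| < q := by
    rw [abs_mul]
    have h1' : |(Pv:ℤ)| = Pv := by simp
    have h2' : |(k₁:ℤ) - k₂| ≤ Dv := by
      rw [abs_sub_le_iff]; constructor <;> push_cast <;> omega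
    calc |(Pv:ℤ)| * |(k₁:ℤ) - k₂| ≤ (Pv:ℤ) * Dv := by
          rw [h1']; exact mul_le_mul_of_nonneg_left h2' (by positivity)
      _ < q := by exact_mod_cast hbig
  have := Int.le_of_dvd habs ((dvd_abs (q:ℤ) _).2 hd)
  omega


lemma sum_inv_sq_le_aux (a : ℕ) (ha : 0 < a) (b : ℕ) (hab : a ≤ b) :
    (∑ m ∈ Finset.Icc (a+1) b, (1 / (m:ℚ)^2)) ≤ 1 / (a:ℚ) - 1 / (b:ℚ) := by
  induction b, hab using Nat.le_induction with
  | base =>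
    rw [Finset.Icc_eq_empty_of_lt (by omega)]; simp
  | succ b hab ih =>
    rw [Finset.sum_Icc_succ_top (by omega)]
    have hb : (0:ℚ) < b := by exact_mod_cast lt_of_lt_of_le ha hab
    have hb1 : (0:ℚ) < (b:ℚ) + 1 := by positivity
    have key : (1 / ((b:ℚ)+1)^2) ≤ 1 / (b:ℚ) - 1 / ((b:ℚ)+1) := by
      rw [div_sub_div _ _ (ne_of_gt hb) (ne_of_gt hb1)]
      rw [div_le_div_iff₀ (by positivity) (by positivity)]
      nlinarith [sq_nonneg ((b:ℚ))]
    push_cast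
    linarith

lemma sum_inv_sq_le (a : ℕ) (ha : 0 < a) (b : ℕ) :
    (∑ m ∈ Finset.Icc (a+1) b, (1 / (m:ℚ)^2)) ≤ 1 / (a:ℚ) := by
  rcases le_or_gt a b with h | h
  · have hb : (0:ℚ) < b := by exact_mod_cast lt_of_lt_of_le ha h
    have h0 : (0:ℚ) ≤ 1/(b:ℚ) := by positivity
    linarith [sum_inv_sq_le_aux a ha b h]
  · rw [Finset.Icc_eq_empty_of_lt (by omega)]
    simp
    

lemma sum_inv_le_card (s : Finset ℕ) (c : ℕ) (hc : 0 < c) (hs : ∀ m ∈ s, c ≤ m) :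
    (∑ m ∈ s, (1 / (m:ℚ))) ≤ (s.card : ℚ) / (c:ℚ) := by
  have hmono : ∀ m ∈ s, (1/(m:ℚ)) ≤ 1/(c:ℚ) := by
    intro m hm
    apply one_div_le_one_div_of_le (by exact_mod_cast hc)
    exact_mod_cast hs m hm
  calc (∑ m ∈ s, (1 / (m:ℚ))) ≤ ∑ m ∈ s, (1/(c:ℚ)) := Finset.sum_le_sum hmono
    _ = (s.card : ℚ) / (c:ℚ) := by rw [Finset.sum_const]; simp [div_eq_mul_inv]

lemma card_primeFactors_le_log {m : ℕ} (hm : m ≠ 0) :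
    m.primeFactors.card ≤ Nat.log 2 m := by
  have h2 : 2 ^ m.primeFactors.card ≤ ∏ p ∈ m.primeFactors, p := by
    apply Finset.pow_card_le_prod
    intro p hp
    exact (Nat.prime_of_mem_primeFactors hp).two_le
  have h3 : (∏ p ∈ m.primeFactors, p) ≤ m :=
    Nat.le_of_dvd (Nat.pos_of_ne_zero hm) (Nat.prod_primeFactors_dvd m)
  exact (Nat.le_log_iff_pow_le one_lt_two hm).2 (le_trans h2 h3)

lemma Np_card_le (n H : ℕ) (A : ℤ) {p : ℕ} (hp : p.Prime) (hzp : z n < p) :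
    (((Finset.range (D n H)).filter fun k : ℕ => (p:ℤ) ∣ A + (Pz n:ℤ) * (k:ℤ)).card)
      ≤ D n H / p + 1 :=
  card_dvd_filter_le _ _ _ _ hp.pos (coprime_Pz hp hzp)

lemma badG_card (n H : ℕ) (hn : 2 ≤ n) (A : ℤ) :
    ((((Finset.range (D n H)).filter
        fun k : ℕ => ¬ Good n H (A + (Pz n:ℤ) * (k:ℤ))).card : ℚ))
      ≤ (D n H : ℚ) / (8*n) + (M n H : ℚ) + 2 := by
  classical
  set zz := z n with hzz
  set P := Pz n with hP
  set Dv := D n H with hDv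
  set Yv := Y n H with hYv
  set Mv := M n H with hMv
  set B : ℕ → ℤ := fun k => A + (P:ℤ) * (k:ℤ) with hB
  set PP : Finset ℕ := (Finset.Icc (zz+1) Yv).filter Nat.Prime with hPP
  set S : ℤ → ℚ := fun b =>
    ∑ p ∈ b.natAbs.primeFactors.filter (fun p => zz < p ∧ p ≤ Yv), (1 / p : ℚ) with hS
  set BadG := (Finset.range Dv).filter (fun k : ℕ => ¬ Good n H (B k)) with hBadG
  have hn0 : (0:ℚ) < (n:ℚ) := by exact_mod_cast (by omega : 0 < n)
  -- Markov
  have step1 : (BadG.card : ℚ) * (1 / (4*n)) ≤ ∑ k ∈ Finset.range Dv, S (B k) := by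
    have h1 : ∀ k ∈ BadG, (1 / (4*(n:ℚ))) ≤ S (B k) := by
      intro k hk
      have := (Finset.mem_filter.1 hk).2
      simp only [Good, not_le] at this
      exact le_of_lt (by exact_mod_cast this)
    have h2 : ∀ b, 0 ≤ S b := by
      intro b
      apply Finset.sum_nonneg
      intro p _
      positivity
    calc (BadG.card : ℚ) * (1 / (4*n)) = ∑ _k ∈ BadG, (1/(4*(n:ℚ))) := by
          rw [Finset.sum_const]; simp [mul_comm]
      _ ≤ ∑ k ∈ BadG, S (B k) := Finset.sum_le_sum h1
      _ ≤ ∑ k ∈ Finset.range Dv, S (B k) := by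
          apply Finset.sum_le_sum_of_subset_of_nonneg (Finset.filter_subset _ _)
          intro k _ _; exact h2 _
  -- pointwise bound on S (B k)
  have step2 : ∀ k : ℕ, S (B k) ≤ ∑ p ∈ PP, (if (p:ℤ) ∣ B k then (1/p : ℚ) else 0) := by
    intro k
    rw [← Finset.sum_filter]
    apply Finset.sum_le_sum_of_subset_of_nonneg
    · intro p hp
      rcases Finset.mem_filter.1 hp with ⟨hp1, hp2, hp3⟩
      have hprime := Nat.prime_of_mem_primeFactors hp1
      have hdvd : p ∣ (B k).natAbs := Nat.dvd_of_mem_primeFactors hp1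
      refine Finset.mem_filter.2 ⟨Finset.mem_filter.2 ⟨Finset.mem_Icc.2 ⟨by omega, hp3⟩, hprime⟩, ?_⟩
      exact (Int.natCast_dvd_natCast.2 hdvd).trans (Int.natAbs_dvd.2 dvd_rfl)
    · intro p _ _; positivity
  -- swap sums
  have step3 : (∑ k ∈ Finset.range Dv, ∑ p ∈ PP, (if (p:ℤ) ∣ B k then (1/p : ℚ) else 0))
      = ∑ p ∈ PP, (((Finset.range Dv).filter fun k : ℕ => (p:ℤ) ∣ B k).card : ℚ) * (1/p) := by
    rw [Finset.sum_comm]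
    congr 1
    ext p
    rw [← Finset.sum_filter, Finset.sum_const]
    simp [mul_comm]
  -- bound each summand
  have step4 : ∀ p ∈ PP,
      (((Finset.range Dv).filter fun k : ℕ => (p:ℤ) ∣ B k).card : ℚ) * (1/p)
        ≤ (Dv : ℚ) * (1/(p:ℚ)^2) + 1/p := by
    intro p hp
    rcases Finset.mem_filter.1 hp with ⟨hp1, hp2⟩
    rcases Finset.mem_Icc.1 hp1 with ⟨hp3, hp4⟩
    have hpQ : (0:ℚ) < p := by exact_mod_cast hp2.pos
    have hc := Np_card_le n H A hp2 (by omega)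
    have hcQ : ((((Finset.range Dv).filter fun k : ℕ => (p:ℤ) ∣ B k).card : ℚ))
        ≤ (Dv : ℚ)/(p:ℚ) + 1 := by
      have h1 : ((((Finset.range Dv).filter fun k : ℕ => (p:ℤ) ∣ B k).card : ℚ))
          ≤ ((Dv / p + 1 : ℕ) : ℚ) := by exact_mod_cast hc
      have h2 : ((Dv / p : ℕ) : ℚ) ≤ (Dv : ℚ) / (p : ℚ) := Nat.cast_div_le
      push_cast at h1 ⊢
      linarith
    calc (((Finset.range Dv).filter fun k : ℕ => (p:ℤ) ∣ B k).card : ℚ) * (1/p)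
        ≤ ((Dv : ℚ)/(p:ℚ) + 1) * (1/p) := by
          apply mul_le_mul_of_nonneg_right hcQ; positivity
      _ = (Dv : ℚ) * (1/(p:ℚ)^2) + 1/p := by field_simp
  -- sums of 1/p^2 and 1/p
  have hzz0 : 0 < zz := by simp [hzz, z]; positivity
  have step5 : (∑ p ∈ PP, (1/(p:ℚ)^2)) ≤ 1 / (zz:ℚ) := by
    calc (∑ p ∈ PP, (1/(p:ℚ)^2)) ≤ ∑ m ∈ Finset.Icc (zz+1) Yv, (1/(m:ℚ)^2) := by
          apply Finset.sum_le_sum_of_subset_of_nonneg (Finset.filter_subset _ _)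
          intro m _ _; positivity
      _ ≤ 1 / (zz:ℚ) := sum_inv_sq_le zz hzz0 Yv
  have step6 : (∑ p ∈ PP, (1/(p:ℚ))) ≤ ((Yv - zz : ℕ) : ℚ) / ((zz+1 : ℕ) : ℚ) := by
    calc (∑ p ∈ PP, (1/(p:ℚ))) ≤ ∑ m ∈ Finset.Icc (zz+1) Yv, (1/(m:ℚ)) := by
          apply Finset.sum_le_sum_of_subset_of_nonneg (Finset.filter_subset _ _)
          intro m _ _; positivity
      _ ≤ (((Finset.Icc (zz+1) Yv).card : ℚ)) / ((zz+1 : ℕ) : ℚ) := by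
          apply sum_inv_le_card
          · omega
          · intro m hm; exact (Finset.mem_Icc.1 hm).1
      _ = ((Yv - zz : ℕ) : ℚ) / ((zz+1 : ℕ) : ℚ) := by
          rw [Nat.card_Icc]
          norm_num
          have he : Yv + 1 - (zz + 1) = Yv - zz := by omega
          rw [he]
  -- combine
  have total : (BadG.card : ℚ) * (1 / (4*n))
      ≤ (Dv:ℚ) * (1/(zz:ℚ)) + ((Yv - zz : ℕ):ℚ) / ((zz+1:ℕ):ℚ) := by
    calc (BadG.card : ℚ) * (1 / (4*n)) ≤ ∑ k ∈ Finset.range Dv, S (B k) := step1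
      _ ≤ ∑ k ∈ Finset.range Dv, ∑ p ∈ PP, (if (p:ℤ) ∣ B k then (1/p : ℚ) else 0) :=
          Finset.sum_le_sum (fun k _ => step2 k)
      _ = ∑ p ∈ PP, (((Finset.range Dv).filter fun k : ℕ => (p:ℤ) ∣ B k).card : ℚ) * (1/p) := step3
      _ ≤ ∑ p ∈ PP, ((Dv : ℚ) * (1/(p:ℚ)^2) + 1/p) := Finset.sum_le_sum step4
      _ = (Dv:ℚ) * (∑ p ∈ PP, (1/(p:ℚ)^2)) + ∑ p ∈ PP, (1/(p:ℚ)) := by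
          rw [Finset.sum_add_distrib, Finset.mul_sum]
      _ ≤ (Dv:ℚ) * (1/(zz:ℚ)) + ((Yv - zz : ℕ):ℚ) / ((zz+1:ℕ):ℚ) := by
          apply add_le_add _ step6
          apply mul_le_mul_of_nonneg_left step5 (by positivity)
  -- final numeric manipulation
  have hYz : (Yv - zz : ℕ) = 8*n*(Mv+1) + 2 := by
    simp only [hYv, hMv, Y]; omega
  have hzzQ : ((zz:ℕ):ℚ) = 32 * (n:ℚ)^2 := by
    rw [hzz]; simp only [z]; push_cast; ring
  have h4n : (0:ℚ) < 4*(n:ℚ) := by positivity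
  have key : (BadG.card : ℚ) ≤ ((Dv:ℚ) * (1/(zz:ℚ)) + ((Yv - zz : ℕ):ℚ) / ((zz+1:ℕ):ℚ)) * (4*n) := by
    have h := mul_le_mul_of_nonneg_right total (le_of_lt h4n)
    calc (BadG.card : ℚ) = (BadG.card : ℚ) * (1/(4*(n:ℚ))) * (4*(n:ℚ)) := by field_simp
      _ ≤ ((Dv:ℚ) * (1/(zz:ℚ)) + ((Yv - zz : ℕ):ℚ) / ((zz+1:ℕ):ℚ)) * (4*n) := h
  have final : ((Dv:ℚ) * (1/(zz:ℚ)) + ((Yv - zz : ℕ):ℚ) / ((zz+1:ℕ):ℚ)) * (4*n)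
      ≤ (Dv : ℚ) / (8*n) + (Mv : ℚ) + 2 := by
    rw [hYz, hzzQ]
    have hzc : ((zz + 1 : ℕ) : ℚ) = 32*(n:ℚ)^2 + 1 := by rw [← hzzQ]; push_cast; ring
    rw [hzc]
    push_cast
    have hDv0 : (0:ℚ) ≤ (Dv:ℚ) := by positivity
    have hMv0 : (0:ℚ) ≤ (Mv:ℚ) := Nat.cast_nonneg _
    have e1 : (Dv:ℚ) * (1/(32*(n:ℚ)^2)) * (4*n) = (Dv:ℚ)/(8*n) := by field_simp; ring
    have e2 : ((8*(n:ℚ)*((Mv:ℚ)+1) + 2) / (32*(n:ℚ)^2+1)) * (4*n) ≤ (Mv:ℚ) + 2 := by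
      rw [div_mul_eq_mul_div, div_le_iff₀ (by positivity)]
      have h2n : (2:ℚ) ≤ n := by exact_mod_cast hn
      nlinarith [hMv0, h2n]
    calc ((Dv:ℚ) * (1/(32*(n:ℚ)^2)) + (8*(n:ℚ)*((Mv:ℚ)+1) + 2) / (32*(n:ℚ)^2+1)) * (4*n)
        = (Dv:ℚ) * (1/(32*(n:ℚ)^2)) * (4*n) + ((8*(n:ℚ)*((Mv:ℚ)+1) + 2) / (32*(n:ℚ)^2+1)) * (4*n) := by ring
      _ ≤ (Dv:ℚ)/(8*n) + ((Mv:ℚ) + 2) := by rw [e1]; linarith [e2]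
      _ = (Dv : ℚ) / (8*n) + (Mv : ℚ) + 2 := by ring
  exact le_trans key final

lemma badC_card (n H : ℕ) (hn : 2 ≤ n) (A : ℤ) (v : ℤ)
    (hv0 : v ≠ 0) (hvb : v.natAbs ≤ H + Pz n * D n H) (hv1 : (Pz n:ℤ) ∣ v - 1)
    (hvg : Good n H v) :
    (((Finset.range (D n H)).filter
        fun k : ℕ => Int.gcd (A + (Pz n:ℤ)*(k:ℤ)) v ≠ 1).card : ℚ)
      ≤ (D n H:ℚ)/(4*n) + (D n H:ℚ)/(8*n) + 3*(M n H:ℚ) := by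
  classical
  set zz := z n with hzz
  set P := Pz n with hP
  set Dv := D n H with hDv
  set Yv := Y n H with hYv
  set Mv := M n H with hMv
  set B : ℕ → ℤ := fun k => A + (P:ℤ) * (k:ℤ) with hB
  set Pfac := v.natAbs.primeFactors with hPfac
  set Np : ℕ → Finset ℕ :=
    fun p => (Finset.range Dv).filter (fun k : ℕ => (p:ℤ) ∣ B k) with hNp
  have hvna : v.natAbs ≠ 0 := Int.natAbs_ne_zero.2 hv0
  have hPfacM : Pfac.card ≤ Mv := by
    calc Pfac.card ≤ Nat.log 2 v.natAbs := card_primeFactors_le_log hvna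
      _ ≤ Mv := by
          rw [hMv, M]
          exact Nat.log_mono_right (le_trans hvb (Nat.le_add_right _ 2))
  -- facts about members of Pfac
  have hmem : ∀ p ∈ Pfac, p.Prime ∧ (p:ℤ) ∣ v ∧ zz < p := by
    intro p hp
    have h1 := Nat.prime_of_mem_primeFactors hp
    have h2 : (p:ℤ) ∣ v := by
      have := Nat.dvd_of_mem_primeFactors hp
      exact (Int.natCast_dvd_natCast.2 this).trans (Int.natAbs_dvd.2 dvd_rfl)
    exact ⟨h1, h2, prime_gt_z n hv1 h1 h2⟩
  -- the bad set is covered by the union of the Np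
  have hsub : ((Finset.range Dv).filter fun k : ℕ => Int.gcd (B k) v ≠ 1)
      ⊆ Pfac.biUnion Np := by
    intro k hk
    rcases Finset.mem_filter.1 hk with ⟨hkr, hkg⟩
    have hgne : Int.gcd (B k) v ≠ 0 := by
      intro h0
      exact hv0 (Int.gcd_eq_zero_iff.1 h0).2
    obtain ⟨q, hq, hqd⟩ := Nat.exists_prime_and_dvd hkg
    have hq1 : (q:ℤ) ∣ B k := dvd_trans (Int.natCast_dvd_natCast.2 hqd) (Int.gcd_dvd_left _ _)
    have hq2 : (q:ℤ) ∣ v := dvd_trans (Int.natCast_dvd_natCast.2 hqd) (Int.gcd_dvd_right _ _)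
    refine Finset.mem_biUnion.2 ⟨q, ?_, ?_⟩
    · exact Nat.mem_primeFactors.2 ⟨hq, Int.natAbs_dvd_natAbs.2 hq2, hvna⟩
    · exact Finset.mem_filter.2 ⟨Finset.mem_range.2 (Finset.mem_range.1 hkr), hq1⟩
  have hcard1 : (((Finset.range Dv).filter fun k : ℕ => Int.gcd (B k) v ≠ 1).card : ℚ)
      ≤ ∑ p ∈ Pfac, ((Np p).card : ℚ) := by
    have h1 := Finset.card_le_card hsub
    have h2 := Finset.card_biUnion_le (s := Pfac) (t := Np)
    have := le_trans h1 h2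
    exact_mod_cast this
  -- split Pfac into three ranges
  set med := Pfac.filter (fun p => p ≤ Yv) with hmed
  set rest := Pfac.filter (fun p => ¬ p ≤ Yv) with hrest
  set mid := rest.filter (fun p => p ≤ P * Dv) with hmid
  set huge := rest.filter (fun p => ¬ p ≤ P * Dv) with hhuge
  have hsplit : ∑ p ∈ Pfac, ((Np p).card : ℚ)
      = ∑ p ∈ med, ((Np p).card : ℚ) + (∑ p ∈ mid, ((Np p).card : ℚ)
        + ∑ p ∈ huge, ((Np p).card : ℚ)) := by
    have e1 := Finset.sum_filter_add_sum_filter_not Pfac (fun p => p ≤ Yv)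
      (fun p => ((Np p).card : ℚ))
    have e2 := Finset.sum_filter_add_sum_filter_not rest (fun p => p ≤ P * Dv)
      (fun p => ((Np p).card : ℚ))
    rw [← hmed, ← hrest] at e1
    rw [← hmid, ← hhuge] at e2
    linarith
  -- medium range
  have hmedcard : med.card ≤ Mv := le_trans (Finset.card_le_card (Finset.filter_subset _ _)) hPfacM
  have hmedsum : ∑ p ∈ med, ((Np p).card : ℚ) ≤ (Dv:ℚ)/(4*n) + Mv := by
    have hbound : ∀ p ∈ med, ((Np p).card : ℚ) ≤ (Dv:ℚ) * (1/p) + 1 := by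
      intro p hp
      rcases Finset.mem_filter.1 hp with ⟨hp1, hp2⟩
      obtain ⟨hprime, hdvd, hzp⟩ := hmem p hp1
      have hc := Np_card_le n H A hprime hzp
      have hpQ : (0:ℚ) < p := by exact_mod_cast hprime.pos
      have h2 : ((Dv / p : ℕ) : ℚ) ≤ (Dv : ℚ) / (p : ℚ) := Nat.cast_div_le
      have h1 : (((Np p).card : ℚ)) ≤ ((Dv / p + 1 : ℕ) : ℚ) := by exact_mod_cast hc
      push_cast at h1
      rw [mul_one_div]
      linarith
    calc ∑ p ∈ med, ((Np p).card : ℚ) ≤ ∑ p ∈ med, ((Dv:ℚ) * (1/p) + 1) :=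
          Finset.sum_le_sum hbound
      _ = (Dv:ℚ) * (∑ p ∈ med, (1/(p:ℚ))) + med.card := by
          rw [Finset.sum_add_distrib, Finset.mul_sum, Finset.sum_const]; simp
      _ ≤ (Dv:ℚ) * (1/(4*n)) + Mv := by
          have hgood : (∑ p ∈ med, (1/(p:ℚ))) ≤ 1/(4*(n:ℚ)) := by
            calc (∑ p ∈ med, (1/(p:ℚ)))
                ≤ ∑ p ∈ v.natAbs.primeFactors.filter (fun p => zz < p ∧ p ≤ Yv), (1/(p:ℚ)) := by
                  apply Finset.sum_le_sum_of_subset_of_nonneg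
                  · intro p hp
                    rcases Finset.mem_filter.1 hp with ⟨hp1, hp2⟩
                    exact Finset.mem_filter.2 ⟨hp1, (hmem p hp1).2.2, hp2⟩
                  · intro p _ _; positivity
              _ ≤ 1/(4*(n:ℚ)) := hvg
          have hDv0 : (0:ℚ) ≤ Dv := by positivity
          have hmc : (med.card : ℚ) ≤ (Mv:ℚ) := by exact_mod_cast hmedcard
          have := mul_le_mul_of_nonneg_left hgood hDv0
          push_cast
          linarith
      _ = (Dv:ℚ)/(4*n) + Mv := by rw [mul_one_div]
  -- mid range
  have hmidcard : mid.card ≤ Mv := by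
    apply le_trans _ hPfacM
    apply Finset.card_le_card
    exact (Finset.filter_subset _ _).trans (Finset.filter_subset _ _)
  have hmidsum : ∑ p ∈ mid, ((Np p).card : ℚ) ≤ (Dv:ℚ)/(8*n) + Mv := by
    have h8n : (0:ℚ) < 8*(n:ℚ) := by positivity
    have hbound : ∀ p ∈ mid, ((Np p).card : ℚ) ≤ (Dv:ℚ)/(Yv+1) + 1 := by
      intro p hp
      rcases Finset.mem_filter.1 hp with ⟨hp1, hp2⟩
      rcases Finset.mem_filter.1 hp1 with ⟨hp3, hp4⟩
      obtain ⟨hprime, hdvd, hzp⟩ := hmem p hp3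
      have hc := Np_card_le n H A hprime hzp
      have hc2 : (Np p).card ≤ Dv / (Yv+1) + 1 := by
        have hc' : (Np p).card ≤ Dv / p + 1 := hc
        have hdd : Dv / p ≤ Dv / (Yv + 1) := Nat.div_le_div_left (by omega) (by omega)
        omega
      have h1 : (((Np p).card : ℚ)) ≤ ((Dv / (Yv+1) + 1 : ℕ) : ℚ) := by exact_mod_cast hc2
      have h2 : ((Dv / (Yv+1) : ℕ) : ℚ) ≤ (Dv : ℚ) / ((Yv:ℚ)+1) := by
        have := Nat.cast_div_le (α := ℚ) (m := Dv) (n := Yv+1)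
        push_cast at this ⊢
        linarith
      push_cast at h1
      linarith
    calc ∑ p ∈ mid, ((Np p).card : ℚ) ≤ ∑ _p ∈ mid, ((Dv:ℚ)/(Yv+1) + 1) :=
          Finset.sum_le_sum hbound
      _ = mid.card * ((Dv:ℚ)/(Yv+1)) + mid.card := by
          rw [Finset.sum_const]; push_cast; ring
      _ ≤ (Dv:ℚ)/(8*n) + Mv := by
          have hmc : (mid.card : ℚ) ≤ (Mv:ℚ) := by exact_mod_cast hmidcard
          have hmc0 : (0:ℚ) ≤ (mid.card:ℚ) := by positivity
          have hDv0 : (0:ℚ) ≤ Dv := by positivity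
          have hY1 : (0:ℚ) < (Yv:ℚ) + 1 := by have := Nat.cast_nonneg (α := ℚ) Yv; linarith
          have hkey : (Mv : ℚ) * ((Dv:ℚ)/(Yv+1)) ≤ (Dv:ℚ)/(8*n) := by
            rw [mul_div_assoc', div_le_div_iff₀ hY1 h8n]
            have hY : 8*(n:ℚ)*(Mv:ℚ) ≤ (Yv:ℚ) + 1 := by
              have : 8*n*Mv ≤ Yv + 1 := by rw [hYv, Y, hMv]; ring_nf; omega
              exact_mod_cast this
            have hMv0 : (0:ℚ) ≤ (Mv:ℚ) := Nat.cast_nonneg _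
            have := mul_le_mul_of_nonneg_left hY hDv0; linarith
          have h1 : (mid.card : ℚ) * ((Dv:ℚ)/(Yv+1)) ≤ (Mv : ℚ) * ((Dv:ℚ)/(Yv+1)) := by
            apply mul_le_mul_of_nonneg_right hmc
            exact div_nonneg hDv0 hY1.le
          linarith
  -- huge range
  have hhugecard : huge.card ≤ Mv := by
    apply le_trans _ hPfacM
    apply Finset.card_le_card
    exact (Finset.filter_subset _ _).trans (Finset.filter_subset _ _)
  have hhugesum : ∑ p ∈ huge, ((Np p).card : ℚ) ≤ Mv := by
    have hbound : ∀ p ∈ huge, ((Np p).card : ℚ) ≤ 1 := by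
      intro p hp
      rcases Finset.mem_filter.1 hp with ⟨hp1, hp2⟩
      have hc := card_dvd_filter_le_one Dv A P p (Pz_pos n) (by omega)
      exact_mod_cast hc
    calc ∑ p ∈ huge, ((Np p).card : ℚ) ≤ ∑ _p ∈ huge, (1:ℚ) := Finset.sum_le_sum hbound
      _ = huge.card := by rw [Finset.sum_const]; simp
      _ ≤ Mv := by exact_mod_cast hhugecard
  calc (((Finset.range Dv).filter fun k : ℕ => Int.gcd (B k) v ≠ 1).card : ℚ)
      ≤ ∑ p ∈ Pfac, ((Np p).card : ℚ) := hcard1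
    _ = ∑ p ∈ med, ((Np p).card : ℚ) + (∑ p ∈ mid, ((Np p).card : ℚ)
        + ∑ p ∈ huge, ((Np p).card : ℚ)) := hsplit
    _ ≤ ((Dv:ℚ)/(4*n) + Mv) + (((Dv:ℚ)/(8*n) + Mv) + (Mv:ℚ)) := by
        apply add_le_add hmedsum
        exact add_le_add hmidsum hhugesum
    _ = (Dv:ℚ)/(4*n) + (Dv:ℚ)/(8*n) + 3*(Mv:ℚ) := by ring

lemma key_ineq (n H : ℕ) (hn : 2 ≤ n) : 8 * n * M n H + 6 ≤ D n H := by
  have hP2 : 2 ≤ Pz n := two_le_Pz hn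
  have hnP : n ≤ Pz n := n_le_Pz hn
  set P := Pz n with hP
  set Lv := L H with hLv
  -- bound D by a power of 2
  have hDle : D n H ≤ 2 ^ (21 + n^6 + P + Lv) := by
    have h1 : n^6 ≤ 2^(n^6) := le_of_lt (Nat.lt_two_pow_self)
    have h2 : P ≤ 2^P := le_of_lt (Nat.lt_two_pow_self)
    have h3 : Lv + 1 ≤ 2^(Lv+1) := le_of_lt (Nat.lt_two_pow_self)
    calc D n H = 2^20 * n^6 * P * (Lv + 1) := rfl
      _ ≤ 2^20 * 2^(n^6) * 2^P * 2^(Lv+1) :=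
          Nat.mul_le_mul (Nat.mul_le_mul (Nat.mul_le_mul_left _ h1) h2) h3
      _ = 2 ^ (21 + n^6 + P + Lv) := by
          rw [← pow_add, ← pow_add, ← pow_add]
          congr 1
          omega
  have hH2 : H + 2 ≤ 2^(Lv+1) := le_of_lt (Nat.lt_pow_succ_log_self (by norm_num) _)
  set E := 21 + n^6 + P + Lv with hE
  have hX : H + P * D n H + 2 ≤ 2^(P + E + 1) := by
    have hPD : P * D n H ≤ 2^P * 2^E := Nat.mul_le_mul (le_of_lt (Nat.lt_two_pow_self)) hDle
    have hL1 : Lv + 1 ≤ P + E := by omega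
    have hmono : (2:ℕ)^(Lv+1) ≤ 2^(P+E) := Nat.pow_le_pow_right (by norm_num) hL1
    calc H + P * D n H + 2 = (H + 2) + P * D n H := by omega
      _ ≤ 2^(P+E) + 2^P * 2^E := Nat.add_le_add (le_trans hH2 hmono) hPD
      _ = 2^(P+E) + 2^(P+E) := by rw [← pow_add]
      _ = 2^(P+E+1) := by rw [pow_succ]; omega
  have hM : M n H ≤ P + E + 1 := by
    have h1 : M n H ≤ Nat.log 2 (2^(P+E+1)) := Nat.log_mono_right hX
    rwa [Nat.log_pow (by norm_num)] at h1
  have hM2 : M n H ≤ 2*P + n^6 + Lv + 22 := by omega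
  -- final polynomial estimate
  have hn6 : n ≤ n^6 := Nat.le_self_pow (by norm_num) n
  have t0 : 1 ≤ Lv + 1 := by omega
  have piece : n * (2*P + n^6 + Lv + 22) ≤ 28 * (n^6 * P * (Lv+1)) := by
    have p1 : n * P ≤ n^6 * P * (Lv+1) := by
      calc n * P ≤ n^6 * P := Nat.mul_le_mul_right P hn6
        _ ≤ n^6 * P * (Lv+1) := Nat.le_mul_of_pos_right _ (by omega)
    have p2 : n * n^6 ≤ n^6 * P * (Lv+1) := by
      calc n * n^6 = n^6 * n := by ring
        _ ≤ n^6 * P := Nat.mul_le_mul_left _ hnP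
        _ ≤ n^6 * P * (Lv+1) := Nat.le_mul_of_pos_right _ (by omega)
    have p3 : n * Lv ≤ n^6 * P * (Lv+1) := by
      calc n * Lv ≤ n^6 * (P * (Lv+1)) := by
            apply Nat.mul_le_mul hn6
            calc Lv ≤ Lv + 1 := by omega
              _ ≤ P * (Lv+1) := Nat.le_mul_of_pos_left _ (by omega)
        _ = n^6 * P * (Lv+1) := by ring
    have p4 : n * 22 ≤ 22 * (n^6 * P * (Lv+1)) := by
      have : n ≤ n^6 * P * (Lv+1) := by
        calc n ≤ n^6 := hn6
          _ ≤ n^6 * P := Nat.le_mul_of_pos_right _ (by omega)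
          _ ≤ n^6 * P * (Lv+1) := Nat.le_mul_of_pos_right _ (by omega)
      calc n * 22 = 22 * n := by ring
        _ ≤ 22 * (n^6 * P * (Lv+1)) := Nat.mul_le_mul_left _ this
    calc n * (2*P + n^6 + Lv + 22)
        = 2*(n*P) + n*n^6 + n*Lv + n*22 := by ring
      _ ≤ 2*(n^6 * P * (Lv+1)) + n^6 * P * (Lv+1) + n^6 * P * (Lv+1)
          + 22 * (n^6 * P * (Lv+1)) := by
          have := Nat.mul_le_mul_left 2 p1
          omega
      _ = 26 * (n^6 * P * (Lv+1)) := by ring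
      _ ≤ 28 * (n^6 * P * (Lv+1)) := by omega
  have hfin : 8 * n * (2*P + n^6 + Lv + 22) + 6 ≤ D n H := by
    have h8 : 8 * (n * (2*P + n^6 + Lv + 22)) ≤ 8 * (28 * (n^6 * P * (Lv+1))) :=
      Nat.mul_le_mul_left 8 piece
    have hpos : 1 ≤ n^6 * P * (Lv+1) := by
      have h1 : 0 < n^6 := by positivity
      exact Nat.mul_pos (Nat.mul_pos h1 (by omega)) (by omega)
    calc 8 * n * (2*P + n^6 + Lv + 22) + 6
        = 8 * (n * (2*P + n^6 + Lv + 22)) + 6 := by ring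
      _ ≤ 8 * (28 * (n^6 * P * (Lv+1))) + 6 := by omega
      _ = 224 * (n^6 * P * (Lv+1)) + 6 := by ring
      _ ≤ 230 * (n^6 * P * (Lv+1)) := by omega
      _ ≤ 2^20 * (n^6 * P * (Lv+1)) := by
          apply Nat.mul_le_mul_right
          norm_num
      _ = D n H := by rw [D]; ring
  have hmul : 8 * n * M n H ≤ 8 * n * (2*P + n^6 + Lv + 22) :=
    Nat.mul_le_mul_left _ hM2
  omega

lemma exists_good_step (n H : ℕ) (hn : 2 ≤ n) (A : ℤ) (hA : (Pz n:ℤ) ∣ A - 1)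
    (s : Finset ℤ) (hcard : s.card ≤ n)
    (hs : ∀ v ∈ s, v ≠ 0 ∧ v.natAbs ≤ H + Pz n * D n H ∧ ((Pz n:ℤ) ∣ v - 1) ∧ Good n H v) :
    ∃ k : ℕ, k < D n H ∧ (A + (Pz n:ℤ)*(k:ℤ) ≠ 0) ∧ Good n H (A + (Pz n:ℤ)*(k:ℤ)) ∧
      ∀ v ∈ s, Int.gcd (A + (Pz n:ℤ)*(k:ℤ)) v = 1 := by
  classical
  set P := Pz n with hP
  set Dv := D n H with hDv
  set Mv := M n H with hMv
  set B : ℕ → ℤ := fun k => A + (P:ℤ) * (k:ℤ) with hB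
  have hPpos : 0 < P := Pz_pos n
  have hDpos : 0 < Dv := by
    rw [hDv, D]
    have := Pz_pos n
    positivity
  set BadZ := (Finset.range Dv).filter (fun k : ℕ => B k = 0) with hBadZ
  set BadG := (Finset.range Dv).filter (fun k : ℕ => ¬ Good n H (B k)) with hBadG
  set BadC := s.biUnion (fun v => (Finset.range Dv).filter
    (fun k : ℕ => Int.gcd (B k) v ≠ 1)) with hBadC
  set Bad := (Finset.range Dv).filter (fun k : ℕ =>
    ¬(B k ≠ 0 ∧ Good n H (B k) ∧ ∀ v ∈ s, Int.gcd (B k) v = 1)) with hBad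
  have hsub : Bad ⊆ BadZ ∪ BadG ∪ BadC := by
    intro k hk
    rcases Finset.mem_filter.1 hk with ⟨hkr, hkp⟩
    push_neg at hkp
    by_cases h0 : B k = 0
    · exact Finset.mem_union.2 (Or.inl (Finset.mem_union.2 (Or.inl
        (Finset.mem_filter.2 ⟨hkr, h0⟩))))
    by_cases hg : Good n H (B k)
    · obtain ⟨v, hv, hgcd⟩ := hkp h0 hg
      refine Finset.mem_union.2 (Or.inr (Finset.mem_biUnion.2 ⟨v, hv, ?_⟩))
      exact Finset.mem_filter.2 ⟨hkr, hgcd⟩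
    · exact Finset.mem_union.2 (Or.inl (Finset.mem_union.2 (Or.inr
        (Finset.mem_filter.2 ⟨hkr, hg⟩))))
  -- cardinality bounds
  have hZ : BadZ.card ≤ 1 := by
    rw [Finset.card_le_one]
    intro k₁ h1 k₂ h2
    have e1 := (Finset.mem_filter.1 h1).2
    have e2 := (Finset.mem_filter.1 h2).2
    have : (P:ℤ) * (k₁:ℤ) = (P:ℤ) * (k₂:ℤ) := by
      simp only [hB] at e1 e2
      linarith
    have hPne : (P:ℤ) ≠ 0 := by exact_mod_cast hPpos.ne'
    have := mul_left_cancel₀ hPne this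
    exact_mod_cast this
  have hG : (BadG.card : ℚ) ≤ (Dv : ℚ) / (8*n) + (Mv : ℚ) + 2 := badG_card n H hn A
  have hC : (BadC.card : ℚ) ≤ (n:ℚ) * ((Dv:ℚ)/(4*n) + (Dv:ℚ)/(8*n) + 3*(Mv:ℚ)) := by
    have h1 : BadC.card ≤ ∑ v ∈ s, ((Finset.range Dv).filter
        (fun k : ℕ => Int.gcd (B k) v ≠ 1)).card := Finset.card_biUnion_le
    have h2 : (∑ v ∈ s, (((Finset.range Dv).filter
        (fun k : ℕ => Int.gcd (B k) v ≠ 1)).card : ℚ))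
        ≤ ∑ _v ∈ s, ((Dv:ℚ)/(4*n) + (Dv:ℚ)/(8*n) + 3*(Mv:ℚ)) := by
      apply Finset.sum_le_sum
      intro v hv
      obtain ⟨hv0, hvb, hv1, hvg⟩ := hs v hv
      exact badC_card n H hn A v hv0 hvb hv1 hvg
    have h3 : (BadC.card : ℚ) ≤ ∑ v ∈ s, (((Finset.range Dv).filter
        (fun k : ℕ => Int.gcd (B k) v ≠ 1)).card : ℚ) := by exact_mod_cast h1
    have h4 : (∑ _v ∈ s, ((Dv:ℚ)/(4*n) + (Dv:ℚ)/(8*n) + 3*(Mv:ℚ)))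
        = (s.card : ℚ) * ((Dv:ℚ)/(4*n) + (Dv:ℚ)/(8*n) + 3*(Mv:ℚ)) := by
      rw [Finset.sum_const]; simp [mul_add]
    have h5 : (s.card : ℚ) ≤ (n : ℚ) := by exact_mod_cast hcard
    have h6 : (0:ℚ) ≤ (Dv:ℚ)/(4*n) + (Dv:ℚ)/(8*n) + 3*(Mv:ℚ) := by positivity
    calc (BadC.card : ℚ) ≤ (s.card : ℚ) * ((Dv:ℚ)/(4*n) + (Dv:ℚ)/(8*n) + 3*(Mv:ℚ)) := by
          rw [← h4]; exact le_trans h3 h2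
      _ ≤ (n:ℚ) * ((Dv:ℚ)/(4*n) + (Dv:ℚ)/(8*n) + 3*(Mv:ℚ)) :=
          mul_le_mul_of_nonneg_right h5 h6
  -- total
  have htot : (Bad.card : ℚ) < (Dv : ℚ) := by
    have hu : (Bad.card : ℚ) ≤ (BadZ.card : ℚ) + (BadG.card : ℚ) + (BadC.card : ℚ) := by
      have := Finset.card_le_card hsub
      have h2 := Finset.card_union_le (BadZ ∪ BadG) BadC
      have h3 := Finset.card_union_le BadZ BadG
      have : Bad.card ≤ BadZ.card + BadG.card + BadC.card := by omega
      exact_mod_cast this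
    have hkey : 8 * n * Mv + 6 ≤ Dv := key_ineq n H hn
    have hkeyQ : 8*(n:ℚ)*(Mv:ℚ) + 6 ≤ (Dv:ℚ) := by exact_mod_cast hkey
    have hnQ : (2:ℚ) ≤ (n:ℚ) := by exact_mod_cast hn
    have hZQ : (BadZ.card : ℚ) ≤ 1 := by exact_mod_cast hZ
    have hDQ : (0:ℚ) < (Dv:ℚ) := by exact_mod_cast hDpos
    have hMQ : (0:ℚ) ≤ (Mv:ℚ) := Nat.cast_nonneg _
    -- n ≥ 2 gives Dv/(8n) ≤ Dv/16
    have hfrac : (Dv:ℚ)/(8*n) ≤ (Dv:ℚ)/16 := by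
      apply div_le_div_of_nonneg_left (le_of_lt hDQ) (by norm_num)
      linarith
    have hnne : (n:ℚ) ≠ 0 := by linarith
    have expand : (n:ℚ) * ((Dv:ℚ)/(4*n) + (Dv:ℚ)/(8*n) + 3*(Mv:ℚ))
        = (Dv:ℚ)/4 + (Dv:ℚ)/8 + 3*(n:ℚ)*(Mv:ℚ) := by
      field_simp
    have hMle : (Mv:ℚ) ≤ (n:ℚ)*(Mv:ℚ) := by nlinarith
    rw [expand] at hC
    linarith
  have htotN : Bad.card < Dv := by exact_mod_cast htot
  -- extract a good k
  by_contra hno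
  push_neg at hno
  have hrsub : Finset.range Dv ⊆ Bad := by
    intro k hk
    refine Finset.mem_filter.2 ⟨hk, ?_⟩
    intro ⟨h1, h2, h3⟩
    obtain ⟨v, hv, hgc⟩ := hno k (Finset.mem_range.1 hk) h1 h2
    exact hgc (h3 v hv)
  have := Finset.card_le_card hrsub
  rw [Finset.card_range] at this
  omega

lemma natAbs_bound {H P Dv : ℕ} (hP : 0 < P) (hD : 0 < Dv) (av cv : ℤ) (kv : ℕ)
    (ha : av.natAbs ≤ H) (hc0 : 0 ≤ cv) (hcP : cv < (P:ℤ)) (hk : kv < Dv) :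
    (av + cv + (P:ℤ) * (kv:ℤ)).natAbs ≤ H + P * Dv := by
  have h2 : (P:ℤ) * (kv:ℤ) ≤ (P:ℤ) * (Dv:ℤ) - P := by
    have hk' : (kv:ℤ) ≤ (Dv:ℤ) - 1 := by
      have : (kv:ℤ) < (Dv:ℤ) := by exact_mod_cast hk
      omega
    have := mul_le_mul_of_nonneg_left hk' (by positivity : (0:ℤ) ≤ (P:ℤ))
    linarith
  have h1 : (0:ℤ) ≤ (P:ℤ) * (kv:ℤ) := by positivity
  have hcast : ((P * Dv : ℕ) : ℤ) = (P:ℤ) * (Dv:ℤ) := by push_cast; ring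
  generalize hq : (P:ℤ) * (kv:ℤ) = q at h1 h2 ⊢
  generalize hWz : (P:ℤ) * (Dv:ℤ) = Wz at h2 hcast
  generalize hW : P * Dv = W at hcast ⊢
  omega

lemma L_bound (H : ℕ) : ((L H : ℕ) : ℝ) + 1 ≤ 3 * (1 + Real.log H ^ 2) := by
  rcases le_or_gt H 1 with hH | hH
  · have hL : L H = 1 := by
      interval_cases H <;>
        · show Nat.log 2 _ = 1
          exact Nat.log_eq_of_pow_le_of_lt_pow (by norm_num) (by norm_num)
    rw [hL]
    have := sq_nonneg (Real.log H)
    norm_num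
    nlinarith
  · -- H ≥ 2
    have hpow : 2 ^ (L H) ≤ H + 2 := Nat.pow_log_le_self 2 (by omega)
    have hHH : H + 2 ≤ H ^ 2 := by nlinarith
    have hpowR : (2:ℝ) ^ (L H) ≤ ((H:ℝ)) ^ 2 := by
      have : (2:ℕ) ^ (L H) ≤ H ^ 2 := le_trans hpow hHH
      exact_mod_cast this
    have hHpos : (0:ℝ) < (H:ℝ) := by exact_mod_cast (by omega : 0 < H)
    have hlogle : Real.log ((2:ℝ) ^ (L H)) ≤ Real.log ((H:ℝ)^2) :=
      Real.log_le_log (by positivity) hpowR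
    rw [Real.log_pow, Real.log_pow] at hlogle
    have hx : 0 ≤ Real.log H := Real.log_nonneg (by exact_mod_cast (by omega : 1 ≤ H))
    have hlog2 := Real.log_two_gt_d9
    have hL0 : (0:ℝ) ≤ ((L H : ℕ) : ℝ) := by positivity
    have key : ((L H : ℕ) : ℝ) * 0.6931471803 ≤ 2 * Real.log H := by
      have h1 : ((L H : ℕ) : ℝ) * 0.6931471803 ≤ ((L H : ℕ) : ℝ) * Real.log 2 :=
        mul_le_mul_of_nonneg_left (le_of_lt hlog2) hL0
      push_cast at hlogle ⊢
      linarith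
    nlinarith [sq_nonneg (Real.log H - 1), key, hx]

end PCS


/-- `𝔥*(a) = min_{1 ≤ i ≤ n} max_{1 ≤ j ≤ n, j ≠ i} |a_j|`. -/
noncomputable def vecHeightStar {n : ℕ} (a : Fin n → ℤ) : ℕ :=
  sInf (Set.range fun i : Fin n => (Finset.univ.erase i).sup fun j => (a j).natAbs)


open PCS

/-- Refinement of Theorem 2 of the paper: the bound `L(a) ≪ log² 𝔥(a)` holds with
`𝔥(a)` replaced by the smaller quantity `𝔥*(a)`. -/
theorem pairwise_coprime_shift_star (n : ℕ) (hn : 2 ≤ n) :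
    ∃ C : ℝ, 0 < C ∧
      ∀ a : Fin n → ℤ, ∃ h : Fin n → ℤ,
        (vecHeight h : ℝ) ≤ C * (1 + (Real.log (vecHeightStar a)) ^ 2) ∧
        ∀ i j : Fin n, i < j → Int.gcd (a i + h i) (a j + h j) = 1 := by
  classical
  have hn0 : 0 < n := by omega
  have hPpos : 0 < Pz n := Pz_pos n
  have hP2 : 2 ≤ Pz n := two_le_Pz hn
  refine ⟨2^20 * (n:ℝ)^6 * ((Pz n : ℕ):ℝ)^2 * 3, by positivity, ?_⟩
  intro a
  set H := vecHeightStar a with hHdef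
  set P := Pz n with hPdef
  set Dv := D n H with hDdef
  have hDpos : 0 < Dv := by
    rw [hDdef, D]
    positivity
  -- attainment of the min
  have hne : (Set.range fun i : Fin n =>
      (Finset.univ.erase i).sup fun j => (a j).natAbs).Nonempty :=
    ⟨_, ⟨⟨0, hn0⟩, rfl⟩⟩
  have hmem : H ∈ (Set.range fun i : Fin n =>
      (Finset.univ.erase i).sup fun j => (a j).natAbs) := by
    rw [hHdef, vecHeightStar]
    exact Nat.sInf_mem hne
  obtain ⟨i₀, hi₀⟩ := hmem
  have hbound : ∀ j : Fin n, j ≠ i₀ → (a j).natAbs ≤ H := by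
    intro j hj
    have hle := Finset.le_sup (f := fun j => (a j).natAbs)
      (Finset.mem_erase.2 ⟨hj, Finset.mem_univ j⟩)
    have hi₀' : ((Finset.univ.erase i₀).sup fun j => (a j).natAbs) = H := hi₀
    rw [hi₀'] at hle
    exact hle
  -- permutation making i₀ the last index
  set lst : Fin n := ⟨n-1, by omega⟩ with hlst
  set e : Equiv.Perm (Fin n) := Equiv.swap lst i₀ with he
  have heln : e lst = i₀ := Equiv.swap_apply_left _ _
  -- the CRT-free shifts
  set c : Fin n → ℤ := fun j => (1 - a j) % (P:ℤ) with hc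
  have hPne : ((P:ℤ)) ≠ 0 := by exact_mod_cast hPpos.ne'
  have hPposZ : (0:ℤ) < (P:ℤ) := by exact_mod_cast hPpos
  have hc0 : ∀ j, 0 ≤ c j := fun j => Int.emod_nonneg _ hPne
  have hcP : ∀ j, c j < (P:ℤ) := fun j => Int.emod_lt_of_pos _ hPposZ
  have hAc : ∀ j, (P:ℤ) ∣ (a j + c j) - 1 := by
    intro j
    have hdef : c j = (1 - a j) - (P:ℤ) * ((1 - a j) / (P:ℤ)) := Int.emod_def _ _
    refine ⟨-((1 - a j) / (P:ℤ)), ?_⟩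
    rw [hdef]; ring
  set A : Fin n → ℤ := fun i => a (e i) + c (e i) with hA
  have hA1 : ∀ i, (P:ℤ) ∣ A i - 1 := fun i => hAc (e i)
  have hAbound : ∀ i : Fin n, (i:ℕ) < n - 1 → (a (e i)).natAbs ≤ H := by
    intro i hi
    apply hbound
    intro hcon
    have hieq : i = lst := e.injective (by rw [hcon, heln])
    rw [hieq] at hi
    simp only [hlst] at hi
    omega
  -- the inductive construction
  have main : ∀ t, t ≤ n → ∃ k : Fin n → ℕ,
      ∀ i : Fin n, (i:ℕ) < t →
        k i < Dv ∧ A i + (P:ℤ) * (k i : ℤ) ≠ 0 ∧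
        ((P:ℤ) ∣ (A i + (P:ℤ) * (k i:ℤ)) - 1) ∧ Good n H (A i + (P:ℤ) * (k i:ℤ)) ∧
        ∀ j : Fin n, (j:ℕ) < (i:ℕ) →
          Int.gcd (A i + (P:ℤ)*(k i:ℤ)) (A j + (P:ℤ)*(k j:ℤ)) = 1 := by
    intro t
    induction t with
    | zero => exact fun _ => ⟨fun _ => 0, fun i hi => absurd hi (by omega)⟩
    | succ t ih =>
      intro ht
      obtain ⟨k, hk⟩ := ih (by omega)
      have htn : t < n := by omega
      set it : Fin n := ⟨t, htn⟩ with hit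
      set s : Finset ℤ := (Finset.univ.filter (fun j : Fin n => (j:ℕ) < t)).image
        (fun j => A j + (P:ℤ) * (k j : ℤ)) with hs
      have hscard : s.card ≤ n := by
        apply le_trans Finset.card_image_le
        apply le_trans (Finset.card_filter_le _ _)
        simp
      have hsprop : ∀ v ∈ s, v ≠ 0 ∧ v.natAbs ≤ H + P * Dv ∧ ((P:ℤ) ∣ v - 1)
          ∧ Good n H v := by
        intro v hv
        obtain ⟨j, hj, rfl⟩ := Finset.mem_image.1 hv
        have hjt : (j:ℕ) < t := (Finset.mem_filter.1 hj).2
        obtain ⟨hk1, hk2, hk3, hk4, _⟩ := hk j hjt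
        refine ⟨hk2, ?_, hk3, hk4⟩
        have hja : (a (e j)).natAbs ≤ H := hAbound j (by omega)
        exact natAbs_bound hPpos hDpos _ _ _ hja (hc0 _) (hcP _) hk1
      obtain ⟨knew, hknew1, hknew2, hknew3, hknew4⟩ :=
        exists_good_step n H hn (A it) (hA1 it) s hscard hsprop
      refine ⟨Function.update k it knew, ?_⟩
      intro i hi
      by_cases hitlt : (i:ℕ) < t
      · have hine : i ≠ it := by
          intro hcon; rw [hcon] at hitlt; simp only [hit] at hitlt; omega
        rw [Function.update_of_ne hine]
        obtain ⟨h1,h2,h3,h4,h5⟩ := hk i hitlt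
        refine ⟨h1,h2,h3,h4, ?_⟩
        intro j hj
        have hjne : j ≠ it := by
          intro hcon; rw [hcon] at hj; simp only [hit] at hj; omega
        rw [Function.update_of_ne hjne]
        exact h5 j hj
      · have hieq : i = it := Fin.ext (by simp only [hit]; omega)
        subst hieq
        rw [Function.update_self]
        refine ⟨hknew1, hknew2, ?_, hknew3, ?_⟩
        · obtain ⟨w, hw⟩ := hA1 it
          exact ⟨w + (knew:ℤ), by rw [show A it + (P:ℤ)*(knew:ℤ) - 1
            = (A it - 1) + (P:ℤ)*(knew:ℤ) by ring, hw]; ring⟩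
        · intro j hj
          have hjt : (j:ℕ) < t := hj
          have hjne : j ≠ it := by
            intro hcon; rw [hcon] at hjt; simp only [hit] at hjt; omega
          rw [Function.update_of_ne hjne]
          apply hknew4
          exact Finset.mem_image.2 ⟨j, Finset.mem_filter.2 ⟨Finset.mem_univ j, hjt⟩, rfl⟩
  obtain ⟨k, hk⟩ := main n le_rfl
  set hv : Fin n → ℤ := fun i => c i + (P:ℤ) * (k (e.symm i) : ℤ) with hhv
  have hval : ∀ i, a i + hv i = A (e.symm i) + (P:ℤ)*(k (e.symm i):ℤ) := by
    intro i
    simp only [hhv, hA, Equiv.apply_symm_apply]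
    ring
  refine ⟨hv, ?_, ?_⟩
  · -- height bound
    have hsup : vecHeight hv ≤ P * Dv := by
      rw [vecHeight]
      apply Finset.sup_le
      intro i _
      have hb := natAbs_bound (H := 0) hPpos hDpos 0 (c i) (k (e.symm i))
        (by simp) (hc0 i) (hcP i) (hk (e.symm i) (e.symm i).isLt).1
      simpa using hb
    have hsupR : (vecHeight hv : ℝ) ≤ ((P * Dv : ℕ) : ℝ) := by exact_mod_cast hsup
    apply le_trans hsupR
    have hexp : ((P * Dv : ℕ) : ℝ) = 2^20 * (n:ℝ)^6 * ((P:ℕ):ℝ)^2 * ((L H : ℕ) + 1 : ℝ) := by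
      rw [hDdef, D]
      push_cast
      ring
    rw [hexp]
    have hLb := L_bound H
    have hfacpos : (0:ℝ) < 2^20 * (n:ℝ)^6 * ((P:ℕ):ℝ)^2 := by positivity
    calc 2^20 * (n:ℝ)^6 * ((P:ℕ):ℝ)^2 * ((L H : ℕ) + 1 : ℝ)
        ≤ 2^20 * (n:ℝ)^6 * ((P:ℕ):ℝ)^2 * (3 * (1 + Real.log H ^ 2)) := by
          apply mul_le_mul_of_nonneg_left hLb (le_of_lt hfacpos)
      _ = 2^20 * (n:ℝ)^6 * ((P:ℕ):ℝ)^2 * 3 * (1 + Real.log H ^ 2) := by ring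
  · -- pairwise coprimality
    intro i j hij
    have hne2 : e.symm i ≠ e.symm j := fun hcon => (ne_of_lt hij) (e.symm.injective hcon)
    have hnev : ((e.symm i : Fin n) : ℕ) ≠ ((e.symm j : Fin n) : ℕ) :=
      fun hcon => hne2 (Fin.ext hcon)
    rw [hval i, hval j]
    rcases Nat.lt_or_ge ((e.symm i : Fin n) : ℕ) ((e.symm j : Fin n) : ℕ) with hxy | hxy
    · have hg := (hk (e.symm j) (e.symm j).isLt).2.2.2.2 (e.symm i) hxy
      rw [Int.gcd_comm]
      exact hg
    · have hyx : ((e.symm j : Fin n) : ℕ) < ((e.symm i : Fin n) : ℕ) := by omega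
      exact (hk (e.symm i) (e.symm i).isLt).2.2.2.2 (e.symm j) hyx
end

section
/- For every integer n ≥ 1 there exist a constant c > 0 and infinitely many vectors a ∈ ℤ^n (i.e., for every M there is such an a with 𝔥(a) ≥ M) with the following property: every vector h = (h_1, …, h_n) ∈ ℤ^n with gcd(a_1 + h_1, …, a_n + h_n) = 1 satisfies 𝔥(h) ≥ c · (log 𝔥(a) / log log 𝔥(a))^{1/n}. Equivalently, ℓ(a) ≫ (log 𝔥(a) / log log 𝔥(a))^{1/n} for infinitely many a ∈ ℤ^n. -/
lemma aux_two_sq_le (k : ℕ) (hk : 4 ≤ k) : 2 * k ^ 2 + 1 ≤ 4 ^ (k - 1) := by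
  induction k with
  | zero => omega
  | succ k ih =>
    rcases Nat.lt_or_ge k 4 with h | h
    · interval_cases k <;> simp_all
    · have h1 := ih (by omega)
      have h2 : k + 1 - 1 = (k - 1) + 1 := by omega
      have h3 : (4:ℕ) ^ (k - 1 + 1) = 4 ^ (k-1) * 4 := pow_succ 4 (k-1)
      have h4 : 2 * (k+1) ^ 2 + 1 ≤ (2 * k ^ 2 + 1) * 4 := by nlinarith
      rw [h2, h3]
      exact h4.trans (Nat.mul_le_mul_right 4 h1)

open Nat in
lemma aux_centralBinom_le (N : ℕ) (hN : 0 < N) :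
    centralBinom N ≤ (2 * N) ^ (Nat.count Nat.Prime (2 * N + 1)) := by
  have h0 : centralBinom N ≠ 0 := (centralBinom_pos N).ne'
  conv_lhs => rw [← Nat.factorization_prod_pow_eq_self h0]
  rw [Finsupp.prod]
  have hsub : (centralBinom N).factorization.support ⊆ Nat.primesBelow (2 * N + 1) := by
    intro p hp
    rw [Nat.support_factorization, Nat.mem_primeFactors] at hp
    obtain ⟨hprime, hdvd, -⟩ := hp
    have hple : p ^ (centralBinom N).factorization p ≤ 2 * N := by
      have := Nat.pow_factorization_choose_le (p := p) (n := 2 * N) (k := N) (by omega)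
      simpa [centralBinom] using this
    have hpos : 0 < (centralBinom N).factorization p :=
      hprime.factorization_pos_of_dvd h0 hdvd
    have : p ≤ p ^ (centralBinom N).factorization p :=
      Nat.le_self_pow (by omega) p
    rw [Nat.mem_primesBelow]
    exact ⟨by omega, hprime⟩
  calc ∏ p ∈ (centralBinom N).factorization.support, p ^ (centralBinom N).factorization p
      ≤ ∏ _p ∈ (centralBinom N).factorization.support, 2 * N := by
        apply Finset.prod_le_prod'
        intro p hp
        have := Nat.pow_factorization_choose_le (p := p) (n := 2 * N) (k := N) (by omega)
        simpa [centralBinom] using this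
    _ = (2 * N) ^ (centralBinom N).factorization.support.card := by
        rw [Finset.prod_const]
    _ ≤ (2 * N) ^ (Nat.count Nat.Prime (2 * N + 1)) := by
        apply Nat.pow_le_pow_right (by omega)
        have := Finset.card_le_card hsub
        rwa [Nat.primesBelow_card_eq_primeCounting'] at this

lemma aux_count_lb (k : ℕ) (hk : 4 ≤ k) : k < Nat.count Nat.Prime (2 * k ^ 2 + 1) := by
  by_contra hcon
  push_neg at hcon
  have h1 : 4 ^ (k ^ 2) ≤ (2 * k ^ 2 + 1) * Nat.centralBinom (k ^ 2) :=
    Nat.four_pow_le_two_mul_add_one_mul_central_binom (k ^ 2)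
  have h2 : Nat.centralBinom (k ^ 2) ≤ (2 * k ^ 2) ^ (Nat.count Nat.Prime (2 * k ^ 2 + 1)) :=
    aux_centralBinom_le (k ^ 2) (by positivity)
  have h3 : (2 * k ^ 2) ^ (Nat.count Nat.Prime (2 * k ^ 2 + 1)) ≤ (2 * k ^ 2 + 1) ^ k :=
    (Nat.pow_le_pow_left (by omega) _).trans (Nat.pow_le_pow_right (by omega) hcon)
  have h4 : 4 ^ (k ^ 2) ≤ (2 * k ^ 2 + 1) ^ (k + 1) := by
    calc 4 ^ (k ^ 2) ≤ (2 * k ^ 2 + 1) * (2 * k ^ 2 + 1) ^ k :=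
          h1.trans (Nat.mul_le_mul_left _ (h2.trans h3))
      _ = (2 * k ^ 2 + 1) ^ (k + 1) := (pow_succ' _ _).symm
  have h5 : (2 * k ^ 2 + 1 : ℕ) ≤ 4 ^ (k - 1) := aux_two_sq_le k hk
  have h6 : ((2 * k ^ 2 + 1) : ℕ) ^ (k + 1) ≤ (4 ^ (k - 1)) ^ (k + 1) :=
    Nat.pow_le_pow_left h5 _
  have h7 : ((4:ℕ) ^ (k - 1)) ^ (k + 1) = 4 ^ ((k - 1) * (k + 1)) := (pow_mul 4 _ _).symm
  have h8 : (k - 1) * (k + 1) < k ^ 2 := by nlinarith [Nat.sub_le k 1, Nat.sub_add_cancel (by omega : 1 ≤ k)]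
  have h9 : (4:ℕ) ^ ((k - 1) * (k + 1)) < 4 ^ (k ^ 2) := Nat.pow_lt_pow_right (by omega) h8
  omega

lemma aux_nth_prime_le (k : ℕ) : Nat.nth Nat.Prime k ≤ 2 * (k + 2) ^ 2 := by
  have h : k < Nat.count Nat.Prime (2 * (k + 2) ^ 2 + 1) := by
    rcases Nat.lt_or_ge k 2 with h | h
    · interval_cases k
      · show 0 < Nat.count Nat.Prime 9
        decide
      · show 1 < Nat.count Nat.Prime 19
        decide
    · have := aux_count_lb (k + 2) (by omega)
      omega
  have := Nat.nth_lt_of_lt_count h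
  omega


lemma aux_crt {α : Type*} [DecidableEq α] (s : Finset α) (q : α → ℕ) (r : α → ℤ)
    (hcop : ∀ a ∈ s, ∀ b ∈ s, a ≠ b → Nat.Coprime (q a) (q b)) :
    ∃ x : ℤ, ∀ a ∈ s, (q a : ℤ) ∣ x - r a := by
  induction s using Finset.induction with
  | empty => exact ⟨0, by simp⟩
  | @insert a s ha ih =>
    obtain ⟨x, hx⟩ := ih fun c hc d hd hcd =>
      hcop c (Finset.mem_insert_of_mem hc) d (Finset.mem_insert_of_mem hd) hcd
    have hQ : IsCoprime (∏ b ∈ s, (q b : ℤ)) (q a : ℤ) := by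
      apply IsCoprime.prod_left
      intro b hb
      rw [Int.isCoprime_iff_gcd_eq_one]
      exact hcop b (Finset.mem_insert_of_mem hb) a (Finset.mem_insert_self a s)
        (fun h => ha (h ▸ hb))
    obtain ⟨u, v, huv⟩ := hQ
    set Q : ℤ := ∏ b ∈ s, (q b : ℤ) with hQdef
    refine ⟨x + (r a - x) * u * Q, ?_⟩
    intro c hc
    rcases Finset.mem_insert.mp hc with rfl | hcs
    · have : x + (r c - x) * u * Q - r c = (x - r c) * (v * (q c : ℤ)) := by
        have h1 : u * Q = 1 - v * (q c : ℤ) := by linarith [huv]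
        calc x + (r c - x) * u * Q - r c = (x - r c) * (1 - u * Q) := by ring
          _ = (x - r c) * (v * (q c : ℤ)) := by rw [h1]; ring
      rw [this]
      exact Dvd.dvd.mul_left (dvd_mul_left _ _) _
    · have h1 : (q c : ℤ) ∣ x - r c := hx c hcs
      have h2 : (q c : ℤ) ∣ Q := Finset.dvd_prod_of_mem _ hcs
      have : x + (r a - x) * u * Q - r c = (x - r c) + ((r a - x) * u) * Q := by ring
      rw [this]
      exact dvd_add h1 (Dvd.dvd.mul_left h2 _)


lemma aux_real (n K m H hh : ℕ) (hn : 1 ≤ n) (hm : m = (2*K+1)^n) (hm7 : 7 ≤ m)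
    (hH1 : 2^m ≤ H) (hH2 : H ≤ 2 * (m+2)^(3*m)) (hhh : K + 1 ≤ hh) :
    (1/42 : ℝ) * (Real.log H / Real.log (Real.log H)) ^ ((1:ℝ)/n) ≤ (hh : ℝ) := by
  have hmR : (7:ℝ) ≤ (m:ℝ) := by exact_mod_cast hm7
  set L : ℝ := Real.log (m:ℝ) with hL
  have hL1 : 1 ≤ L := by
    rw [hL, Real.le_log_iff_exp_le (by positivity)]
    calc Real.exp 1 ≤ 2.7182818286 := Real.exp_one_lt_d9.le
      _ ≤ (m:ℝ) := by linarith
  have hlog2 : (0.6931471803 : ℝ) < Real.log 2 := Real.log_two_gt_d9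
  have hlog2' : Real.log 2 < 1 := by
    have := Real.log_two_lt_d9
    linarith
  have hL2 : 2 * Real.log 2 ≤ L := by
    have h4 : (4:ℝ) ≤ (m:ℝ) := by linarith
    have : Real.log 4 ≤ L := Real.log_le_log (by norm_num) h4
    have h42 : Real.log 4 = 2 * Real.log 2 := by
      rw [show (4:ℝ) = 2^2 by norm_num, Real.log_pow]; push_cast; ring
    linarith
  set lg : ℝ := Real.log (H:ℝ) with hlg
  have hHpos : (0:ℝ) < (H:ℝ) := by
    have : 0 < H := lt_of_lt_of_le (Nat.two_pow_pos m) hH1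
    exact_mod_cast this
  have hlg_lb : (m:ℝ) * Real.log 2 ≤ lg := by
    have hc : ((2:ℝ))^m ≤ (H:ℝ) := by exact_mod_cast hH1
    have := Real.log_le_log (by positivity) hc
    rwa [Real.log_pow] at this
  have hlg_lb2 : (m:ℝ)/2 ≤ lg := by nlinarith
  have hlg_pos : 0 < lg := by nlinarith
  have hlg_ub : lg ≤ Real.log 2 + 3*(m:ℝ)*Real.log ((m:ℝ)+2) := by
    have hc : (H:ℝ) ≤ 2 * ((m:ℝ)+2)^(3*m) := by exact_mod_cast hH2
    have h1 := Real.log_le_log hHpos hc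
    rw [Real.log_mul (by norm_num) (by positivity), Real.log_pow] at h1
    push_cast at h1
    linarith
  have hlogm2 : Real.log ((m:ℝ)+2) ≤ 2*L := by
    have hmm : (m:ℝ)+2 ≤ (m:ℝ)^2 := by nlinarith
    have := Real.log_le_log (by positivity) hmm
    rw [Real.log_pow] at this
    push_cast at this
    linarith
  have hlg_ub2 : lg ≤ 7*(m:ℝ)*L := by nlinarith
  have hllg_lb : L/2 ≤ Real.log lg := by
    have h1 : Real.log ((m:ℝ)/2) ≤ Real.log lg :=
      Real.log_le_log (by positivity) hlg_lb2
    rw [Real.log_div (by positivity) (by norm_num)] at h1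
    linarith
  have hllg_pos : 0 < Real.log lg := by linarith
  have hratio : lg / Real.log lg ≤ 14 * (m:ℝ) := by
    have s1 : lg / Real.log lg ≤ lg / (L/2) :=
      div_le_div_of_nonneg_left hlg_pos.le (by linarith) hllg_lb
    have s2 : lg / (L/2) ≤ (7*(m:ℝ)*L) / (L/2) := by
      apply div_le_div_of_nonneg_right hlg_ub2 -- maybe wrong name
      linarith
    have s3 : (7*(m:ℝ)*L) / (L/2) = 14 * (m:ℝ) := by
      field_simp
      ring
    linarith
  have hratio_nonneg : 0 ≤ lg / Real.log lg := by positivity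
  have h14 : 14 * (m:ℝ) ≤ ((42*(K+1) : ℕ) : ℝ)^n := by
    have hnat : 14 * m ≤ (42*(K+1))^n := by
      calc 14 * m = 14 * (2*K+1)^n := by rw [hm]
        _ ≤ 14 * (3*(K+1))^n := Nat.mul_le_mul_left _ (Nat.pow_le_pow_left (by omega) n)
        _ ≤ 14^n * (3*(K+1))^n := Nat.mul_le_mul_right _ (Nat.le_self_pow (by omega) 14)
        _ = (14*(3*(K+1)))^n := (mul_pow _ _ _).symm
        _ = (42*(K+1))^n := by ring_nf
    exact_mod_cast hnat
  have hrpow : (lg / Real.log lg) ^ ((1:ℝ)/n) ≤ ((42*(K+1):ℕ):ℝ) := by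
    have step := Real.rpow_le_rpow (z := (1:ℝ)/n) hratio_nonneg (le_trans hratio h14) (by positivity)
    have heq : (((42*(K+1):ℕ):ℝ)^n) ^ ((1:ℝ)/n) = ((42*(K+1):ℕ):ℝ) := by
      rw [← Real.rpow_natCast ((42*(K+1):ℕ):ℝ) n, ← Real.rpow_mul (by positivity)]
      have : (n:ℝ) * ((1:ℝ)/n) = 1 := by
        field_simp
      rw [this, Real.rpow_one]
    rwa [heq] at step
  have hfin : ((42*(K+1):ℕ):ℝ) = 42*((K:ℝ)+1) := by push_cast; ring
  have hhhR : (K:ℝ) + 1 ≤ (hh:ℝ) := by exact_mod_cast hhh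
  calc (1/42 : ℝ) * (lg / Real.log lg) ^ ((1:ℝ)/n)
      ≤ (1/42) * (42*((K:ℝ)+1)) := by
        apply mul_le_mul_of_nonneg_left _ (by norm_num)
        rw [← hfin]; exact hrpow
    _ = (K:ℝ) + 1 := by ring
    _ ≤ (hh:ℝ) := hhhR

/-- Theorem 3 of the paper: for every `n ≥ 1` there exist `c > 0` and infinitely many
`a ∈ ℤⁿ` such that every `h ∈ ℤⁿ` with `gcd(a₁+h₁, …, aₙ+hₙ) = 1` satisfies
`𝔥(h) ≥ c·(log 𝔥(a) / log log 𝔥(a))^{1/n}`; i.e.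
`ℓ(a) ≫ (log 𝔥(a)/log log 𝔥(a))^{1/n}` for infinitely many `a`. -/
theorem ell_lower_bound (n : ℕ) (hn : 1 ≤ n) :
    ∃ c : ℝ, 0 < c ∧
      ∀ M : ℕ, ∃ a : Fin n → ℤ, M ≤ vecHeight a ∧
        ∀ h : Fin n → ℤ, (Finset.univ.gcd fun i => a i + h i) = 1 →
          c * (Real.log (vecHeight a) / Real.log (Real.log (vecHeight a))) ^ ((1 : ℝ) / n)
            ≤ (vecHeight h : ℝ) := by
  refine ⟨1/42, by norm_num, ?_⟩
  intro M
  classical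
  set K : ℕ := M + 3 with hK
  set m : ℕ := (2*K+1)^n with hm
  have hm7 : 7 ≤ m := by
    calc 7 ≤ 2*K+1 := by omega
      _ ≤ (2*K+1)^n := Nat.le_self_pow (by omega) _
  set P : ℕ := ∏ k ∈ Finset.range m, Nat.nth Nat.Prime k with hP
  have hPlb : 2^m ≤ P := by
    rw [hP]
    calc 2^m = ∏ _k ∈ Finset.range m, 2 := by rw [Finset.prod_const, Finset.card_range]
      _ ≤ ∏ k ∈ Finset.range m, Nat.nth Nat.Prime k :=
          Finset.prod_le_prod' fun k _ => (Nat.prime_nth_prime k).two_le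
  have hPub : P ≤ (m+2)^(3*m) := by
    rw [hP]
    calc ∏ k ∈ Finset.range m, Nat.nth Nat.Prime k
        ≤ ∏ _k ∈ Finset.range m, (m+2)^3 := by
          apply Finset.prod_le_prod'
          intro k hk
          rw [Finset.mem_range] at hk
          have hkm : k + 2 ≤ m + 2 := by omega
          calc Nat.nth Nat.Prime k ≤ 2*(k+2)^2 := aux_nth_prime_le k
            _ ≤ 2*(m+2)^2 := by nlinarith [hkm]
            _ ≤ (m+2)^3 := by nlinarith [hm7]
      _ = ((m+2)^3)^m := by rw [Finset.prod_const, Finset.card_range]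
      _ = (m+2)^(3*m) := by rw [← pow_mul, Nat.mul_comm]
  have hPpos : 0 < P := lt_of_lt_of_le (Nat.two_pow_pos m) hPlb
  have hMP : M < P := by
    have h1 : 2*K+1 ≤ m := Nat.le_self_pow (by omega) _
    have h2 : m < 2^m := Nat.lt_two_pow_self (n := m)
    omega
  -- the box
  set S : Finset (Fin n → ℤ) :=
    Fintype.piFinset (fun _ : Fin n => Finset.Icc (-(K:ℤ)) (K:ℤ)) with hS
  have hScard : Fintype.card {h // h ∈ S} = m := by
    rw [Fintype.card_coe, hS, Fintype.card_piFinset]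
    have : (Finset.Icc (-(K:ℤ)) (K:ℤ)).card = 2*K+1 := by
      rw [Int.card_Icc]
      omega
    simp [this, hm]
  set e : {h // h ∈ S} ≃ Fin (Fintype.card {h // h ∈ S}) := Fintype.equivFin _ with he
  set q : {h // h ∈ S} → ℕ := fun z => Nat.nth Nat.Prime (e z) with hq
  have hqprime : ∀ z, (q z).Prime := fun z => Nat.prime_nth_prime _
  have hqP : ∀ z, q z ∣ P := by
    intro z
    rw [hP, hq]
    apply Finset.dvd_prod_of_mem
    rw [Finset.mem_range]
    have := (e z).isLt
    omega
  have hcop : ∀ z ∈ (Finset.univ : Finset {h // h ∈ S}), ∀ w ∈ (Finset.univ : Finset {h // h ∈ S}),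
      z ≠ w → Nat.Coprime (q z) (q w) := by
    intro z _ w _ hzw
    apply (Nat.coprime_primes (hqprime z) (hqprime w)).mpr
    intro hqq
    apply hzw
    have := Nat.nth_injective Nat.infinite_setOf_prime hqq
    exact e.injective (Fin.ext (by exact_mod_cast this))
  -- CRT per coordinate
  have hcrt : ∀ i : Fin n, ∃ x : ℤ, ∀ z ∈ (Finset.univ : Finset {h // h ∈ S}),
      (q z : ℤ) ∣ x - (-(z.1 i)) := fun i => aux_crt _ q _ hcop
  choose x hx using hcrt
  have hnz : n ≠ 0 := by omega
  set i0 : Fin n := ⟨0, by omega⟩ with hi0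
  set a : Fin n → ℤ := fun i => x i % (P:ℤ) + if i = i0 then (P:ℤ) else 0 with ha
  have hPZ : (0:ℤ) < (P:ℤ) := by exact_mod_cast hPpos
  have ha' : ∀ i, a i = x i % (P:ℤ) + if i = i0 then (P:ℤ) else 0 := fun i => rfl
  have harange : ∀ i, 0 ≤ a i ∧ a i < 2*(P:ℤ) := by
    intro i
    have h1 : 0 ≤ x i % (P:ℤ) := Int.emod_nonneg _ (by omega)
    have h2 : x i % (P:ℤ) < (P:ℤ) := Int.emod_lt_of_pos _ hPZ
    rw [ha' i]
    by_cases hi : i = i0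
    · rw [if_pos hi]; omega
    · rw [if_neg hi]; omega
  have hai0 : (P:ℤ) ≤ a i0 := by
    have h1 : 0 ≤ x i0 % (P:ℤ) := Int.emod_nonneg _ (by omega)
    rw [ha' i0, if_pos rfl]; omega
  -- congruences: q z divides a i + z.1 i
  have hcong : ∀ (z : {h // h ∈ S}) (i : Fin n), (q z : ℤ) ∣ a i + z.1 i := by
    intro z i
    have h1 : (q z : ℤ) ∣ x i + z.1 i := by
      have := hx i z (Finset.mem_univ z)
      simpa [sub_neg_eq_add] using this
    have h2 : (q z : ℤ) ∣ (P:ℤ) := Int.natCast_dvd_natCast.mpr (hqP z)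
    have h3 : a i + z.1 i = (x i + z.1 i) - (P:ℤ) * (x i / (P:ℤ)) + (if i = i0 then (P:ℤ) else 0) := by
      rw [ha' i, Int.emod_def]
      ring
    rw [h3]
    apply dvd_add
    · exact dvd_sub h1 (Dvd.dvd.mul_right h2 _)
    · by_cases hi : i = i0 <;> simp [hi, h2]
  -- height of a
  set H : ℕ := vecHeight a with hH
  have hH1 : P ≤ H := by
    have h1 : P ≤ (a i0).natAbs := by
      have := hai0
      omega
    exact le_trans h1 (Finset.le_sup (f := fun j => (a j).natAbs) (Finset.mem_univ i0))
  have hH2 : H ≤ 2*P := by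
    have : Finset.univ.sup (fun i => (a i).natAbs) ≤ 2*P :=
      Finset.sup_le fun i _ => by have := harange i; omega
    exact this
  refine ⟨a, by omega, ?_⟩
  intro h hgcd
  -- step 1 : K < vecHeight h
  have hKh : K + 1 ≤ vecHeight h := by
    by_contra hcon
    push_neg at hcon
    have hmem : h ∈ S := by
      rw [hS, Fintype.mem_piFinset]
      intro i
      rw [Finset.mem_Icc]
      have h1 : (h i).natAbs ≤ vecHeight h := by
        exact Finset.le_sup (f := fun j => (h j).natAbs) (Finset.mem_univ i)
      omega
    set z : {h // h ∈ S} := ⟨h, hmem⟩ with hz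
    have hdvd : (q z : ℤ) ∣ Finset.univ.gcd fun i => a i + h i :=
      Finset.dvd_gcd fun i _ => hcong z i
    rw [hgcd] at hdvd
    have h2 : (q z : ℤ) ≤ 1 := Int.le_of_dvd one_pos hdvd
    have h3 : 2 ≤ q z := (hqprime z).two_le
    have : (2:ℤ) ≤ (q z : ℤ) := by exact_mod_cast h3
    omega
  -- step 2 : real analysis
  exact aux_real n K m H (vecHeight h) hn hm hm7 (le_trans hPlb hH1)
    (le_trans hH2 (by have := hPub; omega)) hKh
end

section
/- For every integer n ≥ 1 there is a constant C > 0, depending only on n, such that for every sufficiently large integer H there exists a vector a = (a_1, …, a_n) of positive integers with the two properties: (i) for every h = (h_1, …, h_n) ∈ ℤ^n with 𝔥(h) ≤ H one has gcd(a_1 + h_1, …, a_n + h_n) > 1; and (ii) 𝔥(a) ≤ exp(C · H^n · log H). -/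
open Finset in
lemma cheby (m : ℕ) (hm : 2 ≤ m) : m ≤ ((2 * m ^ 3 + 1).primesBelow).card := by
  by_contra hcon
  push_neg at hcon
  set N := m ^ 3 with hN
  have hN4 : 4 ≤ N := le_trans (by norm_num) (Nat.pow_le_pow_left hm 3)
  have h1 : 4 ^ N < N * Nat.centralBinom N := Nat.four_pow_lt_mul_centralBinom N hN4
  have hprod : ∏ p ∈ (2 * N + 1).primesBelow, p ^ (Nat.centralBinom N).factorization p
      = Nat.centralBinom N := by
    conv_rhs => rw [← Nat.prod_pow_factorization_centralBinom N]
    apply Finset.prod_subset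
    · intro p hp
      exact Finset.mem_range.mpr (Nat.mem_primesBelow.mp hp).1
    · intro p hp hnp
      have : ¬ p.Prime := fun hpr => hnp (Nat.mem_primesBelow.mpr ⟨Finset.mem_range.mp hp, hpr⟩)
      rw [Nat.factorization_eq_zero_of_not_prime _ this, pow_zero]
  have h2 : Nat.centralBinom N ≤ (2 * N) ^ ((2 * N + 1).primesBelow).card := by
    rw [← hprod]
    apply Finset.prod_le_pow_card
    intro p hp
    show p ^ ((2 * N).choose N).factorization p ≤ 2 * N
    exact Nat.pow_factorization_choose_le (by positivity)
  have hcard : ((2 * N + 1).primesBelow).card + 1 ≤ m := hcon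
  have h3 : 4 ^ N < (2 * N) ^ m := by
    calc 4 ^ N < N * Nat.centralBinom N := h1
    _ ≤ N * (2 * N) ^ ((2 * N + 1).primesBelow).card := Nat.mul_le_mul_left _ h2
    _ ≤ (2 * N) * (2 * N) ^ ((2 * N + 1).primesBelow).card := Nat.mul_le_mul_right _ (by omega)
    _ = (2 * N) ^ (((2 * N + 1).primesBelow).card + 1) := (pow_succ' _ _).symm
    _ ≤ (2 * N) ^ m := Nat.pow_le_pow_right (by positivity) hcard
  have h4 : (2 * N) ^ m ≤ 2 ^ (4 * m ^ 2) := by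
    calc (2 * N) ^ m ≤ (m ^ 4) ^ m := by
          apply Nat.pow_le_pow_left
          calc 2 * N = 2 * m ^ 3 := rfl
          _ ≤ m * m ^ 3 := Nat.mul_le_mul_right _ hm
          _ = m ^ 4 := by ring
    _ ≤ ((2 ^ m) ^ 4) ^ m := Nat.pow_le_pow_left (Nat.pow_le_pow_left (Nat.lt_two_pow_self (n := m)).le 4) m
    _ = 2 ^ (4 * m ^ 2) := by rw [← pow_mul, ← pow_mul]; ring_nf
  have h5 : 2 ^ (2 * N) < 2 ^ (4 * m ^ 2) := by
    calc 2 ^ (2 * N) = 4 ^ N := by rw [pow_mul]; norm_num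
    _ < (2 * N) ^ m := h3
    _ ≤ 2 ^ (4 * m ^ 2) := h4
  have h6 : 2 * N < 4 * m ^ 2 := (Nat.pow_lt_pow_iff_right (by norm_num)).mp h5
  nlinarith [hN.ge, sq_nonneg m]



/-- Explicit form of Theorem 3 of the paper: for every `n ≥ 1` there is `C > 0`
(depending only on `n`) such that for every sufficiently large integer `H` there is
a vector `a` of positive integers with: (i) for every `h ∈ ℤⁿ` with `𝔥(h) ≤ H` one
has `gcd(a₁+h₁, …, aₙ+hₙ) > 1`; and (ii) `𝔥(a) ≤ exp(C·Hⁿ·log H)`. -/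
theorem crt_construction (n : ℕ) (hn : 1 ≤ n) :
    ∃ C : ℝ, 0 < C ∧ ∃ H₀ : ℕ, ∀ H : ℕ, H₀ ≤ H →
      ∃ a : Fin n → ℤ, (∀ i, 0 < a i) ∧
        (∀ h : Fin n → ℤ, vecHeight h ≤ H →
          1 < Finset.univ.gcd fun i => a i + h i) ∧
        (vecHeight a : ℝ) ≤ Real.exp (C * (H : ℝ) ^ n * Real.log H) := by
  classical
  refine ⟨8 * n * 3 ^ n + 1, by positivity, 3, fun H hH => ?_⟩
  have hH1 : (1 : ℕ) ≤ H := le_trans (by norm_num) hH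
  set m : ℕ := (2 * H + 1) ^ n with hm
  have hm2 : 2 ≤ m := le_trans (by omega) (le_self_pow (by omega) (by omega))
  set T : Finset (Fin n → ℤ) := Fintype.piFinset (fun _ => Finset.Icc (-(H : ℤ)) (H : ℤ)) with hT
  have hTcard : T.card = m := by
    rw [hT, Fintype.card_piFinset]
    rw [hm]
    rw [Finset.prod_const, Finset.card_univ, Fintype.card_fin]
    congr 1
    rw [Int.card_Icc]
    omega
  obtain ⟨S, hS_sub, hScard⟩ := Finset.exists_subset_card_eq (cheby m hm2)
  have e : (T : Type _) ≃ S := Finset.equivOfCardEq (hTcard.trans hScard.symm)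
  set prm : (Fin n → ℤ) → ℕ := fun t => if h : t ∈ T then (e ⟨t, h⟩ : ℕ) else 1 with hprm
  have prm_mem : ∀ t (h : t ∈ T), prm t ∈ (2 * m ^ 3 + 1).primesBelow := by
    intro t h
    have : prm t = (e ⟨t, h⟩ : ℕ) := dif_pos h
    rw [this]
    exact hS_sub (e ⟨t, h⟩).2
  have prm_prime : ∀ t ∈ T, (prm t).Prime := fun t h =>
    (Nat.mem_primesBelow.mp (prm_mem t h)).2
  have prm_lt : ∀ t ∈ T, prm t ≤ 2 * m ^ 3 := fun t h => by
    have := (Nat.mem_primesBelow.mp (prm_mem t h)).1; omega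
  have prm_inj : ∀ t ∈ T, ∀ t' ∈ T, prm t = prm t' → t = t' := by
    intro t h t' h' heq
    simp only [hprm] at heq
    rw [dif_pos h, dif_pos h'] at heq
    have := e.injective (Subtype.ext heq)
    simpa using congrArg Subtype.val this
  have prm_cop : Set.Pairwise (T : Set (Fin n → ℤ)) (Function.onFun Nat.Coprime prm) := by
    intro t ht t' ht' hne
    exact (Nat.coprime_primes (prm_prime t ht) (prm_prime t' ht')).mpr
      (fun hpq => hne (prm_inj t ht t' ht' hpq))
  have prm_ne : ∀ t ∈ T, prm t ≠ 0 := fun t h => (prm_prime t h).ne_zero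
  set P : ℕ := ∏ t ∈ T, prm t with hP
  have hPpos : 0 < P := Finset.prod_pos (fun t h => (prm_prime t h).pos)
  have prm_dvd_P : ∀ t ∈ T, prm t ∣ P := fun t h => Finset.dvd_prod_of_mem _ h
  -- CRT
  set res : Fin n → (Fin n → ℤ) → ℕ := fun k t => ((t k) % (prm t : ℤ)).toNat with hres
  set x : Fin n → ℕ :=
    fun k => (Nat.chineseRemainderOfFinset (res k) prm T prm_ne prm_cop : ℕ) with hx
  have hx_mod : ∀ k, ∀ t ∈ T, (x k : ℤ) % (prm t : ℤ) = (t k) % (prm t : ℤ) := by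
    intro k t ht
    have h1 : x k ≡ res k t [MOD prm t] :=
      (Nat.chineseRemainderOfFinset (res k) prm T prm_ne prm_cop).2 t ht
    have h2 : (x k : ℤ) % (prm t : ℤ) = (res k t : ℤ) % (prm t : ℤ) := by
      exact_mod_cast congrArg (Nat.cast : ℕ → ℤ) h1
    rw [h2, hres]
    have hnn : (0 : ℤ) ≤ (t k) % (prm t : ℤ) :=
      Int.emod_nonneg _ (by exact_mod_cast prm_ne t ht)
    rw [Int.toNat_of_nonneg hnn]
    exact Int.emod_emod_of_dvd _ dvd_rfl
  set a : Fin n → ℤ := fun k => (H : ℤ) + 1 + ((x k - ((H : ℤ) + 1)) % (P : ℤ)) with ha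
  have ha_lb : ∀ k, (H : ℤ) + 1 ≤ a k := by
    intro k
    have := Int.emod_nonneg ((x k : ℤ) - ((H : ℤ) + 1)) (by exact_mod_cast hPpos.ne' : (P : ℤ) ≠ 0)
    simp only [ha]; omega
  have ha_ub : ∀ k, a k ≤ (H : ℤ) + (P : ℤ) := by
    intro k
    have := Int.emod_lt_of_pos ((x k : ℤ) - ((H : ℤ) + 1)) (by exact_mod_cast hPpos : (0:ℤ) < P)
    simp only [ha]; omega
  have ha_mod : ∀ k, a k % (P : ℤ) = (x k : ℤ) % (P : ℤ) := by
    intro k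
    have h1 : ((x k - ((H : ℤ) + 1)) % (P : ℤ)) % (P : ℤ) = (x k - ((H : ℤ) + 1)) % (P : ℤ) :=
      Int.emod_emod_of_dvd _ dvd_rfl
    show ((H : ℤ) + 1 + ((x k - ((H : ℤ) + 1)) % (P : ℤ))) % (P : ℤ) = _
    conv_rhs => rw [show (x k : ℤ) = (H : ℤ) + 1 + (x k - ((H : ℤ) + 1)) by ring]
    rw [Int.add_emod, h1, ← Int.add_emod]
  refine ⟨a, fun k => lt_of_lt_of_le (by positivity) (ha_lb k), ?_, ?_⟩
  · -- gcd property
    intro h hh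
    set t : Fin n → ℤ := fun k => -(h k) with ht'
    have hhk : ∀ k, (h k).natAbs ≤ H := by
      intro k
      have h1 : (h k).natAbs ≤ vecHeight h :=
        Finset.le_sup (f := fun i => (h i).natAbs) (Finset.mem_univ k)
      omega
    have htT : t ∈ T := by
      rw [hT, Fintype.mem_piFinset]
      intro k
      rw [Finset.mem_Icc]
      have h1 : t k = -(h k) := rfl
      have := hhk k
      omega
    have hp := prm_prime t htT
    have hdvd : ∀ k, (prm t : ℤ) ∣ a k + h k := by
      intro k
      have h1 : a k % (prm t : ℤ) = (x k : ℤ) % (prm t : ℤ) := by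
        exact Int.ModEq.of_dvd (Int.natCast_dvd_natCast.mpr (prm_dvd_P t htT)) (ha_mod k)
      have h2 : a k % (prm t : ℤ) = (t k) % (prm t : ℤ) := h1.trans (hx_mod k t htT)
      have : (a k + h k) % (prm t : ℤ) = 0 := by
        have : (a k + h k) % (prm t : ℤ) = (t k + h k) % (prm t : ℤ) :=
          Int.ModEq.add h2 rfl
        rw [this, ht']; simp
      exact Int.dvd_of_emod_eq_zero this
    have hgd : (prm t : ℤ) ∣ Finset.univ.gcd fun i => a i + h i :=
      Finset.dvd_gcd (fun i _ => hdvd i)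
    set g : ℤ := Finset.univ.gcd fun i => a i + h i with hg
    have i0 : Fin n := ⟨0, hn⟩
    have hpos0 : 0 < a i0 + h i0 := by
      have h1 := ha_lb i0
      have h2 := hhk i0
      omega
    have hgne : g ≠ 0 := by
      intro h0
      have := Finset.gcd_dvd (Finset.mem_univ i0) (f := fun i => a i + h i)
      rw [← hg, h0] at this
      have h3 : a i0 + h i0 = 0 := eq_zero_of_zero_dvd this
      omega
    have hgnn : 0 ≤ g := by
      have h1 : normalize g = g := Finset.normalize_gcd
      rw [← h1, ← Int.abs_eq_normalize]
      exact abs_nonneg g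
    have : (prm t : ℤ) ≤ g := Int.le_of_dvd (lt_of_le_of_ne hgnn (Ne.symm hgne)) hgd
    have : (2 : ℤ) ≤ (prm t : ℤ) := by exact_mod_cast hp.two_le
    omega
  · -- height bound
    have hheight : (vecHeight a : ℤ) ≤ (H : ℤ) + (P : ℤ) := by
      have : vecHeight a ≤ H + P := by
        apply Finset.sup_le
        intro k _
        have h1 := ha_lb k
        have h2 := ha_ub k
        omega
      exact_mod_cast this
    have hPle : P ≤ m ^ (4 * m) := by
      calc P ≤ (2 * m ^ 3) ^ T.card := Finset.prod_le_pow_card _ _ _ prm_lt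
      _ = (2 * m ^ 3) ^ m := by rw [hTcard]
      _ ≤ (m ^ 4) ^ m := Nat.pow_le_pow_left
        (by calc 2 * m ^ 3 ≤ m * m ^ 3 := Nat.mul_le_mul_right _ hm2
            _ = m ^ 4 := by ring) m
      _ = m ^ (4 * m) := by rw [← pow_mul]
    -- real estimates
    have hHr : (3 : ℝ) ≤ (H : ℝ) := by exact_mod_cast hH
    have hlogH : 1 ≤ Real.log H := by
      have h3 : Real.exp 1 ≤ 3 := by
        have := Real.exp_one_lt_d9
        norm_num at this ⊢
        linarith
      calc (1 : ℝ) = Real.log (Real.exp 1) := (Real.log_exp 1).symm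
      _ ≤ Real.log H := Real.log_le_log (Real.exp_pos 1) (le_trans h3 hHr)
    have hlogm : Real.log m ≤ 2 * n * Real.log H := by
      have hmle : (m : ℝ) ≤ (3 * H : ℝ) ^ n := by
        have : m ≤ (3 * H) ^ n := Nat.pow_le_pow_left (by omega) n
        exact_mod_cast this
      have h1 : Real.log m ≤ n * Real.log (3 * H) := by
        calc Real.log m ≤ Real.log ((3 * H : ℝ) ^ n) :=
          Real.log_le_log (by exact_mod_cast Nat.lt_of_lt_of_le Nat.zero_lt_two hm2) hmle
        _ = n * Real.log (3 * H) := by rw [Real.log_pow]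
      have h2 : Real.log (3 * H : ℝ) ≤ 2 * Real.log H := by
        rw [Real.log_mul (by norm_num) (by positivity)]
        have : Real.log 3 ≤ Real.log H := Real.log_le_log (by norm_num) hHr
        linarith [Real.log_le_log (by norm_num : (0:ℝ) < 3) hHr]
      calc Real.log m ≤ n * Real.log (3 * H) := h1
      _ ≤ n * (2 * Real.log H) := by
          apply mul_le_mul_of_nonneg_left h2 (by positivity)
      _ = 2 * n * Real.log H := by ring
    have hmr : (m : ℝ) ≤ 3 ^ n * (H : ℝ) ^ n := by
      have : m ≤ (3 * H) ^ n := Nat.pow_le_pow_left (by omega) n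
      calc (m : ℝ) ≤ ((3 * H : ℕ) : ℝ) ^ n := by exact_mod_cast this
      _ = 3 ^ n * (H : ℝ) ^ n := by push_cast; ring
    set K : ℝ := 8 * n * 3 ^ n * (H : ℝ) ^ n * Real.log H with hK
    have hPr : (P : ℝ) ≤ Real.exp K := by
      have h0 : (0 : ℝ) < m := by exact_mod_cast Nat.lt_of_lt_of_le Nat.zero_lt_two hm2
      have h1 : (P : ℝ) ≤ (m : ℝ) ^ (4 * m) := by exact_mod_cast hPle
      have h2 : (m : ℝ) ^ (4 * m) = Real.exp ((4 * m : ℕ) * Real.log m) := by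
        rw [← Real.log_pow, Real.exp_log (by positivity)]
      rw [h2] at h1
      refine le_trans h1 (Real.exp_le_exp.mpr ?_)
      rw [hK]
      have hlogm0 : 0 ≤ Real.log m := Real.log_nonneg (by exact_mod_cast hm2.trans' (by norm_num))
      calc ((4 * m : ℕ) : ℝ) * Real.log m = 4 * (m : ℝ) * Real.log m := by push_cast; ring
      _ ≤ 4 * (3 ^ n * (H : ℝ) ^ n) * (2 * n * Real.log H) := by
          apply mul_le_mul (by linarith [hmr]) hlogm hlogm0 (by positivity)
      _ = 8 * n * 3 ^ n * (H : ℝ) ^ n * Real.log H := by ring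
    have hL : (H : ℝ) ≤ (H : ℝ) ^ n * Real.log H := by
      calc (H : ℝ) = (H : ℝ) * 1 := (mul_one _).symm
      _ ≤ (H : ℝ) ^ n * Real.log H := by
          apply mul_le_mul (le_self_pow₀ (by linarith) (by omega)) hlogH (by norm_num)
            (by positivity)
    calc (vecHeight a : ℝ) ≤ (H : ℝ) + (P : ℝ) := by exact_mod_cast hheight
    _ ≤ (H : ℝ) + Real.exp K := by linarith
    _ ≤ Real.exp K * (1 + (H : ℝ) ^ n * Real.log H) := by
        have h1 : 1 ≤ Real.exp K := Real.one_le_exp (by positivity)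
        have h2 : (H : ℝ) ≤ (H:ℝ)^n * Real.log H := hL
        nlinarith [Real.exp_pos K, hL]
    _ ≤ Real.exp K * Real.exp ((H : ℝ) ^ n * Real.log H) := by
        have hel := Real.add_one_le_exp ((H : ℝ) ^ n * Real.log H)
        apply mul_le_mul_of_nonneg_left _ (Real.exp_pos K).le
        linarith
    _ = Real.exp ((8 * n * 3 ^ n + 1) * (H : ℝ) ^ n * Real.log H) := by
        rw [← Real.exp_add, hK]; ring_nf
end

section
/- Let n ≥ 2 be an integer. For every real ε > 0 there is a constant C > 0, depending only on n and ε, such that for every vector a = (a_1, …, a_n) of positive integers, every integer h ≥ 2, and every real D ≥ 1: Σ_{d > D} U_d(a, h) ≤ C · h^n · (h·𝔥(a))^ε, where the sum is over integers d with D < d ≤ n·h·𝔥(a) (note U_d(a, h) = 0 for d > n·h·𝔥(a)). -/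
/-- `U_d(a, h)`: the number of vectors `x ∈ ℤⁿ` with positive components and height
at most `h` for which `d ∣ a·x`. -/
noncomputable def Ucount {n : ℕ} (a : Fin n → ℤ) (h d : ℕ) : ℕ :=
  Nat.card {x : Fin n → ℤ //
    (∀ i, 0 < x i) ∧ vecHeight x ≤ h ∧ (d : ℤ) ∣ ∑ i, a i * x i}

lemma key_prime_bound (ε : ℝ) (hε : 0 < ε) (p e : ℕ) (hp : 2 ≤ p) :
    (e + 1 : ℝ) ≤ (if (p : ℝ) ^ ε < 2 then (1 + 1 / (ε * Real.log 2)) else 1) *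
      (p : ℝ) ^ (ε * e) := by
  have hl2 : 0 < Real.log 2 := Real.log_pos (by norm_num)
  have hc : 0 < ε * Real.log 2 := mul_pos hε hl2
  have hp0 : (0:ℝ) ≤ p := by positivity
  split_ifs with hsmall
  · have h1 : (2:ℝ) ^ (ε * e) ≤ (p:ℝ) ^ (ε * e) :=
      Real.rpow_le_rpow (by norm_num) (by exact_mod_cast hp) (by positivity)
    have h2 : 1 + (ε * Real.log 2) * e ≤ (2:ℝ) ^ (ε * e) := by
      rw [Real.rpow_def_of_pos (by norm_num)]
      calc 1 + (ε * Real.log 2) * e = (Real.log 2 * (ε * e)) + 1 := by ring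
        _ ≤ Real.exp (Real.log 2 * (ε * e)) := Real.add_one_le_exp _
    have he : (0:ℝ) ≤ (e:ℝ) := by positivity
    set c := ε * Real.log 2 with hcdef
    have hexp : (1 + 1/c) * (1 + c * (e:ℝ)) = 1 + c * e + 1/c + e := by
      field_simp
      ring
    have h7 : (1 + 1/c) * (1 + c * (e:ℝ)) ≤ (1 + 1/c) * ((p:ℝ) ^ (ε * e)) := by
      apply mul_le_mul_of_nonneg_left (by linarith) (by positivity)
    have h8 : (0:ℝ) ≤ c * e := mul_nonneg hc.le he
    have h9 : (0:ℝ) ≤ 1/c := by positivity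
    linarith [hexp ▸ h7]
  · push_neg at hsmall
    have h3 : (p:ℝ) ^ (ε * e) = ((p:ℝ) ^ ε) ^ e := by
      rw [Real.rpow_mul hp0, Real.rpow_natCast]
    rw [one_mul, h3]
    have h4 : (e + 1 : ℝ) ≤ (2:ℝ) ^ e := by
      have := @Nat.lt_two_pow_self e
      have : e + 1 ≤ 2 ^ e := this
      exact_mod_cast this
    exact h4.trans (pow_le_pow_left₀ (by norm_num) hsmall e)

lemma divisor_count_bound (ε : ℝ) (hε : 0 < ε) :
    ∃ C : ℝ, 1 ≤ C ∧ ∀ m : ℕ, m ≠ 0 → ((m.divisors.card : ℝ) ≤ C * (m : ℝ) ^ ε) := by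
  classical
  have hl2 : 0 < Real.log 2 := Real.log_pos (by norm_num)
  have hc : 0 < ε * Real.log 2 := mul_pos hε hl2
  set K : ℝ := 1 + 1 / (ε * Real.log 2) with hKdef
  have hK1 : 1 ≤ K := le_add_of_nonneg_right (by positivity)
  set N : ℕ := ⌈(2:ℝ) ^ (1/ε)⌉₊ + 1 with hNdef
  refine ⟨K ^ N, one_le_pow₀ hK1, fun m hm => ?_⟩
  have hfact : ∀ p ∈ m.primeFactors, 2 ≤ p := fun p hp =>
    (Nat.prime_of_mem_primeFactors hp).two_le
  rw [Nat.card_divisors hm]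
  push_cast
  have step1 : (∏ p ∈ m.primeFactors, ((m.factorization p : ℝ) + 1))
      ≤ ∏ p ∈ m.primeFactors,
          ((if (p:ℝ) ^ ε < 2 then K else 1) * (p:ℝ) ^ (ε * m.factorization p)) := by
    apply Finset.prod_le_prod
    · intro p _; positivity
    · intro p hp; exact key_prime_bound ε hε p _ (hfact p hp)
  have step2 : (∏ p ∈ m.primeFactors,
        ((if (p:ℝ) ^ ε < 2 then K else 1) * (p:ℝ) ^ (ε * m.factorization p)))
      = (∏ p ∈ m.primeFactors, (if (p:ℝ) ^ ε < 2 then K else 1)) *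
        ∏ p ∈ m.primeFactors, (p:ℝ) ^ (ε * m.factorization p) :=
    Finset.prod_mul_distrib
  have hsub : m.primeFactors.filter (fun p : ℕ => ((p:ℝ)) ^ ε < 2) ⊆ Finset.range N := by
    intro p hp
    rw [Finset.mem_filter] at hp
    have hplt : (p:ℝ) < (2:ℝ) ^ (1/ε) := by
      have h5 := Real.rpow_lt_rpow (by positivity) hp.2 (by positivity : (0:ℝ) < 1/ε)
      rwa [← Real.rpow_mul (by positivity), mul_one_div, div_self hε.ne',
        Real.rpow_one] at h5
    have : (p:ℝ) < (⌈(2:ℝ) ^ (1/ε)⌉₊ : ℝ) + 1 :=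
      hplt.trans_le ((Nat.le_ceil _).trans (by linarith))
    rw [Finset.mem_range, hNdef]
    exact_mod_cast this
  have step3 : (∏ p ∈ m.primeFactors, (if (p:ℝ) ^ ε < 2 then K else 1)) ≤ K ^ N := by
    rw [Finset.prod_ite, Finset.prod_const, Finset.prod_const_one, mul_one]
    refine pow_le_pow_right₀ hK1 ?_
    exact le_trans (Finset.card_le_card hsub) (le_of_eq (Finset.card_range N))
  have step4 : ∏ p ∈ m.primeFactors, (p:ℝ) ^ (ε * m.factorization p) = (m:ℝ) ^ ε := by
    have h6 : ∀ p ∈ m.primeFactors,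
        (p:ℝ) ^ (ε * m.factorization p) = ((p:ℝ) ^ (m.factorization p)) ^ ε := by
      intro p _
      rw [mul_comm, Real.rpow_mul (by positivity), Real.rpow_natCast]
    rw [Finset.prod_congr rfl h6,
      Real.finset_prod_rpow _ _ (fun p _ => by positivity)]
    congr 1
    have h7 : ∏ p ∈ m.primeFactors, p ^ m.factorization p = m := by
      rw [← Nat.support_factorization]
      exact Nat.factorization_prod_pow_eq_self hm
    exact_mod_cast congrArg (fun k : ℕ => (k:ℝ)) h7
  calc (∏ p ∈ m.primeFactors, ((m.factorization p : ℝ) + 1))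
      ≤ (∏ p ∈ m.primeFactors, (if (p:ℝ) ^ ε < 2 then K else 1)) *
        ∏ p ∈ m.primeFactors, (p:ℝ) ^ (ε * m.factorization p) := step2 ▸ step1
    _ ≤ K ^ N * ∏ p ∈ m.primeFactors, (p:ℝ) ^ (ε * m.factorization p) :=
        mul_le_mul_of_nonneg_right step3
          (Finset.prod_nonneg fun p _ => by positivity)
    _ = K ^ N * (m:ℝ) ^ ε := by rw [step4]

/-- Divisor-function bound on the tail: for `n ≥ 2` and `ε > 0` there is `C > 0`
(depending only on `n` and `ε`) such that `∑_{d > D} U_d(a, h) ≤ C·hⁿ·(h·𝔥(a))^ε`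
(the sum runs over integers `D < d ≤ n·h·𝔥(a)`; `U_d(a,h) = 0` beyond that range). -/
theorem sum_Ucount_tail (n : ℕ) (hn : 2 ≤ n) (ε : ℝ) (hε : 0 < ε) :
    ∃ C : ℝ, 0 < C ∧
      ∀ a : Fin n → ℤ, (∀ i, 0 < a i) → ∀ h : ℕ, 2 ≤ h → ∀ D : ℝ, 1 ≤ D →
        ∑ d ∈ (Finset.Icc 1 (n * h * vecHeight a)).filter (fun d : ℕ => D < (d : ℝ)),
            (Ucount a h d : ℝ)
          ≤ C * (h : ℝ) ^ n * ((h : ℝ) * (vecHeight a : ℝ)) ^ ε := by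
  classical
  obtain ⟨C₀, hC₀1, hC₀⟩ := divisor_count_bound ε hε
  have hC₀0 : (0:ℝ) < C₀ := lt_of_lt_of_le one_pos hC₀1
  refine ⟨C₀ * (n:ℝ) ^ ε, by positivity, ?_⟩
  intro a ha h hh D hD
  set H := vecHeight a with hHdef
  set M := n * h * H with hMdef
  set F := Fintype.piFinset (fun _ : Fin n => Finset.Icc (1:ℤ) (h:ℤ)) with hFdef
  set A := (Finset.Icc 1 M).filter (fun d : ℕ => D < (d:ℝ)) with hAdef
  have hne : (Finset.univ : Finset (Fin n)).Nonempty := by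
    refine ⟨⟨0, by omega⟩, Finset.mem_univ _⟩
  have haH : ∀ i, a i ≤ (H:ℤ) := by
    intro i
    have h1 : (a i).natAbs ≤ H :=
      Finset.le_sup (f := fun j => (a j).natAbs) (Finset.mem_univ i)
    omega
  -- Ucount as a finset card
  have hU : ∀ d : ℕ, Ucount a h d
      = (F.filter (fun x => (d:ℤ) ∣ ∑ i, a i * x i)).card := by
    intro d
    have hset : {x : Fin n → ℤ |
        (∀ i, 0 < x i) ∧ vecHeight x ≤ h ∧ (d:ℤ) ∣ ∑ i, a i * x i}
        = ↑(F.filter (fun x => (d:ℤ) ∣ ∑ i, a i * x i)) := by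
      ext x
      simp only [Set.mem_setOf_eq, Finset.coe_filter, hFdef,
        Fintype.mem_piFinset, Finset.mem_Icc]
      constructor
      · rintro ⟨h1, h2, h3⟩
        refine ⟨fun i => ?_, h3⟩
        have h4 : (x i).natAbs ≤ h :=
          le_trans (Finset.le_sup (f := fun j => (x j).natAbs) (Finset.mem_univ i)) h2
        have := h1 i
        omega
      · rintro ⟨h1, h3⟩
        refine ⟨fun i => ?_, ?_, h3⟩
        · have := h1 i; omega
        · exact Finset.sup_le fun i _ => by have := h1 i; omega
    calc Ucount a h d
        = Set.ncard {x : Fin n → ℤ |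
            (∀ i, 0 < x i) ∧ vecHeight x ≤ h ∧ (d:ℤ) ∣ ∑ i, a i * x i} :=
          Nat.card_coe_set_eq _
      _ = (F.filter (fun x => (d:ℤ) ∣ ∑ i, a i * x i)).card := by
          rw [hset, Set.ncard_coe_finset]
  -- swap the sums
  have hswap : ∑ d ∈ A, Ucount a h d
      = ∑ x ∈ F, (A.filter (fun d : ℕ => (d:ℤ) ∣ ∑ i, a i * x i)).card := by
    simp_rw [hU, Finset.card_filter]
    exact Finset.sum_comm
  -- properties of x ∈ F
  have hxF : ∀ x ∈ F, (∀ i, 1 ≤ x i ∧ x i ≤ (h:ℤ)) := by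
    intro x hx i
    have := (Fintype.mem_piFinset.mp hx) i
    rwa [Finset.mem_Icc] at this
  have hspos : ∀ x ∈ F, 0 < ∑ i, a i * x i := by
    intro x hx
    refine Finset.sum_pos (fun i _ => mul_pos (ha i) ?_) hne
    exact lt_of_lt_of_le one_pos (hxF x hx i).1
  have hsle : ∀ x ∈ F, (∑ i, a i * x i) ≤ (M:ℤ) := by
    intro x hx
    calc ∑ i, a i * x i ≤ ∑ _i : Fin n, (H:ℤ) * (h:ℤ) := by
          refine Finset.sum_le_sum fun i _ => ?_
          have h1 := (hxF x hx i).1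
          have h2 := (hxF x hx i).2
          have h3 := haH i
          have h4 := ha i
          nlinarith
      _ = (n:ℤ) * ((H:ℤ) * (h:ℤ)) := by
          rw [Finset.sum_const, Finset.card_univ, Fintype.card_fin, nsmul_eq_mul]
      _ = (M:ℤ) := by rw [hMdef]; push_cast; ring
  -- per-x divisor bound
  have hbound : ∀ x ∈ F, (A.filter (fun d : ℕ => (d:ℤ) ∣ ∑ i, a i * x i)).card
      ≤ ((∑ i, a i * x i).toNat).divisors.card := by
    intro x hx
    apply Finset.card_le_card
    intro d hd
    simp only [hAdef, Finset.mem_filter, Finset.mem_Icc] at hd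
    obtain ⟨⟨⟨hd1, hdM⟩, hDd⟩, hdvd⟩ := hd
    have hs := hspos x hx
    rw [Nat.mem_divisors]
    constructor
    · have : ((∑ i, a i * x i).toNat : ℤ) = ∑ i, a i * x i := Int.toNat_of_nonneg hs.le
      exact Int.ofNat_dvd.mp (by rw [this]; exact hdvd)
    · simp only [ne_eq, Int.toNat_eq_zero, not_le]
      exact hs
  -- the cardinality of F
  have hcardF : F.card = h ^ n := by
    rw [hFdef, Fintype.card_piFinset_const, Int.card_Icc]
    norm_num
  -- put it together
  have hMge : ∀ x ∈ F, ((∑ i, a i * x i).toNat : ℝ) ^ ε ≤ (M:ℝ) ^ ε := by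
    intro x hx
    apply Real.rpow_le_rpow (by positivity) _ hε.le
    have h1 : (∑ i, a i * x i).toNat ≤ M := Int.toNat_le.mpr (hsle x hx)
    exact_mod_cast h1
  calc ∑ d ∈ A, (Ucount a h d : ℝ)
      = ((∑ d ∈ A, Ucount a h d : ℕ) : ℝ) := by push_cast; rfl
    _ = ((∑ x ∈ F, (A.filter (fun d : ℕ => (d:ℤ) ∣ ∑ i, a i * x i)).card : ℕ) : ℝ) := by
        rw [hswap]
    _ ≤ ∑ x ∈ F, C₀ * (M:ℝ) ^ ε := by
        push_cast
        refine Finset.sum_le_sum fun x hx => ?_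
        have hm0 : (∑ i, a i * x i).toNat ≠ 0 := by
          simp only [ne_eq, Int.toNat_eq_zero, not_le]
          exact hspos x hx
        calc ((A.filter (fun d : ℕ => (d:ℤ) ∣ ∑ i, a i * x i)).card : ℝ)
            ≤ (((∑ i, a i * x i).toNat).divisors.card : ℝ) := by
              exact_mod_cast hbound x hx
          _ ≤ C₀ * ((∑ i, a i * x i).toNat : ℝ) ^ ε := hC₀ _ hm0
          _ ≤ C₀ * (M:ℝ) ^ ε := by
              exact mul_le_mul_of_nonneg_left (hMge x hx) hC₀0.le
    _ = (h:ℝ) ^ n * (C₀ * (M:ℝ) ^ ε) := by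
        rw [Finset.sum_const, hcardF, nsmul_eq_mul]; push_cast; ring
    _ = C₀ * (n:ℝ) ^ ε * (h:ℝ) ^ n * ((h:ℝ) * (H:ℝ)) ^ ε := by
        have hMr : (M:ℝ) = (n:ℝ) * ((h:ℝ) * (H:ℝ)) := by
          rw [hMdef]; push_cast; ring
        rw [hMr, Real.mul_rpow (by positivity) (by positivity)]
        ring
end

section
/- Let n ≥ 2 be an integer. There is a constant C > 0, depending only on n, such that for every vector a = (a_1, …, a_n) of positive integers with gcd(a_1, …, a_n) = 1 and every integer h ≥ 2: |Σ_{1 ≤ d ≤ 2h/(3n)} μ(d) · U_d(a, h)² − ζ(2)^{−1} h^{2n}| ≤ C · h^{2n−1} · log h. -/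
open Finset ArithmeticFunction

lemma finset_gcd_bezout {ι : Type*} [DecidableEq ι] (s : Finset ι) (a : ι → ℤ) :
    ∃ c : ι → ℤ, ∑ i ∈ s, c i * a i = s.gcd a := by
  induction s using Finset.induction_on with
  | empty => exact ⟨0, by simp⟩
  | @insert i s hi ih =>
    obtain ⟨c, hc⟩ := ih
    obtain ⟨x, y, hxy⟩ := exists_gcd_eq_mul_add_mul (a i) (s.gcd a)
    refine ⟨fun j => if j = i then x else y * c j, ?_⟩
    rw [Finset.sum_insert hi, Finset.gcd_insert, hxy]
    simp only [if_pos rfl]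
    have : ∑ j ∈ s, (fun j => if j = i then x else y * c j) j * a j
        = y * ∑ j ∈ s, c j * a j := by
      rw [Finset.mul_sum]
      refine Finset.sum_congr rfl fun j hj => ?_
      simp only [if_neg (by rintro rfl; exact hi hj : ¬ j = i)]; ring
    rw [this, hc]; simp only [if_true]; ring

lemma card_ker_filter {n : ℕ} (hn : 0 < n) (a : Fin n → ℤ)
    (hgcd : Finset.univ.gcd a = 1) (d : ℕ) [NeZero d] :
    (Finset.univ.filter fun r : Fin n → ZMod d =>
      ∑ i, (a i : ZMod d) * r i = 0).card = d ^ (n - 1) := by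
  classical
  obtain ⟨c, hc⟩ := finset_gcd_bezout Finset.univ a
  rw [hgcd] at hc
  set φ : (Fin n → ZMod d) →+ ZMod d :=
    { toFun := fun r => ∑ i, (a i : ZMod d) * r i
      map_zero' := by simp
      map_add' := fun r s => by
        simp [mul_add, Finset.sum_add_distrib] } with hφ
  have hsurj : Function.Surjective φ := by
    intro y
    refine ⟨fun i => y * (c i : ZMod d), ?_⟩
    have h1 : (∑ i, (a i : ZMod d) * (c i : ZMod d)) = 1 := by
      have h2 := congrArg (fun z : ℤ => (z : ZMod d)) hc
      push_cast at h2
      rw [← h2]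
      exact Finset.sum_congr rfl fun i _ => by ring
    show ∑ i, (a i : ZMod d) * (y * (c i : ZMod d)) = y
    calc ∑ i, (a i : ZMod d) * (y * (c i : ZMod d))
        = y * ∑ i, (a i : ZMod d) * (c i : ZMod d) := by
          rw [Finset.mul_sum]; exact Finset.sum_congr rfl fun i _ => by ring
      _ = y := by rw [h1, mul_one]
  have h1 : Nat.card (Fin n → ZMod d) = d ^ n := by
    simp [Nat.card_pi, Nat.card_zmod]
  have h2 := AddSubgroup.card_eq_card_quotient_mul_card_addSubgroup φ.ker
  have h3 : Nat.card ((Fin n → ZMod d) ⧸ φ.ker) = d := by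
    rw [Nat.card_congr (QuotientAddGroup.quotientKerEquivOfSurjective φ hsurj).toEquiv,
      Nat.card_zmod]
  have h4 : d ^ n = d * Nat.card φ.ker := by rw [← h1, h2, h3]
  have hd : 0 < d := Nat.pos_of_ne_zero (NeZero.ne d)
  have h5 : Nat.card φ.ker = d ^ (n - 1) := by
    have h6 : d * Nat.card φ.ker = d * d ^ (n - 1) := by
      rw [← h4, ← pow_succ']
      congr 1; omega
    exact Nat.eq_of_mul_eq_mul_left hd h6
  rw [← Fintype.card_subtype, ← Nat.card_eq_fintype_card, ← h5]
  exact Nat.card_congr (Equiv.subtypeEquivRight (fun r => by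
    simp [AddMonoidHom.mem_ker, hφ])).symm

lemma card_residue_bounds (h d : ℕ) (hd : 0 < d) (c : ZMod d) :
    (h / d : ℕ) ≤ ((Finset.Ioc (0:ℤ) (h:ℤ)).filter fun x : ℤ => ((x : ZMod d) = c)).card ∧
    ((Finset.Ioc (0:ℤ) (h:ℤ)).filter fun x : ℤ => ((x : ZMod d) = c)).card ≤ h / d + 1 := by
  haveI : NeZero d := ⟨hd.ne'⟩
  set v : ℤ := (c.val : ℤ) with hv
  have hfil : ((Finset.Ioc (0:ℤ) (h:ℤ)).filter fun x : ℤ => ((x : ZMod d) = c))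
      = (Finset.Ioc (0:ℤ) (h:ℤ)).filter fun x : ℤ => x ≡ v [ZMOD (d:ℤ)] := by
    apply Finset.filter_congr; intro x _
    rw [show c = ((v : ℤ) : ZMod d) by
      rw [hv]; push_cast; exact (ZMod.natCast_rightInverse c).symm]
    simp [ZMod.intCast_eq_intCast_iff]
  have hcard := Int.Ioc_filter_modEq_card (0:ℤ) (h:ℤ)
    (by exact_mod_cast hd : (0:ℤ) < (d:ℤ)) v
  push_cast at hcard
  set q : ℕ := h / d with hq
  set w : ℤ := ⌊(-(v:ℚ)) / (d:ℚ)⌋ with hw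
  have hcard' : ((((Finset.Ioc (0:ℤ) (h:ℤ)).filter fun x : ℤ => x ≡ v [ZMOD (d:ℤ)]).card : ℤ))
      = max (⌊((h:ℚ) - (v:ℚ)) / (d:ℚ)⌋ - w) 0 := by
    rw [hcard]; norm_num; rfl
  have hqf : ⌊((h:ℚ)) / (d:ℚ)⌋ = (q : ℤ) := by
    rw [hq]; exact_mod_cast Rat.floor_natCast_div_natCast h d
  have f1 : ((q:ℤ):ℚ) ≤ (h:ℚ) / (d:ℚ) := by rw [← hqf]; exact Int.floor_le _
  have f1' : (h:ℚ) / (d:ℚ) < (q:ℚ) + 1 := by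
    have := Int.lt_floor_add_one ((h:ℚ)/(d:ℚ)); rw [hqf] at this; exact_mod_cast this
  have f2 : ((w:ℤ):ℚ) ≤ (-(v:ℚ)) / (d:ℚ) := by rw [hw]; exact Int.floor_le _
  have f2' : (-(v:ℚ)) / (d:ℚ) < (w:ℚ) + 1 := Int.lt_floor_add_one _
  have f3 : ((h:ℚ) - (v:ℚ)) / (d:ℚ) = (h:ℚ)/(d:ℚ) + (-(v:ℚ))/(d:ℚ) := by ring
  have hA : (q : ℤ) + w ≤ ⌊((h:ℚ) - (v:ℚ)) / (d:ℚ)⌋ := by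
    rw [Int.le_floor, f3]; push_cast; push_cast at f1 f2; linarith
  have hB : ⌊((h:ℚ) - (v:ℚ)) / (d:ℚ)⌋ < (q : ℤ) + w + 2 := by
    rw [Int.floor_lt, f3]; push_cast; push_cast at f1' f2'; linarith
  rw [hfil]
  constructor
  · have : (q:ℤ) ≤ (((Finset.Ioc (0:ℤ) (h:ℤ)).filter fun x : ℤ => x ≡ v [ZMOD (d:ℤ)]).card : ℤ) := by
      rw [hcard']; exact le_max_of_le_left (by omega)
    exact_mod_cast this
  · have : ((((Finset.Ioc (0:ℤ) (h:ℤ)).filter fun x : ℤ => x ≡ v [ZMOD (d:ℤ)]).card : ℤ)) ≤ (q:ℤ) + 1 := by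
      rw [hcard']; exact max_le (by omega) (by positivity)
    exact_mod_cast this

lemma Ucount_eq_card {n : ℕ} (a : Fin n → ℤ) (h d : ℕ) :
    Ucount a h d = ((Fintype.piFinset fun _ : Fin n => Finset.Ioc (0:ℤ) (h:ℤ)).filter
      fun x => (d : ℤ) ∣ ∑ i, a i * x i).card := by
  classical
  rw [Ucount, ← Nat.card_eq_finsetCard]
  apply Nat.card_congr
  apply Equiv.subtypeEquivRight
  intro x
  simp only [Finset.mem_filter, Fintype.mem_piFinset, Finset.mem_Ioc]
  constructor
  · rintro ⟨h1, h2, h3⟩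
    refine ⟨fun i => ⟨h1 i, ?_⟩, h3⟩
    have := Finset.sup_le_iff.mp h2 i (Finset.mem_univ i)
    omega
  · rintro ⟨h1, h2⟩
    refine ⟨fun i => (h1 i).1, ?_, h2⟩
    refine Finset.sup_le fun i _ => ?_
    have := h1 i; omega

lemma Ucount_bounds {n : ℕ} (hn : 0 < n) (a : Fin n → ℤ)
    (hgcd : Finset.univ.gcd a = 1) (h d : ℕ) (hd : 0 < d) :
    d ^ (n - 1) * (h / d) ^ n ≤ Ucount a h d ∧
    Ucount a h d ≤ d ^ (n - 1) * (h / d + 1) ^ n := by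
  classical
  haveI : NeZero d := ⟨hd.ne'⟩
  set K := Finset.univ.filter (fun r : Fin n → ZMod d =>
      ∑ i, (a i : ZMod d) * r i = 0) with hKdef
  have hK : K.card = d ^ (n - 1) := card_ker_filter hn a hgcd d
  set S := ((Fintype.piFinset fun _ : Fin n => Finset.Ioc (0:ℤ) (h:ℤ)).filter
      fun x => (d : ℤ) ∣ ∑ i, a i * x i) with hSdef
  have hdvd_iff : ∀ x : Fin n → ℤ, ((d : ℤ) ∣ ∑ i, a i * x i)
      ↔ ∑ i, (a i : ZMod d) * ((x i : ZMod d)) = 0 := by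
    intro x
    rw [← ZMod.intCast_zmod_eq_zero_iff_dvd]
    push_cast
    rfl
  have hfib : S.card = ∑ r ∈ K,
      (Fintype.piFinset fun i => (Finset.Ioc (0:ℤ) (h:ℤ)).filter
        fun x : ℤ => ((x : ZMod d) = r i)).card := by
    rw [Finset.card_eq_sum_card_fiberwise
      (f := fun x : Fin n → ℤ => fun i => ((x i : ZMod d))) (t := K) ?_]
    · refine Finset.sum_congr rfl fun r hr => ?_
      congr 1
      ext y
      simp only [hSdef, Finset.mem_filter, Fintype.mem_piFinset, funext_iff]
      rw [hKdef, Finset.mem_filter] at hr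
      constructor
      · rintro ⟨⟨hy1, _⟩, hy2⟩
        exact fun i => ⟨hy1 i, hy2 i⟩
      · intro hy
        refine ⟨⟨fun i => (hy i).1, ?_⟩, fun i => (hy i).2⟩
        rw [hdvd_iff]
        have : ∀ i, ((y i : ZMod d)) = r i := fun i => (hy i).2
        simp only [this]
        exact hr.2
    · intro x hx
      rw [Finset.mem_coe, hKdef, Finset.mem_filter]
      refine ⟨Finset.mem_univ _, ?_⟩
      rw [Finset.mem_coe, hSdef, Finset.mem_filter] at hx
      exact (hdvd_iff x).mp hx.2
  rw [Ucount_eq_card, ← hSdef, hfib]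
  constructor
  · calc d ^ (n-1) * (h/d) ^ n = K.card * (h/d)^n := by rw [hK]
      _ ≤ _ := by
          rw [← smul_eq_mul]
          refine Finset.card_nsmul_le_sum K _ _ fun r _ => ?_
          rw [Fintype.card_piFinset]
          calc (h/d)^n = ∏ _i : Fin n, (h/d) := by simp [Finset.prod_const, Finset.card_univ]
            _ ≤ _ := Finset.prod_le_prod' fun i _ => (card_residue_bounds h d hd (r i)).1
  · calc (∑ r ∈ K,
      (Fintype.piFinset fun i => (Finset.Ioc (0:ℤ) (h:ℤ)).filter
        fun x : ℤ => ((x : ZMod d) = r i)).card) ≤ K.card • ((h/d+1)^n) := by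
          refine Finset.sum_le_card_nsmul K _ _ fun r _ => ?_
          rw [Fintype.card_piFinset]
          calc ∏ i, ((Finset.Ioc (0:ℤ) (h:ℤ)).filter fun x : ℤ => ((x : ZMod d) = r i)).card
              ≤ ∏ _i : Fin n, (h/d+1) :=
                Finset.prod_le_prod' fun i _ => (card_residue_bounds h d hd (r i)).2
            _ = (h/d+1)^n := by simp [Finset.prod_const, Finset.card_univ]
      _ = d ^ (n-1) * (h/d+1)^n := by rw [smul_eq_mul, hK]
  -- note: hfib already rewrote S.card; adjust

lemma pow_succ_le_aux (q : ℕ) : ∀ m : ℕ, (q+1)^(m+1) ≤ q^(m+1) + (m+1)*(q+1)^m := by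
  intro m
  induction m with
  | zero => simp
  | succ m ih =>
    have hq : q^(m+1) ≤ (q+1)^(m+1) := Nat.pow_le_pow_left (by omega) _
    calc (q+1)^(m+2) = (q+1)^(m+1) * (q+1) := by ring
      _ ≤ (q^(m+1) + (m+1)*(q+1)^m) * (q+1) := Nat.mul_le_mul_right _ ih
      _ = q^(m+1) * q + q^(m+1) + (m+1)*((q+1)^m * (q+1)) := by ring
      _ = q^(m+2) + q^(m+1) + (m+1)*(q+1)^(m+1) := by ring
      _ ≤ q^(m+2) + (q+1)^(m+1) + (m+1)*(q+1)^(m+1) := by omega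
      _ = q^(m+2) + (m+2)*(q+1)^(m+1) := by ring

-- difference bound in ℕ
lemma pow_diff_le (q m : ℕ) (hm : 0 < m) : (q+1)^m ≤ q^m + m*(q+1)^(m-1) := by
  obtain ⟨m', rfl⟩ : ∃ m', m = m' + 1 := ⟨m - 1, by omega⟩
  simpa using pow_succ_le_aux q m'

lemma Ucount_real_est {n : ℕ} (hn : 0 < n) (a : Fin n → ℤ)
    (hgcd : Finset.univ.gcd a = 1) (h d : ℕ) (hd : 0 < d) (hdh : d ≤ h) :
    |(Ucount a h d : ℝ) - (h:ℝ)^n / (d:ℝ)| ≤ (n:ℝ) * (2*(h:ℝ))^(n-1) ∧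
    (Ucount a h d : ℝ) ≤ (2*(h:ℝ))^n / (d:ℝ) := by
  obtain ⟨hL, hR⟩ := Ucount_bounds hn a hgcd h d hd
  set q : ℕ := h / d with hq
  have hqd : q * d ≤ h := by rw [hq]; exact Nat.div_mul_le_self h d
  have hh' : h < (q+1) * d := by
    have h1 := Nat.div_add_mod h d
    have h2 := Nat.mod_lt h hd
    calc h = d * q + h % d := h1.symm
      _ < d * q + d := by omega
      _ = (q+1)*d := by ring
  -- nat inequalities
  have hRL : d ^ (n-1) * (q+1)^n ≤ d ^ (n-1) * q^n + n * (2*h)^(n-1) := by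
    calc d ^ (n-1) * (q+1)^n ≤ d ^ (n-1) * (q^n + n*(q+1)^(n-1)) :=
          Nat.mul_le_mul_left _ (pow_diff_le q n hn)
      _ = d ^ (n-1) * q^n + n * (d^(n-1) * (q+1)^(n-1)) := by ring
      _ = d ^ (n-1) * q^n + n * (d * (q+1))^(n-1) := by rw [mul_pow]
      _ ≤ d ^ (n-1) * q^n + n * (2*h)^(n-1) := by
          have : d * (q+1) ≤ 2*h := by
            have e1 : d * (q+1) = q * d + d := by ring
            omega
          exact Nat.add_le_add_left (Nat.mul_le_mul_left _ (Nat.pow_le_pow_left this _)) _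
  have hdn : d ^ (n-1) * d = d ^ n := by
    rw [← pow_succ]; congr 1; omega
  have hLd : (d ^ (n-1) * q^n) * d ≤ h^n := by
    calc (d ^ (n-1) * q^n) * d = (q*d)^n := by
          rw [mul_pow]
          calc d ^ (n-1) * q^n * d = q^n * (d^(n-1) * d) := by ring
            _ = q^n * d^n := by rw [hdn]
      _ ≤ h^n := Nat.pow_le_pow_left hqd _
  have hRd : h^n ≤ (d ^ (n-1) * (q+1)^n) * d := by
    calc h^n ≤ ((q+1)*d)^n := Nat.pow_le_pow_left (le_of_lt hh') _
      _ = (d ^ (n-1) * (q+1)^n) * d := by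
          rw [mul_pow]
          calc (q+1)^n * d^n = (q+1)^n * (d^(n-1)*d) := by rw [hdn]
            _ = (d ^ (n-1) * (q+1)^n) * d := by ring
  have hR2 : (d ^ (n-1) * (q+1)^n) * d ≤ (2*h)^n := by
    calc (d ^ (n-1) * (q+1)^n) * d = ((q+1)*d)^n := by
          rw [mul_pow]
          calc d ^ (n-1) * (q+1)^n * d = (q+1)^n * (d^(n-1)*d) := by ring
            _ = (q+1)^n * d^n := by rw [hdn]
      _ ≤ (2*h)^n := Nat.pow_le_pow_left (by
          have e1 : (q+1) * d = q * d + d := by ring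
          omega) _
  -- move to ℝ
  have hdR : (0:ℝ) < (d:ℝ) := by exact_mod_cast hd
  have cL : ((d ^ (n-1) * q^n : ℕ) : ℝ) ≤ (Ucount a h d : ℝ) := by exact_mod_cast hL
  have cR : (Ucount a h d : ℝ) ≤ ((d ^ (n-1) * (q+1)^n : ℕ) : ℝ) := by exact_mod_cast hR
  have cRL : ((d ^ (n-1) * (q+1)^n : ℕ) : ℝ) ≤ ((d ^ (n-1) * q^n : ℕ) : ℝ) + (n:ℝ) * (2*(h:ℝ))^(n-1) := by
    have := hRL
    have e : ((n * (2*h)^(n-1) : ℕ) : ℝ) = (n:ℝ) * (2*(h:ℝ))^(n-1) := by push_cast; ring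
    calc ((d ^ (n-1) * (q+1)^n : ℕ) : ℝ) ≤ ((d ^ (n-1) * q^n + n * (2*h)^(n-1) : ℕ) : ℝ) := by
          exact_mod_cast this
      _ = ((d ^ (n-1) * q^n : ℕ) : ℝ) + (n:ℝ) * (2*(h:ℝ))^(n-1) := by push_cast; ring
  have cLd : ((d ^ (n-1) * q^n : ℕ) : ℝ) ≤ (h:ℝ)^n / (d:ℝ) := by
    rw [le_div_iff₀ hdR]
    calc ((d ^ (n-1) * q^n : ℕ) : ℝ) * (d:ℝ) = (((d ^ (n-1) * q^n) * d : ℕ) : ℝ) := by push_cast; ring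
      _ ≤ ((h^n : ℕ) : ℝ) := by exact_mod_cast hLd
      _ = (h:ℝ)^n := by push_cast; ring
  have cRd : (h:ℝ)^n / (d:ℝ) ≤ ((d ^ (n-1) * (q+1)^n : ℕ) : ℝ) := by
    rw [div_le_iff₀ hdR]
    calc (h:ℝ)^n = ((h^n : ℕ) : ℝ) := by push_cast; ring
      _ ≤ (((d ^ (n-1) * (q+1)^n) * d : ℕ) : ℝ) := by exact_mod_cast hRd
      _ = ((d ^ (n-1) * (q+1)^n : ℕ) : ℝ) * (d:ℝ) := by push_cast; ring
  constructor
  · rw [abs_le]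
    constructor <;> linarith
  · rw [le_div_iff₀ hdR]
    calc (Ucount a h d : ℝ) * (d:ℝ) ≤ ((d ^ (n-1) * (q+1)^n : ℕ) : ℝ) * d := by
          exact mul_le_mul_of_nonneg_right cR (le_of_lt hdR)
      _ = (((d ^ (n-1) * (q+1)^n) * d : ℕ) : ℝ) := by push_cast; ring
      _ ≤ (((2*h)^n : ℕ) : ℝ) := by exact_mod_cast hR2
      _ = (2*(h:ℝ))^n := by push_cast; ring

open Complex in
lemma hasSum_moebius_div_sq :
    HasSum (fun d : ℕ => (moebius d : ℝ) / (d:ℝ)^2) (6 / Real.pi^2) := by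
  have hs : (1:ℝ) < (2:ℂ).re := by norm_num
  have hsum : LSeriesSummable (fun n => ((moebius n : ℤ) : ℂ)) 2 :=
    LSeriesSummable_moebius_iff.mpr hs
  have hmul := ArithmeticFunction.LSeries_zeta_mul_Lseries_moebius hs
  have hzeta := LSeries_zeta_eq_riemannZeta hs
  have hz2 : riemannZeta 2 = (Real.pi : ℂ)^2 / 6 := riemannZeta_two
  have hzne : riemannZeta 2 ≠ 0 := by
    rw [hz2]
    exact div_ne_zero (pow_ne_zero 2 (ofReal_ne_zero.mpr Real.pi_ne_zero)) (by norm_num)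
  have hL : LSeries (fun n => ((moebius n : ℤ) : ℂ)) 2 = (riemannZeta 2)⁻¹ := by
    rw [hzeta] at hmul
    field_simp
    linear_combination hmul
  have key : HasSum (fun n : ℕ => LSeries.term (fun n => ((moebius n : ℤ) : ℂ)) 2 n)
      ((riemannZeta 2)⁻¹) := hL ▸ hsum.hasSum
  have hterm : ∀ n : ℕ, LSeries.term (fun n => ((moebius n : ℤ) : ℂ)) 2 n
      = (((moebius n : ℝ) / (n:ℝ)^2 : ℝ) : ℂ) := by
    intro n
    rcases eq_or_ne n 0 with rfl | hn
    · simp [LSeries.term_zero]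
    · rw [LSeries.term_of_ne_zero hn]
      rw [show ((2:ℂ)) = ((2:ℕ):ℂ) by norm_num, Complex.cpow_natCast]
      push_cast
      ring
  rw [funext hterm] at key
  have hval : ((riemannZeta 2)⁻¹) = (((6 / Real.pi^2 : ℝ)) : ℂ) := by
    rw [hz2, inv_div]
    push_cast
    ring
  rw [hval] at key
  exact hasSum_ofReal.mp key


lemma tsum_inv_sq_tail_le (m : ℕ) (hm : 1 ≤ m) :
    ∑' i : ℕ, 1 / ((i + (m+1) : ℕ):ℝ)^2 ≤ 1 / (m:ℝ) := by
  have hmR : (1:ℝ) ≤ (m:ℝ) := by exact_mod_cast hm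
  refine Real.tsum_le_of_sum_range_le (fun i => by positivity) fun N => ?_
  have tele : ∑ i ∈ Finset.range N, ((1:ℝ)/((m:ℝ)+i) - 1/((m:ℝ)+(i+1)))
      = 1/(m:ℝ) - 1/((m:ℝ)+N) := by
    have := Finset.sum_range_sub' (f := fun i : ℕ => (1:ℝ)/((m:ℝ)+i)) N
    push_cast at this ⊢
    convert this using 2 with i hi
    push_cast; ring_nf
  have hterm : ∀ i ∈ Finset.range N, 1 / ((i + (m+1) : ℕ):ℝ)^2
      ≤ (1:ℝ)/((m:ℝ)+i) - 1/((m:ℝ)+(i+1)) := by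
    intro i _
    set x : ℝ := (m:ℝ) + i with hx
    have hx1 : (1:ℝ) ≤ x := by have : (0:ℝ) ≤ (i:ℝ) := by positivity
                               simp [hx]; linarith
    have hx0 : (0:ℝ) < x := by linarith
    have hx10 : (0:ℝ) < x + 1 := by linarith
    have e1 : (1:ℝ)/x - 1/(x+1) = 1/(x*(x+1)) := by
      field_simp
      ring
    have e2 : ((i + (m+1) : ℕ):ℝ) = x + 1 := by push_cast [hx]; ring
    have e3 : (m:ℝ) + ((i:ℝ)+1) = x + 1 := by rw [hx]; ring
    rw [e2, e3, e1]
    have : x*(x+1) ≤ (x+1)^2 := by nlinarith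
    apply one_div_le_one_div_of_le (by positivity) this
  calc ∑ i ∈ Finset.range N, 1 / ((i + (m+1) : ℕ):ℝ)^2
      ≤ ∑ i ∈ Finset.range N, ((1:ℝ)/((m:ℝ)+i) - 1/((m:ℝ)+(i+1))) :=
        Finset.sum_le_sum hterm
    _ = 1/(m:ℝ) - 1/((m:ℝ)+N) := tele
    _ ≤ 1/(m:ℝ) := by
        have : (0:ℝ) < (m:ℝ)+N := by positivity
        have : (0:ℝ) ≤ 1/((m:ℝ)+N) := by positivity
        linarith

set_option maxHeartbeats 2000000 in
lemma moebius_tail_bound (m : ℕ) (hm : 1 ≤ m) :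
    |(∑ d ∈ Finset.Icc 1 m, (moebius d : ℝ) / (d:ℝ)^2) - 6 / Real.pi^2| ≤ 1 / (m:ℝ) := by
  have hs := hasSum_moebius_div_sq
  have hsummable := hs.summable
  have htsum : ∑' d : ℕ, (moebius d : ℝ) / (d:ℝ)^2 = 6 / Real.pi^2 := hs.tsum_eq
  have hrange : ∑ d ∈ Finset.range (m+1), (moebius d : ℝ) / (d:ℝ)^2
      = ∑ d ∈ Finset.Icc 1 m, (moebius d : ℝ) / (d:ℝ)^2 := by
    have e : Finset.range (m+1) = insert 0 (Finset.Icc 1 m) := by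
      ext x; simp only [Finset.mem_range, Finset.mem_insert, Finset.mem_Icc]; omega
    rw [e, Finset.sum_insert (by simp)]
    simp
  have hsplit := Summable.sum_add_tsum_nat_add (f := fun d : ℕ => (moebius d : ℝ) / (d:ℝ)^2)
    (m+1) hsummable
  have hdiff : (∑ d ∈ Finset.Icc 1 m, (moebius d : ℝ) / (d:ℝ)^2) - 6 / Real.pi^2
      = -∑' i : ℕ, (moebius (i + (m+1)) : ℝ) / ((i + (m+1) : ℕ):ℝ)^2 := by
    rw [← hrange, ← htsum, ← hsplit]
    ring
  rw [hdiff, abs_neg]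
  have hg : Summable (fun i : ℕ => 1 / ((i + (m+1) : ℕ):ℝ)^2) := by
    have h2 : Summable (fun n : ℕ => 1 / (n:ℝ)^2) :=
      (Real.summable_one_div_nat_pow (p := 2)).mpr (by norm_num)
    exact (summable_nat_add_iff (f := fun n : ℕ => 1 / (n:ℝ)^2) (m+1)).mpr h2
  have habs : ∀ i : ℕ, |(moebius (i + (m+1)) : ℝ) / ((i + (m+1) : ℕ):ℝ)^2|
      ≤ 1 / ((i + (m+1) : ℕ):ℝ)^2 := by
    intro i
    rw [abs_div, _root_.abs_of_nonneg (by positivity : (0:ℝ) ≤ ((i + (m+1) : ℕ):ℝ)^2)]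
    have hmu : |(moebius (i + (m+1)) : ℝ)| ≤ 1 := by
      have := abs_moebius_le_one (n := i + (m+1))
      exact_mod_cast this
    gcongr
  have habs_sum : Summable (fun i : ℕ => |(moebius (i + (m+1)) : ℝ) / ((i + (m+1) : ℕ):ℝ)^2|) :=
    Summable.of_nonneg_of_le (fun i => abs_nonneg _) habs hg
  calc |∑' i : ℕ, (moebius (i + (m+1)) : ℝ) / ((i + (m+1) : ℕ):ℝ)^2|
      = ‖∑' i : ℕ, (moebius (i + (m+1)) : ℝ) / ((i + (m+1) : ℕ):ℝ)^2‖ :=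
        (Real.norm_eq_abs _).symm
    _ ≤ ∑' i : ℕ, ‖(moebius (i + (m+1)) : ℝ) / ((i + (m+1) : ℕ):ℝ)^2‖ :=
        norm_tsum_le_tsum_norm (by simpa only [Real.norm_eq_abs] using habs_sum)
    _ = ∑' i : ℕ, |(moebius (i + (m+1)) : ℝ) / ((i + (m+1) : ℕ):ℝ)^2| := by
        simp only [Real.norm_eq_abs]
    _ ≤ ∑' i : ℕ, 1 / ((i + (m+1) : ℕ):ℝ)^2 := Summable.tsum_le_tsum habs habs_sum hg
    _ ≤ 1 / (m:ℝ) := tsum_inv_sq_tail_le m hm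

lemma sum_Icc_one_div_le (m : ℕ) :
    ∑ d ∈ Finset.Icc 1 m, 1 / (d:ℝ) ≤ 1 + Real.log m := by
  have h1 := harmonic_le_one_add_log m
  have h2 : (harmonic m : ℝ) = ∑ d ∈ Finset.Icc 1 m, 1 / (d:ℝ) := by
    rw [harmonic_eq_sum_Icc]
    push_cast
    simp [one_div]
  linarith

/-- The main-term estimate in the proof of Theorem 4: for `n ≥ 2` there is `C > 0`
(depending only on `n`) such that for every vector of positive integers `a` with
`gcd(a₁, …, aₙ) = 1` and every `h ≥ 2`,
`|∑_{1 ≤ d ≤ 2h/(3n)} μ(d)·U_d(a, h)² − ζ(2)⁻¹ h^{2n}| ≤ C·h^{2n−1}·log h`,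
where `ζ(2)⁻¹ = 6/π²`. -/
theorem sum_moebius_Ucount_main (n : ℕ) (hn : 2 ≤ n) :
    ∃ C : ℝ, 0 < C ∧
      ∀ a : Fin n → ℤ, (∀ i, 0 < a i) → Finset.univ.gcd a = 1 →
        ∀ h : ℕ, 2 ≤ h →
        |∑ d ∈ (Finset.Icc 1 h).filter
              (fun d : ℕ => (d : ℝ) ≤ 2 * (h : ℝ) / (3 * n)),
            (ArithmeticFunction.moebius d : ℝ) * (Ucount a h d : ℝ) ^ 2
          - (6 / Real.pi ^ 2) * (h : ℝ) ^ (2 * n)|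
          ≤ C * (h : ℝ) ^ (2 * n - 1) * Real.log h := by
  classical
  have hl2 : (0:ℝ) < Real.log 2 := Real.log_pos (by norm_num)
  set E : ℝ := (n:ℝ) * 4^n with hE
  have hE0 : 0 ≤ E := by positivity
  refine ⟨E * (1 + 1/Real.log 2) + 3*(n:ℝ)/Real.log 2 + 1, by positivity, ?_⟩
  intro a ha hgcd h hh2
  have hn0 : 0 < n := by omega
  have hH2 : (2:ℝ) ≤ (h:ℝ) := by exact_mod_cast hh2
  have hH0 : (0:ℝ) < (h:ℝ) := by linarith
  have hlh : Real.log 2 ≤ Real.log h := Real.log_le_log (by norm_num) hH2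
  have hlh0 : 0 < Real.log h := lt_of_lt_of_le hl2 hlh
  set m : ℕ := 2*h / (3*n) with hm
  have h3n : 0 < 3*n := by omega
  have hmh : m ≤ h := by
    have h1 : 2*h/(3*n) ≤ 2*h/6 := Nat.div_le_div_left (by omega) (by norm_num)
    have h2 : 2*h/6 ≤ h := by omega
    omega
  have hFm : (Finset.Icc 1 h).filter (fun d : ℕ => (d : ℝ) ≤ 2 * (h : ℝ) / (3 * n))
      = Finset.Icc 1 m := by
    ext d
    simp only [Finset.mem_filter, Finset.mem_Icc]
    have hiff : ((d:ℝ) ≤ 2 * (h:ℝ) / (3 * (n:ℝ))) ↔ d ≤ m := by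
      rw [le_div_iff₀ (by positivity : (0:ℝ) < 3*(n:ℝ))]
      rw [hm, Nat.le_div_iff_mul_le h3n]
      constructor
      · intro hx; exact_mod_cast hx
      · intro hx; exact_mod_cast hx
    constructor
    · rintro ⟨⟨h1, _⟩, h3⟩; exact ⟨h1, hiff.mp h3⟩
    · rintro ⟨h1, h2⟩; exact ⟨⟨h1, le_trans h2 hmh⟩, hiff.mpr h2⟩
  rw [hFm]
  have hpow0 : (0:ℝ) ≤ (h:ℝ)^(2*n-1) := by positivity
  have epow : (h:ℝ)^(2*n) = (h:ℝ)^(2*n-1) * (h:ℝ) := by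
    rw [← pow_succ]; congr 1; omega
  have hpiq : (6:ℝ) / Real.pi^2 ≤ 1 := by
    have hpi : (3:ℝ) < Real.pi := Real.pi_gt_three
    rw [div_le_one (by nlinarith)]
    nlinarith
  have hC3 : 3*(n:ℝ) ≤ (3*(n:ℝ)/Real.log 2) * Real.log h := by
    rw [div_mul_eq_mul_div, le_div_iff₀ hl2]
    have : (0:ℝ) ≤ 3*(n:ℝ) := by positivity
    nlinarith
  by_cases hm0 : m = 0
  · -- small h case: the sum is empty
    rw [hm0]
    simp only [show Finset.Icc 1 0 = (∅ : Finset ℕ) from rfl, Finset.sum_empty]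
    have hh3n : (h:ℝ) ≤ 3*(n:ℝ) := by
      have e1 : 2*h < 3*n := by
        by_contra hcon
        have e3 : 1 ≤ 2*h/(3*n) := (Nat.one_le_div_iff h3n).mpr (by omega)
        rw [← hm] at e3; omega
      have e2 : h ≤ 3*n := by omega
      exact_mod_cast e2
    have e1 : (0:ℝ) ≤ E*(1+1/Real.log 2) + 1 := by positivity
    calc |0 - 6/Real.pi^2 * (h:ℝ)^(2*n)| = 6/Real.pi^2 * (h:ℝ)^(2*n) := by
          rw [zero_sub, abs_neg, abs_of_nonneg (by positivity)]
      _ ≤ 1 * (h:ℝ)^(2*n) := mul_le_mul_of_nonneg_right hpiq (by positivity)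
      _ = (h:ℝ)^(2*n-1) * (h:ℝ) := by rw [one_mul, epow]
      _ ≤ (h:ℝ)^(2*n-1) * (3*(n:ℝ)) := mul_le_mul_of_nonneg_left hh3n hpow0
      _ ≤ (h:ℝ)^(2*n-1) * ((3*(n:ℝ)/Real.log 2) * Real.log h) :=
          mul_le_mul_of_nonneg_left hC3 hpow0
      _ = (3*(n:ℝ)/Real.log 2) * ((h:ℝ)^(2*n-1) * Real.log h) := by ring
      _ ≤ (E*(1+1/Real.log 2) + 3*(n:ℝ)/Real.log 2 + 1) * (h:ℝ)^(2*n-1) * Real.log h := by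
          nlinarith [mul_nonneg e1 (mul_nonneg hpow0 hlh0.le)]
  · have hm1 : 1 ≤ m := Nat.pos_of_ne_zero hm0
    have hlt : h < 3*n*m := by
      have h1 := Nat.div_add_mod (2*h) (3*n)
      have h2 := Nat.mod_lt (2*h) h3n
      have h3 : 3*n ≤ 3*n*m := Nat.le_mul_of_pos_right _ (by omega)
      have h4 : 3*n*(2*h/(3*n)) = 3*n*m := by rw [hm]
      have h5 : 2*h < 3*n*m + 3*n := by
        calc 2*h = 3*n*(2*h/(3*n)) + (2*h) % (3*n) := h1.symm
          _ = 3*n*m + (2*h) % (3*n) := by rw [h4]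
          _ < 3*n*m + 3*n := by omega
      omega
    have hmR : (0:ℝ) < (m:ℝ) := by exact_mod_cast hm1
    have hHm : (h:ℝ) ≤ 3*(n:ℝ)*(m:ℝ) := by
      have e1 : (h:ℝ) < ((3*n*m : ℕ):ℝ) := by exact_mod_cast hlt
      push_cast at e1
      linarith
    -- per-d bound
    have key : ∀ d ∈ Finset.Icc 1 m,
        |(moebius d : ℝ) * ((Ucount a h d : ℝ)^2 - (h:ℝ)^(2*n)/(d:ℝ)^2)|
          ≤ (E * (h:ℝ)^(2*n-1)) * (1/(d:ℝ)) := by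
      intro d hd
      rw [Finset.mem_Icc] at hd
      have hd1 : 0 < d := by omega
      have hdh : d ≤ h := le_trans hd.2 hmh
      have hdR : (0:ℝ) < (d:ℝ) := by exact_mod_cast hd1
      obtain ⟨est1, est2⟩ := Ucount_real_est hn0 a hgcd h d hd1 hdh
      have hb2 : (h:ℝ)^n/(d:ℝ) ≤ (2*(h:ℝ))^n/(d:ℝ) := by
        have e4 : (h:ℝ)^n ≤ (2*(h:ℝ))^n := pow_le_pow_left₀ hH0.le (by linarith) n
        exact div_le_div_of_nonneg_right e4 hdR.le
      have hU0 : (0:ℝ) ≤ (Ucount a h d : ℝ) := Nat.cast_nonneg _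
      have hb0 : (0:ℝ) ≤ (h:ℝ)^n/(d:ℝ) := by positivity
      have fact : (Ucount a h d : ℝ)^2 - (h:ℝ)^(2*n)/(d:ℝ)^2
          = ((Ucount a h d : ℝ) - (h:ℝ)^n/(d:ℝ)) * ((Ucount a h d : ℝ) + (h:ℝ)^n/(d:ℝ)) := by
        have e : (h:ℝ)^(2*n)/(d:ℝ)^2 = ((h:ℝ)^n/(d:ℝ))^2 := by
          rw [div_pow, ← pow_mul, mul_comm n 2]
        rw [e]; ring
      have habs1 : |(moebius d : ℝ)| ≤ 1 := by
        have := abs_moebius_le_one (n := d)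
        exact_mod_cast this
      have p1 : (2*(h:ℝ))^(n-1) * (2*(h:ℝ))^n = (2*(h:ℝ))^(2*n-1) := by
        rw [← pow_add]; congr 1; omega
      have p2 : (2*(h:ℝ))^(2*n-1) = 2^(2*n-1) * (h:ℝ)^(2*n-1) := mul_pow _ _ _
      have p3 : (2:ℝ) * 2^(2*n-1) = 4^n := by
        rw [← pow_succ', show 2*n-1+1 = 2*n by omega,
          show (4:ℝ) = 2^2 by norm_num, ← pow_mul]
      calc |(moebius d : ℝ) * ((Ucount a h d : ℝ)^2 - (h:ℝ)^(2*n)/(d:ℝ)^2)|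
          = |(moebius d : ℝ)| * |(Ucount a h d : ℝ)^2 - (h:ℝ)^(2*n)/(d:ℝ)^2| := abs_mul _ _
        _ ≤ 1 * |(Ucount a h d : ℝ)^2 - (h:ℝ)^(2*n)/(d:ℝ)^2| :=
            mul_le_mul_of_nonneg_right habs1 (abs_nonneg _)
        _ = |(Ucount a h d : ℝ) - (h:ℝ)^n/(d:ℝ)| * |(Ucount a h d : ℝ) + (h:ℝ)^n/(d:ℝ)| := by
            rw [one_mul, fact, abs_mul]
        _ ≤ ((n:ℝ) * (2*(h:ℝ))^(n-1)) * (2*((2*(h:ℝ))^n/(d:ℝ))) := by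
            apply mul_le_mul est1 ?_ (abs_nonneg _) (by positivity)
            rw [abs_of_nonneg (by linarith)]
            linarith
        _ = (n:ℝ) * (2 * ((2*(h:ℝ))^(n-1) * (2*(h:ℝ))^n)) / (d:ℝ) := by ring
        _ = (n:ℝ) * (2 * (2^(2*n-1) * (h:ℝ)^(2*n-1))) / (d:ℝ) := by rw [p1, p2]
        _ = (n:ℝ) * ((2*2^(2*n-1)) * (h:ℝ)^(2*n-1)) / (d:ℝ) := by ring
        _ = (n:ℝ) * (4^n * (h:ℝ)^(2*n-1)) / (d:ℝ) := by rw [p3]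
        _ = (E * (h:ℝ)^(2*n-1)) * (1/(d:ℝ)) := by rw [hE]; ring
    -- split the sum
    have split : (∑ d ∈ Finset.Icc 1 m, (moebius d : ℝ) * (Ucount a h d : ℝ)^2)
          - 6/Real.pi^2 * (h:ℝ)^(2*n)
        = (∑ d ∈ Finset.Icc 1 m,
            (moebius d : ℝ) * ((Ucount a h d : ℝ)^2 - (h:ℝ)^(2*n)/(d:ℝ)^2))
          + ((∑ d ∈ Finset.Icc 1 m, (moebius d : ℝ)/(d:ℝ)^2) - 6/Real.pi^2) * (h:ℝ)^(2*n) := by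
      have e1 : ∀ d ∈ Finset.Icc 1 m,
          (moebius d : ℝ) * ((Ucount a h d : ℝ)^2 - (h:ℝ)^(2*n)/(d:ℝ)^2)
            = (moebius d : ℝ) * (Ucount a h d : ℝ)^2
              - ((moebius d : ℝ)/(d:ℝ)^2) * (h:ℝ)^(2*n) := fun d _ => by ring
      rw [Finset.sum_congr rfl e1, Finset.sum_sub_distrib, ← Finset.sum_mul]
      ring
    have bound1 : |∑ d ∈ Finset.Icc 1 m,
          (moebius d : ℝ) * ((Ucount a h d : ℝ)^2 - (h:ℝ)^(2*n)/(d:ℝ)^2)|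
        ≤ E*(1+1/Real.log 2) * ((h:ℝ)^(2*n-1) * Real.log h) := by
      have k1 : 1 + Real.log h ≤ (1 + 1/Real.log 2) * Real.log h := by
        rw [add_mul, one_mul]
        have k2 : 1 ≤ 1/Real.log 2 * Real.log h := by
          rw [div_mul_eq_mul_div, one_mul, le_div_iff₀ hl2]; linarith
        linarith
      calc |∑ d ∈ Finset.Icc 1 m,
            (moebius d : ℝ) * ((Ucount a h d : ℝ)^2 - (h:ℝ)^(2*n)/(d:ℝ)^2)|
          ≤ ∑ d ∈ Finset.Icc 1 m,
            |(moebius d : ℝ) * ((Ucount a h d : ℝ)^2 - (h:ℝ)^(2*n)/(d:ℝ)^2)| :=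
            Finset.abs_sum_le_sum_abs _ _
        _ ≤ ∑ d ∈ Finset.Icc 1 m, (E * (h:ℝ)^(2*n-1)) * (1/(d:ℝ)) :=
            Finset.sum_le_sum key
        _ = (E * (h:ℝ)^(2*n-1)) * ∑ d ∈ Finset.Icc 1 m, 1/(d:ℝ) := by
            rw [← Finset.mul_sum]
        _ ≤ (E * (h:ℝ)^(2*n-1)) * (1 + Real.log h) := by
            apply mul_le_mul_of_nonneg_left ?_ (by positivity)
            calc ∑ d ∈ Finset.Icc 1 m, 1/(d:ℝ) ≤ 1 + Real.log m := sum_Icc_one_div_le m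
              _ ≤ 1 + Real.log h := by
                  have := Real.log_le_log hmR (by exact_mod_cast hmh : (m:ℝ) ≤ (h:ℝ))
                  linarith
        _ ≤ (E * (h:ℝ)^(2*n-1)) * ((1+1/Real.log 2) * Real.log h) :=
            mul_le_mul_of_nonneg_left k1 (by positivity)
        _ = E*(1+1/Real.log 2) * ((h:ℝ)^(2*n-1) * Real.log h) := by ring
    have bound2 : |((∑ d ∈ Finset.Icc 1 m, (moebius d : ℝ)/(d:ℝ)^2) - 6/Real.pi^2)
          * (h:ℝ)^(2*n)|
        ≤ (3*(n:ℝ)/Real.log 2) * ((h:ℝ)^(2*n-1) * Real.log h) := by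
      rw [abs_mul, abs_of_nonneg (by positivity : (0:ℝ) ≤ (h:ℝ)^(2*n))]
      calc |(∑ d ∈ Finset.Icc 1 m, (moebius d : ℝ)/(d:ℝ)^2) - 6/Real.pi^2| * (h:ℝ)^(2*n)
          ≤ (1/(m:ℝ)) * (h:ℝ)^(2*n) :=
            mul_le_mul_of_nonneg_right (moebius_tail_bound m hm1) (by positivity)
        _ = (h:ℝ)^(2*n-1) * ((h:ℝ)/(m:ℝ)) := by
            rw [epow]; ring
        _ ≤ (h:ℝ)^(2*n-1) * (3*(n:ℝ)) := by
            apply mul_le_mul_of_nonneg_left ?_ hpow0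
            rw [div_le_iff₀ hmR]
            linarith
        _ ≤ (h:ℝ)^(2*n-1) * ((3*(n:ℝ)/Real.log 2) * Real.log h) :=
            mul_le_mul_of_nonneg_left hC3 hpow0
        _ = (3*(n:ℝ)/Real.log 2) * ((h:ℝ)^(2*n-1) * Real.log h) := by ring
    calc |∑ d ∈ Finset.Icc 1 m, (moebius d : ℝ) * (Ucount a h d : ℝ)^2
          - 6/Real.pi^2 * (h:ℝ)^(2*n)|
        = |(∑ d ∈ Finset.Icc 1 m,
            (moebius d : ℝ) * ((Ucount a h d : ℝ)^2 - (h:ℝ)^(2*n)/(d:ℝ)^2))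
          + ((∑ d ∈ Finset.Icc 1 m, (moebius d : ℝ)/(d:ℝ)^2) - 6/Real.pi^2) * (h:ℝ)^(2*n)| := by
          rw [split]
      _ ≤ |∑ d ∈ Finset.Icc 1 m,
            (moebius d : ℝ) * ((Ucount a h d : ℝ)^2 - (h:ℝ)^(2*n)/(d:ℝ)^2)|
          + |((∑ d ∈ Finset.Icc 1 m, (moebius d : ℝ)/(d:ℝ)^2) - 6/Real.pi^2) * (h:ℝ)^(2*n)| :=
          abs_add_le _ _
      _ ≤ E*(1+1/Real.log 2) * ((h:ℝ)^(2*n-1) * Real.log h)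
          + (3*(n:ℝ)/Real.log 2) * ((h:ℝ)^(2*n-1) * Real.log h) := add_le_add bound1 bound2
      _ ≤ (E*(1+1/Real.log 2) + 3*(n:ℝ)/Real.log 2 + 1) * (h:ℝ)^(2*n-1) * Real.log h := by
          nlinarith [mul_nonneg hpow0 hlh0.le]
end
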